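/- arXiv:1605.02788 — 5 statements merged into one kernel-verified Lean document; each statement's English description precedes it below -/
import Mathlib

section
/- Let d ≥ 1, p ∈ [1,∞], Ω ⊆ ℝ^d be open, V ⊆ Ω open, and let v : Ω → ℝ be twice continuously differentiable with |∇v| ∈ L^p(Ω) and |∇²v| ∈ L^p(Ω), where ∇²v is the second derivative (Hessian) and |∇²v| its operator/Frobenius norm. Let φ : Ω → ℝ be bounded and Lipschitz with Lipschitz constant L. Then for every h ∈ ℝ^d with 0 < |h| < dist(V, ℝ^d \ Ω), one has ‖∇[φ · (v_h − v)]‖_{L^p(V)} ≤ (sup_{x∈V} |φ(x)| + L) · |h| · ( ‖ |∇v| ‖_{L^p(Ω)} + ‖ |∇²v| ‖_{L^p(Ω)} ). -/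
open MeasureTheory
open scoped ENNReal

/-- Distance between two sets, valued in `ℝ≥0∞` (so that it is `∞` when the
second set is empty). -/
noncomputable def setEDist {d : ℕ} (V W : Set (EuclideanSpace ℝ (Fin d))) : ℝ≥0∞ :=
  ⨅ (x ∈ V) (y ∈ W), edist x y

lemma jensen_prob {α : Type*} [MeasurableSpace α] (μ : Measure α) [IsProbabilityMeasure μ]
    {g : α → ℝ≥0∞} (hg : AEMeasurable g μ) {r : ℝ} (hr : 1 ≤ r) :
    (∫⁻ a, g a ∂μ) ^ r ≤ ∫⁻ a, g a ^ r ∂μ := by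
  rcases eq_or_lt_of_le hr with h1 | h1
  · simp [← h1]
  · have hr0 : (0:ℝ) < r := lt_trans one_pos h1
    have hpq : r.HolderConjugate r.conjExponent := Real.HolderConjugate.conjExponent h1
    have hH := ENNReal.lintegral_mul_le_Lp_mul_Lq μ hpq hg aemeasurable_const (g := fun _ => 1)
    have h2 : ∫⁻ a, g a ∂μ ≤ (∫⁻ a, g a ^ r ∂μ) ^ (1 / r) := by
      simpa [Real.conjExponent] using hH
    calc (∫⁻ a, g a ∂μ) ^ r ≤ ((∫⁻ a, g a ^ r ∂μ) ^ (1 / r)) ^ r :=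
          ENNReal.rpow_le_rpow h2 hr0.le
      _ = ∫⁻ a, g a ^ r ∂μ := by
          rw [← ENNReal.rpow_mul, one_div, inv_mul_cancel₀ hr0.ne', ENNReal.rpow_one]

variable {d : ℕ}

local notation "E" => EuclideanSpace ℝ (Fin d)

lemma lintegral_shift_le (Ω V : Set E) (hΩm : MeasurableSet Ω) (hVm : MeasurableSet V)
    (F : E → ℝ≥0∞) (hF : Measurable F) (c : E) (hc : ∀ x ∈ V, x + c ∈ Ω) :
    ∫⁻ x in V, F (x + c) ∂volume ≤ ∫⁻ x in Ω, F x ∂volume := by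
  rw [← lintegral_indicator hVm, ← lintegral_indicator hΩm]
  calc ∫⁻ x, V.indicator (fun x => F (x + c)) x ∂volume
      ≤ ∫⁻ x, Ω.indicator F (x + c) ∂volume := by
        refine lintegral_mono fun x => ?_
        by_cases hx : x ∈ V
        · rw [Set.indicator_of_mem hx, Set.indicator_of_mem (hc x hx)]
        · rw [Set.indicator_of_notMem hx]; exact zero_le
    _ = ∫⁻ x, Ω.indicator F x ∂volume :=
        (measurePreserving_add_right volume c).lintegral_comp (hF.indicator hΩm)

lemma eLpNorm_translate_sub_le
    {F : Type*} [NormedAddCommGroup F] [NormedSpace ℝ F] [CompleteSpace F]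
    (p : ℝ≥0∞) (hp : 1 ≤ p) (Ω V : Set E) (hΩ : IsOpen Ω) (hV : IsOpen V)
    (u : E → F) (hu : ContDiffOn ℝ 1 u Ω) (h : E)
    (hseg : ∀ x ∈ V, ∀ t ∈ Set.Icc (0:ℝ) 1, x + t • h ∈ Ω) :
    eLpNorm (fun x => ‖u (x + h) - u x‖) p (volume.restrict V) ≤
      ENNReal.ofReal ‖h‖ * eLpNorm (fun x => ‖fderiv ℝ u x‖) p (volume.restrict Ω) := by
  rcases eq_or_ne h 0 with rfl | hh0
  · have : (fun x : E => ‖u (x + 0) - u x‖) = fun _ => (0:ℝ) := by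
      funext x; simp
    rw [this]
    simp
  have hΩm := hΩ.measurableSet
  have hVm := hV.measurableSet
  set G : E → ℝ := fun y => ‖fderiv ℝ u y‖ with hGdef
  have hGmeas : Measurable G := (measurable_fderiv ℝ u).norm
  have hGcont : ContinuousOn G Ω := (hu.continuousOn_fderiv_of_isOpen hΩ le_rfl).norm
  have hG0 : ∀ y, 0 ≤ G y := fun y => norm_nonneg _
  -- continuity along segments and integrability
  have hGpath : ∀ x ∈ V, ContinuousOn (fun t : ℝ => G (x + t • h)) (Set.Icc 0 1) := by
    intro x hx
    exact hGcont.comp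
      ((continuous_const.add (continuous_id.smul continuous_const)).continuousOn) (hseg x hx)
  have hGint : ∀ x ∈ V, IntervalIntegrable (fun t : ℝ => G (x + t • h)) volume 0 1 := by
    intro x hx
    apply ContinuousOn.intervalIntegrable
    rw [Set.uIcc_of_le zero_le_one]
    exact hGpath x hx
  -- pointwise segment bound
  have hkey : ∀ x ∈ V, ‖u (x + h) - u x‖ ≤ ‖h‖ * ∫ t in (0:ℝ)..1, G (x + t • h) := by
    intro x hx
    have hmem : ∀ t ∈ Set.Icc (0:ℝ) 1, x + t • h ∈ Ω := hseg x hx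
    have hpath : ∀ t : ℝ, HasDerivAt (fun s : ℝ => x + s • h) h t := by
      intro t
      simpa using ((hasDerivAt_id t).smul_const h).const_add x
    have hder : ∀ t ∈ Set.uIcc (0:ℝ) 1,
        HasDerivAt (fun s => u (x + s • h)) (fderiv ℝ u (x + t • h) h) t := by
      intro t ht
      rw [Set.uIcc_of_le zero_le_one] at ht
      have hdiff : DifferentiableAt ℝ u (x + t • h) :=
        (hu.differentiableOn one_ne_zero).differentiableAt (hΩ.mem_nhds (hmem t ht))
      exact hdiff.hasFDerivAt.comp_hasDerivAt t (hpath t)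
    have hcpath : ContinuousOn (fun t : ℝ => x + t • h) (Set.Icc 0 1) :=
      (continuous_const.add (continuous_id.smul continuous_const)).continuousOn
    have hDcont : ContinuousOn (fun t : ℝ => fderiv ℝ u (x + t • h)) (Set.Icc 0 1) :=
      (hu.continuousOn_fderiv_of_isOpen hΩ le_rfl).comp hcpath hmem
    have hψcont : ContinuousOn (fun t : ℝ => fderiv ℝ u (x + t • h) h) (Set.Icc 0 1) :=
      hDcont.clm_apply continuousOn_const
    have hint : IntervalIntegrable (fun t : ℝ => fderiv ℝ u (x + t • h) h) volume 0 1 := by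
      apply ContinuousOn.intervalIntegrable
      rw [Set.uIcc_of_le zero_le_one]
      exact hψcont
    have heq : u (x + h) - u x = ∫ t in (0:ℝ)..1, fderiv ℝ u (x + t • h) h := by
      rw [intervalIntegral.integral_eq_sub_of_hasDerivAt hder hint]
      simp
    calc ‖u (x + h) - u x‖ = ‖∫ t in (0:ℝ)..1, fderiv ℝ u (x + t • h) h‖ := by rw [heq]
      _ ≤ ∫ t in (0:ℝ)..1, ‖fderiv ℝ u (x + t • h) h‖ :=
          intervalIntegral.norm_integral_le_integral_norm zero_le_one
      _ ≤ ∫ t in (0:ℝ)..1, G (x + t • h) * ‖h‖ := by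
          refine intervalIntegral.integral_mono_on zero_le_one hint.norm
            ((hGint x hx).mul_const _) fun t ht => ?_
          exact (fderiv ℝ u (x + t • h)).le_opNorm h
      _ = ‖h‖ * ∫ t in (0:ℝ)..1, G (x + t • h) := by
          rw [intervalIntegral.integral_mul_const, mul_comm]
  rcases eq_or_ne p ∞ with rfl | hptop
  · -- p = ∞
    set M := eLpNorm (fun x => ‖fderiv ℝ u x‖) ∞ (volume.restrict Ω) with hMdef
    rcases eq_or_ne M ∞ with hMtop | hMtop
    · rw [hMtop, ENNReal.mul_top]
      · exact le_top
      · simpa using hh0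
    have hae : ∀ᵐ y ∂(volume.restrict Ω), (‖G y‖₊ : ℝ≥0∞) ≤ M := by
      rw [hMdef, eLpNorm_exponent_top]
      exact ae_le_eLpNormEssSup
    have hbound : ∀ y ∈ Ω, G y ≤ M.toReal := by
      by_contra hcon
      push_neg at hcon
      obtain ⟨y0, hy0Ω, hy0⟩ := hcon
      set U := Ω ∩ G ⁻¹' Set.Ioi M.toReal with hU
      have hUopen : IsOpen U := hGcont.isOpen_inter_preimage hΩ isOpen_Ioi
      have hUmem : y0 ∈ U := ⟨hy0Ω, hy0⟩
      have hUpos : 0 < volume U := hUopen.measure_pos volume ⟨y0, hUmem⟩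
      have hae' : ∀ᵐ y ∂volume, y ∈ Ω → (‖G y‖₊ : ℝ≥0∞) ≤ M := (ae_restrict_iff' hΩm).mp hae
      have hnull : volume {y : E | ¬ (y ∈ Ω → (‖G y‖₊ : ℝ≥0∞) ≤ M)} = 0 := hae'
      have hsub : U ⊆ {y : E | ¬ (y ∈ Ω → (‖G y‖₊ : ℝ≥0∞) ≤ M)} := by
        rintro y ⟨hyΩ, hyG⟩
        intro himp
        have h1 := himp hyΩ
        rw [← enorm_eq_nnnorm, Real.enorm_eq_ofReal (hG0 y), ENNReal.ofReal_le_iff_le_toReal hMtop] at h1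
        exact absurd h1 (not_le.mpr hyG)
      exact hUpos.ne' (measure_mono_null hsub hnull)
    have hptw : ∀ x ∈ V, ‖u (x + h) - u x‖ ≤ ‖h‖ * M.toReal := by
      intro x hx
      refine (hkey x hx).trans ?_
      have hmono : ∫ t in (0:ℝ)..1, G (x + t • h) ≤ ∫ t in (0:ℝ)..1, M.toReal := by
        refine intervalIntegral.integral_mono_on zero_le_one (hGint x hx)
          intervalIntegrable_const fun t ht => hbound _ (hseg x hx t ht)
      have : ∫ t in (0:ℝ)..1, (M.toReal : ℝ) = M.toReal := by simp
      exact mul_le_mul_of_nonneg_left (hmono.trans this.le) (norm_nonneg h)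
    calc eLpNorm (fun x => ‖u (x + h) - u x‖) ∞ (volume.restrict V)
        ≤ ENNReal.ofReal (‖h‖ * M.toReal) := by
          rw [eLpNorm_exponent_top]
          refine eLpNormEssSup_le_of_ae_bound ?_
          refine ae_restrict_of_forall_mem hVm fun x hx => ?_
          simpa using hptw x hx
      _ ≤ ENNReal.ofReal ‖h‖ * M := by
          rw [ENNReal.ofReal_mul (norm_nonneg h)]
          exact mul_le_mul_right ENNReal.ofReal_toReal_le _
  · -- 1 ≤ p < ∞
    have hp0 : p ≠ 0 := (lt_of_lt_of_le zero_lt_one hp).ne'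
    set r := p.toReal with hrdef
    have hr1 : (1:ℝ) ≤ r := by
      rw [hrdef, ← ENNReal.toReal_one]
      exact ENNReal.toReal_mono hptop hp
    have hr0 : (0:ℝ) < r := lt_of_lt_of_le one_pos hr1
    haveI : IsProbabilityMeasure (volume.restrict (Set.Ioc (0:ℝ) 1)) := by
      constructor
      simp [Real.volume_Ioc]
    have hprod : Measurable (Function.uncurry fun (x : E) (t : ℝ) =>
        ENNReal.ofReal (G (x + t • h)) ^ r) := by
      have hmap : Continuous (fun q : E × ℝ => q.1 + q.2 • h) :=
        continuous_fst.add (continuous_snd.smul continuous_const)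
      exact ((hGmeas.comp hmap.measurable).ennreal_ofReal).pow_const r
    have hcoe : ∀ y : E, (‖G y‖₊ : ℝ≥0∞) = ENNReal.ofReal (G y) := fun y =>
      Real.enorm_eq_ofReal (hG0 y)
    have step1 : ∀ x ∈ V, (‖(‖u (x + h) - u x‖ : ℝ)‖₊ : ℝ≥0∞) ^ r ≤
        ENNReal.ofReal ‖h‖ ^ r *
          ∫⁻ t in Set.Ioc (0:ℝ) 1, ENNReal.ofReal (G (x + t • h)) ^ r ∂volume := by
      intro x hx
      have hle : ENNReal.ofReal ‖u (x + h) - u x‖ ≤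
          ENNReal.ofReal ‖h‖ *
            ∫⁻ t in Set.Ioc (0:ℝ) 1, ENNReal.ofReal (G (x + t • h)) ∂volume := by
        calc ENNReal.ofReal ‖u (x + h) - u x‖
            ≤ ENNReal.ofReal (‖h‖ * ∫ t in (0:ℝ)..1, G (x + t • h)) :=
              ENNReal.ofReal_le_ofReal (hkey x hx)
          _ = ENNReal.ofReal ‖h‖ * ENNReal.ofReal (∫ t in (0:ℝ)..1, G (x + t • h)) :=
              ENNReal.ofReal_mul (norm_nonneg h)
          _ = ENNReal.ofReal ‖h‖ *
              ∫⁻ t in Set.Ioc (0:ℝ) 1, ENNReal.ofReal (G (x + t • h)) ∂volume := by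
              rw [intervalIntegral.integral_of_le zero_le_one,
                MeasureTheory.ofReal_integral_eq_lintegral_ofReal (hGint x hx).1
                  (Filter.Eventually.of_forall fun t => hG0 _)]
      have hAmeas : AEMeasurable (fun t : ℝ => ENNReal.ofReal (G (x + t • h)))
          (volume.restrict (Set.Ioc (0:ℝ) 1)) := by
        have : Continuous fun t : ℝ => x + t • h :=
          continuous_const.add (continuous_id.smul continuous_const)
        exact ((hGmeas.comp this.measurable).ennreal_ofReal).aemeasurable
      calc (‖(‖u (x + h) - u x‖ : ℝ)‖₊ : ℝ≥0∞) ^ r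
          = ENNReal.ofReal ‖u (x + h) - u x‖ ^ r := by
            rw [← enorm_eq_nnnorm, Real.enorm_eq_ofReal (norm_nonneg _)]
        _ ≤ (ENNReal.ofReal ‖h‖ *
              ∫⁻ t in Set.Ioc (0:ℝ) 1, ENNReal.ofReal (G (x + t • h)) ∂volume) ^ r :=
            ENNReal.rpow_le_rpow hle hr0.le
        _ = ENNReal.ofReal ‖h‖ ^ r *
              (∫⁻ t in Set.Ioc (0:ℝ) 1, ENNReal.ofReal (G (x + t • h)) ∂volume) ^ r :=
            ENNReal.mul_rpow_of_nonneg _ _ hr0.le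
        _ ≤ ENNReal.ofReal ‖h‖ ^ r *
              ∫⁻ t in Set.Ioc (0:ℝ) 1, ENNReal.ofReal (G (x + t • h)) ^ r ∂volume :=
            mul_le_mul_right (jensen_prob _ hAmeas hr1) _
    have main : ∫⁻ x in V, (‖(‖u (x + h) - u x‖ : ℝ)‖₊ : ℝ≥0∞) ^ r ∂volume
        ≤ ENNReal.ofReal ‖h‖ ^ r * ∫⁻ y in Ω, ENNReal.ofReal (G y) ^ r ∂volume := by
      calc ∫⁻ x in V, (‖(‖u (x + h) - u x‖ : ℝ)‖₊ : ℝ≥0∞) ^ r ∂volume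
          ≤ ∫⁻ x in V, ENNReal.ofReal ‖h‖ ^ r *
              ∫⁻ t in Set.Ioc (0:ℝ) 1, ENNReal.ofReal (G (x + t • h)) ^ r ∂volume ∂volume :=
            lintegral_mono_ae (ae_restrict_of_forall_mem hVm step1)
        _ = ENNReal.ofReal ‖h‖ ^ r * ∫⁻ x in V,
              ∫⁻ t in Set.Ioc (0:ℝ) 1, ENNReal.ofReal (G (x + t • h)) ^ r ∂volume ∂volume :=
            lintegral_const_mul' _ _ (by
              exact ENNReal.rpow_ne_top_of_nonneg hr0.le ENNReal.ofReal_ne_top)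
        _ = ENNReal.ofReal ‖h‖ ^ r * ∫⁻ t in Set.Ioc (0:ℝ) 1,
              ∫⁻ x in V, ENNReal.ofReal (G (x + t • h)) ^ r ∂volume ∂volume := by
            congr 1
            exact lintegral_lintegral_swap hprod.aemeasurable
        _ ≤ ENNReal.ofReal ‖h‖ ^ r * ∫⁻ _t in Set.Ioc (0:ℝ) 1,
              (∫⁻ y in Ω, ENNReal.ofReal (G y) ^ r ∂volume) ∂volume := by
            refine mul_le_mul_right (lintegral_mono_ae
              (ae_restrict_of_forall_mem measurableSet_Ioc fun t ht => ?_)) _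
            exact lintegral_shift_le Ω V hΩm hVm _
              ((hGmeas.ennreal_ofReal).pow_const r) (t • h)
              (fun x hx => hseg x hx t ⟨ht.1.le, ht.2⟩)
        _ = ENNReal.ofReal ‖h‖ ^ r * ∫⁻ y in Ω, ENNReal.ofReal (G y) ^ r ∂volume := by
            rw [lintegral_const, measure_univ, mul_one]
    rw [eLpNorm_eq_lintegral_rpow_enorm_toReal hp0 hptop, eLpNorm_eq_lintegral_rpow_enorm_toReal hp0 hptop]
    have hgoal2 : ∫⁻ y in Ω, (‖G y‖₊ : ℝ≥0∞) ^ r ∂volume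
        = ∫⁻ y in Ω, ENNReal.ofReal (G y) ^ r ∂volume := by
      congr 1
      funext y
      rw [← enorm_eq_nnnorm, Real.enorm_eq_ofReal (hG0 y)]
    calc (∫⁻ x in V, (‖(‖u (x + h) - u x‖ : ℝ)‖₊ : ℝ≥0∞) ^ r ∂volume) ^ (1 / r)
        ≤ (ENNReal.ofReal ‖h‖ ^ r * ∫⁻ y in Ω, ENNReal.ofReal (G y) ^ r ∂volume) ^ (1 / r) :=
          ENNReal.rpow_le_rpow main (by positivity)
      _ = ENNReal.ofReal ‖h‖ *
            (∫⁻ y in Ω, ENNReal.ofReal (G y) ^ r ∂volume) ^ (1 / r) := by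
          rw [ENNReal.mul_rpow_of_nonneg _ _ (by positivity), ← ENNReal.rpow_mul,
            mul_one_div, div_self hr0.ne', ENNReal.rpow_one]
      _ = ENNReal.ofReal ‖h‖ *
            (∫⁻ y in Ω, (‖G y‖₊ : ℝ≥0∞) ^ r ∂volume) ^ (1 / r) := by rw [hgoal2]

/-- If `v` is `C²` on an open set `Ω ⊆ ℝ^d` with `|∇v|, |∇²v| ∈ L^p(Ω)`,
`V ⊆ Ω` is open, `φ` is bounded and Lipschitz with constant `L`, and
`0 < |h| < dist(V, ℝ^d \ Ω)`, then
`‖∇[φ (v_h − v)]‖_{L^p(V)} ≤ (sup_V |φ| + L) |h| (‖|∇v|‖_{L^p(Ω)} + ‖|∇²v|‖_{L^p(Ω)})`. -/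
theorem grad_of_cutoff_translate_diff_le
    (d : ℕ) (hd : 1 ≤ d) (p : ℝ≥0∞) (hp : 1 ≤ p)
    (Ω V : Set (EuclideanSpace ℝ (Fin d))) (hΩ : IsOpen Ω) (hV : IsOpen V) (hVΩ : V ⊆ Ω)
    (v : EuclideanSpace ℝ (Fin d) → ℝ)
    (hv : ContDiffOn ℝ 2 v Ω)
    (hgp : MemLp (fun x => ‖fderiv ℝ v x‖) p (volume.restrict Ω))
    (hg2p : MemLp (fun x => ‖iteratedFDeriv ℝ 2 v x‖) p (volume.restrict Ω))
    (φ : EuclideanSpace ℝ (Fin d) → ℝ) (L : ℝ) (hL : 0 ≤ L)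
    (hφL : LipschitzWith (Real.toNNReal L) φ)
    (hφb : ∃ C : ℝ, ∀ x, |φ x| ≤ C)
    (h : EuclideanSpace ℝ (Fin d)) (hh0 : h ≠ 0)
    (hhd : ENNReal.ofReal ‖h‖ < setEDist V Ωᶜ) :
    eLpNorm (fun x => ‖fderiv ℝ (fun y => φ y * (v (y + h) - v y)) x‖) p
        (volume.restrict V) ≤
      ENNReal.ofReal (((⨆ x ∈ V, |φ x|) + L) * ‖h‖) *
        (eLpNorm (fun x => ‖fderiv ℝ v x‖) p (volume.restrict Ω) +
          eLpNorm (fun x => ‖iteratedFDeriv ℝ 2 v x‖) p (volume.restrict Ω)) := by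
  obtain ⟨C, hC⟩ := hφb
  have hΩm := hΩ.measurableSet
  have hVm := hV.measurableSet
  -- every point of V moved along the segment stays in Ω
  have hseg : ∀ x ∈ V, ∀ t ∈ Set.Icc (0:ℝ) 1, x + t • h ∈ Ω := by
    intro x hx t ht
    by_contra hmemc
    have h1 : setEDist V Ωᶜ ≤ edist x (x + t • h) := by
      unfold setEDist
      exact iInf₂_le_of_le x hx (iInf₂_le (x + t • h) hmemc)
    have h2 : edist x (x + t • h) ≤ ENNReal.ofReal ‖h‖ := by
      rw [edist_dist, dist_self_add_right]
      refine ENNReal.ofReal_le_ofReal ?_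
      rw [norm_smul]
      calc ‖t‖ * ‖h‖ ≤ 1 * ‖h‖ := by
            refine mul_le_mul_of_nonneg_right ?_ (norm_nonneg h)
            rw [Real.norm_eq_abs, abs_of_nonneg ht.1]
            exact ht.2
        _ = ‖h‖ := one_mul _
    exact absurd (h1.trans h2) (not_le.mpr hhd)
  have hxh : ∀ x ∈ V, x + h ∈ Ω := fun x hx => by
    simpa using hseg x hx 1 ⟨zero_le_one, le_rfl⟩
  -- the sup of |φ| on V
  set M := ⨆ x ∈ V, |φ x| with hMdef
  have hbdd : BddAbove (Set.range fun x => ⨆ _ : x ∈ V, |φ x|) := by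
    refine ⟨max C 0, ?_⟩
    rintro y ⟨x, rfl⟩
    exact Real.iSup_le (fun _ => (hC x).trans (le_max_left _ _)) (le_max_right _ _)
  have hMle : ∀ x ∈ V, |φ x| ≤ M := by
    intro x hx
    have hxx : |φ x| = ⨆ _ : x ∈ V, |φ x| := (ciSup_pos (f := fun _ : x ∈ V => |φ x|) hx).symm
    rw [hMdef, hxx]
    exact le_ciSup hbdd x
  have hM0 : 0 ≤ M := Real.iSup_nonneg fun x => Real.iSup_nonneg fun _ => abs_nonneg _
  -- regularity
  have hv1 : ContDiffOn ℝ 1 v Ω := hv.of_le (by norm_num)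
  have hg1 : ContDiffOn ℝ 1 (fderiv ℝ v) Ω := hv.fderiv_of_isOpen hΩ (by norm_num)
  -- translation estimates
  have hb1 := eLpNorm_translate_sub_le p hp Ω V hΩ hV v hv1 h hseg
  have hb2 := eLpNorm_translate_sub_le p hp Ω V hΩ hV (fderiv ℝ v) hg1 h hseg
  have hfg : (fun x => ‖fderiv ℝ (fderiv ℝ v) x‖) =
      fun x => ‖iteratedFDeriv ℝ 2 v x‖ := by
    funext x
    calc ‖fderiv ℝ (fderiv ℝ v) x‖
        = ‖iteratedFDeriv ℝ 0 (fderiv ℝ (fderiv ℝ v)) x‖ := by rw [norm_iteratedFDeriv_zero]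
      _ = ‖iteratedFDeriv ℝ 1 (fderiv ℝ v) x‖ := norm_iteratedFDeriv_fderiv (n := 0)
      _ = ‖iteratedFDeriv ℝ 2 v x‖ := norm_iteratedFDeriv_fderiv (n := 1)
  rw [hfg] at hb2
  -- pointwise estimate on the gradient of the product
  set w : EuclideanSpace ℝ (Fin d) → ℝ := fun y => v (y + h) - v y with hwdef
  have hpt : ∀ x ∈ V, ‖fderiv ℝ (fun y => φ y * w y) x‖ ≤
      M * ‖fderiv ℝ v (x + h) - fderiv ℝ v x‖ + L * ‖w x‖ := by
    intro x hx
    have hxΩ : x ∈ Ω := hVΩ hx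
    have hvx : DifferentiableAt ℝ v x :=
      (hv1.differentiableOn one_ne_zero).differentiableAt (hΩ.mem_nhds hxΩ)
    have hvxh : DifferentiableAt ℝ v (x + h) :=
      (hv1.differentiableOn one_ne_zero).differentiableAt (hΩ.mem_nhds (hxh x hx))
    have htr : HasFDerivAt (fun y => v (y + h)) (fderiv ℝ v (x + h)) x := by
      have h0 := hvxh.hasFDerivAt.comp x ((hasFDerivAt_id x).add_const h)
      exact (hasFDerivAt_comp_add_right h).mpr hvxh.hasFDerivAt
    have hwd : DifferentiableAt ℝ w x := htr.differentiableAt.sub hvx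
    have hDw : fderiv ℝ w x = fderiv ℝ v (x + h) - fderiv ℝ v x := by
      rw [hwdef]
      rw [fderiv_fun_sub htr.differentiableAt hvx, htr.fderiv]
    by_cases hfd : DifferentiableAt ℝ (fun y => φ y * w y) x
    · have hsplit : (fun y => φ y * w y) = fun y => φ x * w y + (φ y - φ x) * w y := by
        funext y; ring
      have hconst : DifferentiableAt ℝ (fun y => φ x * w y) x := hwd.const_mul _
      have hgd : DifferentiableAt ℝ (fun y => (φ y - φ x) * w y) x := by
        have he : (fun y => (φ y - φ x) * w y) =
            fun y => φ y * w y - φ x * w y := by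
          funext y; ring
        rw [he]
        exact hfd.sub hconst
      have hgnorm : ‖fderiv ℝ (fun y => (φ y - φ x) * w y) x‖ ≤ L * |w x| := by
        refine le_of_forall_pos_le_add fun ε hε => ?_
        set δ := ε / (L + 1) with hδdef
        have hδ0 : 0 < δ := div_pos hε (by linarith)
        have hev : ∀ᶠ y in nhds x, |w y| < |w x| + δ := by
          have hc : ContinuousAt (fun y => |w y|) x := hwd.continuousAt.abs
          exact hc.eventually_lt_const (lt_add_of_pos_right _ hδ0)
        have hC0 : 0 ≤ L * (|w x| + δ) := by positivity
        have hlip : ∀ᶠ y in nhds x, ‖(φ y - φ x) * w y - (φ x - φ x) * w x‖ ≤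
            (L * (|w x| + δ)) * ‖y - x‖ := by
          filter_upwards [hev] with y hy
          have h1' : |φ y - φ x| ≤ L * ‖y - x‖ := by
            have h2' := hφL.dist_le_mul y x
            rwa [Real.dist_eq, Real.coe_toNNReal L hL, dist_eq_norm] at h2'
          have h3' : ‖(φ y - φ x) * w y - (φ x - φ x) * w x‖ = |φ y - φ x| * |w y| := by
            simp [abs_mul]
          rw [h3']
          calc |φ y - φ x| * |w y| ≤ (L * ‖y - x‖) * (|w x| + δ) :=
                mul_le_mul h1' hy.le (abs_nonneg _) (by positivity)
            _ = (L * (|w x| + δ)) * ‖y - x‖ := by ring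
        have hbd := hgd.hasFDerivAt.le_of_lip' hC0 hlip
        have hLδ : L * δ ≤ ε := by
          have hq : L / (L + 1) ≤ 1 := (div_le_one (by linarith)).mpr (by linarith)
          have : L * δ = ε * (L / (L + 1)) := by rw [hδdef]; ring
          rw [this]
          calc ε * (L / (L + 1)) ≤ ε * 1 := by
                exact mul_le_mul_of_nonneg_left hq hε.le
            _ = ε := mul_one _
        calc ‖fderiv ℝ (fun y => (φ y - φ x) * w y) x‖ ≤ L * (|w x| + δ) := hbd
          _ = L * |w x| + L * δ := by ring
          _ ≤ L * |w x| + ε := by linarith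
      have hfsum : fderiv ℝ (fun y => φ y * w y) x =
          φ x • fderiv ℝ w x + fderiv ℝ (fun y => (φ y - φ x) * w y) x := by
        conv_lhs => rw [hsplit]
        rw [fderiv_fun_add hconst hgd, fderiv_const_mul hwd]
      rw [hfsum, hDw]
      calc ‖φ x • (fderiv ℝ v (x + h) - fderiv ℝ v x) +
              fderiv ℝ (fun y => (φ y - φ x) * w y) x‖
          ≤ ‖φ x • (fderiv ℝ v (x + h) - fderiv ℝ v x)‖ +
              ‖fderiv ℝ (fun y => (φ y - φ x) * w y) x‖ := norm_add_le _ _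
        _ ≤ |φ x| * ‖fderiv ℝ v (x + h) - fderiv ℝ v x‖ + L * |w x| := by
            rw [norm_smul, Real.norm_eq_abs]
            exact add_le_add le_rfl hgnorm
        _ ≤ M * ‖fderiv ℝ v (x + h) - fderiv ℝ v x‖ + L * ‖w x‖ := by
            rw [Real.norm_eq_abs]
            exact add_le_add
              (mul_le_mul_of_nonneg_right (hMle x hx) (norm_nonneg _)) le_rfl
    · rw [fderiv_zero_of_not_differentiableAt hfd]
      simp only [norm_zero]
      positivity
  -- measurability of the two majorant pieces on V
  have a2 : AEStronglyMeasurable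
      (fun x => M * ‖fderiv ℝ v (x + h) - fderiv ℝ v x‖) (volume.restrict V) := by
    have hm : Measurable fun x : EuclideanSpace ℝ (Fin d) =>
        ‖fderiv ℝ v (x + h) - fderiv ℝ v x‖ :=
      (((measurable_fderiv ℝ v).comp (measurable_add_const h)).sub
        (measurable_fderiv ℝ v)).norm
    exact (hm.const_mul M).aestronglyMeasurable
  have a1 : AEStronglyMeasurable (fun x => L * ‖w x‖) (volume.restrict V) := by
    have hvc : ContinuousOn v Ω := hv.continuousOn
    have hws : ContinuousOn w V := by
      rw [hwdef]
      refine ContinuousOn.sub ?_ (hvc.mono hVΩ)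
      exact hvc.comp (continuous_add_right h).continuousOn fun x hx => hxh x hx
    exact (continuousOn_const.mul hws.norm).aestronglyMeasurable hVm
  -- main chain
  set E1 := eLpNorm (fun x => ‖fderiv ℝ v x‖) p (volume.restrict Ω) with hE1
  set E2 := eLpNorm (fun x => ‖iteratedFDeriv ℝ 2 v x‖) p (volume.restrict Ω) with hE2
  calc eLpNorm (fun x => ‖fderiv ℝ (fun y => φ y * w y) x‖) p (volume.restrict V)
      ≤ eLpNorm ((fun x => M * ‖fderiv ℝ v (x + h) - fderiv ℝ v x‖) +
          fun x => L * ‖w x‖) p (volume.restrict V) := by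
        refine eLpNorm_mono_ae ?_
        refine ae_restrict_of_forall_mem hVm fun x hx => ?_
        simp only [Pi.add_apply, norm_norm]
        rw [Real.norm_of_nonneg (by positivity)]
        exact hpt x hx
    _ ≤ eLpNorm (fun x => M * ‖fderiv ℝ v (x + h) - fderiv ℝ v x‖) p (volume.restrict V) +
          eLpNorm (fun x => L * ‖w x‖) p (volume.restrict V) :=
        eLpNorm_add_le a2 a1 hp
    _ = ENNReal.ofReal M *
          eLpNorm (fun x => ‖fderiv ℝ v (x + h) - fderiv ℝ v x‖) p (volume.restrict V) +
        ENNReal.ofReal L * eLpNorm (fun x => ‖w x‖) p (volume.restrict V) := by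
        have eM : (fun x => M * ‖fderiv ℝ v (x + h) - fderiv ℝ v x‖) =
            M • fun x : EuclideanSpace ℝ (Fin d) => ‖fderiv ℝ v (x + h) - fderiv ℝ v x‖ := rfl
        have eL : (fun x => L * ‖w x‖) =
            L • fun x : EuclideanSpace ℝ (Fin d) => ‖w x‖ := rfl
        rw [eM, eL, eLpNorm_const_smul, eLpNorm_const_smul,
          Real.enorm_eq_ofReal hM0, Real.enorm_eq_ofReal hL]
    _ ≤ ENNReal.ofReal M * (ENNReal.ofReal ‖h‖ * E2) +
        ENNReal.ofReal L * (ENNReal.ofReal ‖h‖ * E1) := by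
        exact add_le_add (mul_le_mul_right hb2 _) (mul_le_mul_right hb1 _)
    _ ≤ ENNReal.ofReal ((M + L) * ‖h‖) * (E1 + E2) := by
        rw [ENNReal.ofReal_mul (add_nonneg hM0 hL), ENNReal.ofReal_add hM0 hL]
        have expand : (ENNReal.ofReal M + ENNReal.ofReal L) * ENNReal.ofReal ‖h‖ * (E1 + E2)
            = (ENNReal.ofReal M * (ENNReal.ofReal ‖h‖ * E2) +
                ENNReal.ofReal L * (ENNReal.ofReal ‖h‖ * E1)) +
              (ENNReal.ofReal M * (ENNReal.ofReal ‖h‖ * E1) +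
                ENNReal.ofReal L * (ENNReal.ofReal ‖h‖ * E2)) := by ring
        rw [expand]
        exact le_self_add
end

section
/- Let d ≥ 1 and 0 < γ₁ < 1. Let u : ℝ^d → ℝ be continuously differentiable with u ∈ L²(ℝ^d) and |∇u| ∈ L²(ℝ^d). Then for every h ∈ ℝ^d, h ≠ 0, the function u − u_h satisfies [u − u_h]_{γ₁,2} ≤ 2 · |h|^{1 − γ₁} · ‖ |∇u| ‖_{L²(ℝ^d)}. -/
open MeasureTheory
open scoped ENNReal

section Aux

variable {d : ℕ}

private lemma nik_rineq {a b γ : ℝ} (ha : 0 < a) (hab : a ≤ b)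
    (hγ1 : γ < 1) : a ≤ a ^ γ * b ^ (1 - γ) := by
  have h : a = a ^ γ * a ^ (1 - γ) := by
    rw [← Real.rpow_add ha]; norm_num
  nth_rewrite 1 [h]
  exact mul_le_mul_of_nonneg_left
    (Real.rpow_le_rpow ha.le hab (show (0:ℝ) ≤ 1 - γ by linarith))
    (Real.rpow_nonneg ha.le _)

private lemma nik_rineq' {a b γ : ℝ} (hb : 0 < b) (hab : b ≤ a)
    (hγ0 : 0 < γ) : b ≤ a ^ γ * b ^ (1 - γ) := by
  have h : b = b ^ γ * b ^ (1 - γ) := by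
    rw [← Real.rpow_add hb]; norm_num
  nth_rewrite 1 [h]
  exact mul_le_mul_of_nonneg_right (Real.rpow_le_rpow hb.le hab hγ0.le)
    (Real.rpow_nonneg hb.le _)

private lemma nik_ptwise {u : EuclideanSpace ℝ (Fin d) → ℝ} (hu : ContDiff ℝ 1 u)
    (x k : EuclideanSpace ℝ (Fin d)) :
    (‖u (x + k) - u x‖₊ : ℝ≥0∞) ≤
      (‖k‖₊ : ℝ≥0∞) * ∫⁻ t in Set.Ioc (0:ℝ) 1, (‖fderiv ℝ u (x + t • k)‖₊ : ℝ≥0∞) := by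
  have hderiv : ∀ t ∈ Set.uIcc (0:ℝ) 1,
      HasDerivAt (fun s : ℝ => u (x + s • k)) ((fderiv ℝ u (x + t • k)) k) t := by
    intro t _
    have h1 : HasDerivAt (fun s : ℝ => x + s • k) k t := by
      simpa using ((hasDerivAt_id t).smul_const k).const_add x
    have h2 := ((hu.differentiable one_ne_zero) (x + t • k)).hasFDerivAt
    exact h2.comp_hasDerivAt t h1
  have hcont : Continuous fun t : ℝ => (fderiv ℝ u (x + t • k)) k := by
    have : Continuous fun t : ℝ => x + t • k := by continuity
    exact (isBoundedBilinearMap_apply.continuous.comp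
      (((hu.continuous_fderiv one_ne_zero).comp this).prodMk continuous_const))
  have hint : IntervalIntegrable (fun t : ℝ => (fderiv ℝ u (x + t • k)) k) volume 0 1 :=
    hcont.intervalIntegrable 0 1
  have heq : u (x + k) - u x = ∫ t in (0:ℝ)..1, (fderiv ℝ u (x + t • k)) k := by
    have := intervalIntegral.integral_eq_sub_of_hasDerivAt hderiv hint
    rw [this]; simp
  rw [heq, intervalIntegral.integral_of_le zero_le_one]
  calc (‖∫ t in Set.Ioc (0:ℝ) 1, (fderiv ℝ u (x + t • k)) k‖₊ : ℝ≥0∞)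
      ≤ ∫⁻ t in Set.Ioc (0:ℝ) 1, (‖(fderiv ℝ u (x + t • k)) k‖₊ : ℝ≥0∞) :=
        enorm_integral_le_lintegral_enorm _
    _ ≤ ∫⁻ t in Set.Ioc (0:ℝ) 1, (‖fderiv ℝ u (x + t • k)‖₊ : ℝ≥0∞) * ‖k‖₊ := by
        refine lintegral_mono fun t => ?_
        exact ENNReal.coe_le_coe.2 ((fderiv ℝ u (x + t • k)).le_opNNNorm k)
    _ = (‖k‖₊ : ℝ≥0∞) * ∫⁻ t in Set.Ioc (0:ℝ) 1, (‖fderiv ℝ u (x + t • k)‖₊ : ℝ≥0∞) := by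
        rw [lintegral_mul_const, mul_comm]
        exact (((hu.continuous_fderiv one_ne_zero).comp (by continuity)).nnnorm.measurable.coe_nnreal_ennreal)

private lemma nik_jensen2 {α : Type*} [MeasurableSpace α] {ν : Measure α} (hν : ν Set.univ = 1)
    {f : α → ℝ≥0∞} (hf : AEMeasurable f ν) :
    (∫⁻ a, f a ∂ν) ^ (2:ℝ) ≤ ∫⁻ a, f a ^ (2:ℝ) ∂ν := by
  have hpq : (2:ℝ).HolderConjugate 2 := Real.HolderConjugate.two_two
  have h := ENNReal.lintegral_mul_le_Lp_mul_Lq ν hpq hf (aemeasurable_const (b := (1:ℝ≥0∞)))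
  simp only [Pi.mul_apply, mul_one, ENNReal.one_rpow, lintegral_const, hν, one_mul] at h
  have h' := ENNReal.rpow_le_rpow h (by norm_num : (0:ℝ) ≤ 2)
  calc (∫⁻ a, f a ∂ν) ^ (2:ℝ)
      ≤ ((∫⁻ a, f a ^ (2:ℝ) ∂ν) ^ (1/2:ℝ)) ^ (2:ℝ) := h'
    _ = ∫⁻ a, f a ^ (2:ℝ) ∂ν := by
        rw [← ENNReal.rpow_mul]; norm_num

private lemma nik_key {u : EuclideanSpace ℝ (Fin d) → ℝ} (hu : ContDiff ℝ 1 u)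
    (k : EuclideanSpace ℝ (Fin d)) :
    eLpNorm (fun x => u (x + k) - u x) 2 volume ≤
      ENNReal.ofReal ‖k‖ * eLpNorm (fun x => ‖fderiv ℝ u x‖) 2 volume := by
  set G : EuclideanSpace ℝ (Fin d) → ℝ≥0∞ := fun y => (‖fderiv ℝ u y‖₊ : ℝ≥0∞) with hG
  have hGcont : Continuous fun y => ‖fderiv ℝ u y‖₊ := (hu.continuous_fderiv one_ne_zero).nnnorm
  have hGmeas : Measurable G := hGcont.measurable.coe_nnreal_ennreal
  set I : ℝ≥0∞ := ∫⁻ y, G y ^ (2:ℝ) with hI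
  have hIoc : volume (Set.Ioc (0:ℝ) 1) = 1 := by simp
  have main : ∫⁻ x, (‖u (x + k) - u x‖₊ : ℝ≥0∞) ^ (2:ℝ) ≤ (‖k‖₊ : ℝ≥0∞) ^ (2:ℝ) * I := by
    have step1 : ∫⁻ x, (‖u (x + k) - u x‖₊ : ℝ≥0∞) ^ (2:ℝ) ≤
        ∫⁻ x, (‖k‖₊ : ℝ≥0∞) ^ (2:ℝ) * ∫⁻ t in Set.Ioc (0:ℝ) 1, G (x + t • k) ^ (2:ℝ) := by
      refine lintegral_mono fun x => ?_
      calc (‖u (x + k) - u x‖₊ : ℝ≥0∞) ^ (2:ℝ)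
          ≤ ((‖k‖₊ : ℝ≥0∞) * ∫⁻ t in Set.Ioc (0:ℝ) 1, G (x + t • k)) ^ (2:ℝ) :=
            ENNReal.rpow_le_rpow (nik_ptwise hu x k) (by norm_num)
        _ = (‖k‖₊ : ℝ≥0∞) ^ (2:ℝ) * (∫⁻ t in Set.Ioc (0:ℝ) 1, G (x + t • k)) ^ (2:ℝ) :=
            ENNReal.mul_rpow_of_nonneg _ _ (by norm_num)
        _ ≤ (‖k‖₊ : ℝ≥0∞) ^ (2:ℝ) * ∫⁻ t in Set.Ioc (0:ℝ) 1, G (x + t • k) ^ (2:ℝ) := by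
            gcongr
            refine nik_jensen2 (by simp [Measure.restrict_apply_univ, hIoc]) ?_
            exact (hGmeas.comp (by fun_prop)).aemeasurable
    have swap : ∫⁻ x, ∫⁻ t in Set.Ioc (0:ℝ) 1, G (x + t • k) ^ (2:ℝ) =
        ∫⁻ t in Set.Ioc (0:ℝ) 1, ∫⁻ x, G (x + t • k) ^ (2:ℝ) := by
      refine lintegral_lintegral_swap ?_
      have : Measurable fun p : EuclideanSpace ℝ (Fin d) × ℝ => G (p.1 + p.2 • k) ^ (2:ℝ) :=
        (ENNReal.continuous_rpow_const.measurable).comp (hGmeas.comp (by fun_prop))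
      exact this.aemeasurable
    have trans : ∀ t : ℝ, ∫⁻ x, G (x + t • k) ^ (2:ℝ) = I := fun t =>
      (measurePreserving_add_right volume (t • k)).lintegral_comp
        (ENNReal.continuous_rpow_const.measurable.comp hGmeas)
    calc ∫⁻ x, (‖u (x + k) - u x‖₊ : ℝ≥0∞) ^ (2:ℝ)
        ≤ ∫⁻ x, (‖k‖₊ : ℝ≥0∞) ^ (2:ℝ) * ∫⁻ t in Set.Ioc (0:ℝ) 1, G (x + t • k) ^ (2:ℝ) := step1
      _ = (‖k‖₊ : ℝ≥0∞) ^ (2:ℝ) * ∫⁻ x, ∫⁻ t in Set.Ioc (0:ℝ) 1, G (x + t • k) ^ (2:ℝ) :=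
          lintegral_const_mul' _ _ (by simp)
      _ = (‖k‖₊ : ℝ≥0∞) ^ (2:ℝ) * ∫⁻ t in Set.Ioc (0:ℝ) 1, ∫⁻ x, G (x + t • k) ^ (2:ℝ) := by
          rw [swap]
      _ = (‖k‖₊ : ℝ≥0∞) ^ (2:ℝ) * I := by
          simp only [trans]; rw [setLIntegral_const, hIoc, mul_one]
  have h2 : ((2:ℝ≥0∞)).toReal = 2 := by norm_num
  rw [eLpNorm_eq_lintegral_rpow_enorm_toReal (by norm_num) (by norm_num),
      eLpNorm_eq_lintegral_rpow_enorm_toReal (by norm_num) (by norm_num), h2]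
  have hle : (∫⁻ x, (‖u (x + k) - u x‖₊ : ℝ≥0∞) ^ (2:ℝ)) ^ (1/2:ℝ) ≤
      ((‖k‖₊ : ℝ≥0∞) ^ (2:ℝ) * I) ^ (1/2:ℝ) := ENNReal.rpow_le_rpow main (by norm_num)
  refine le_trans hle ?_
  rw [ENNReal.mul_rpow_of_nonneg _ _ (by norm_num : (0:ℝ) ≤ 1/2), ← ENNReal.rpow_mul]
  norm_num
  rw [hI]
  simp only [hG]
  refine mul_le_mul_right (le_of_eq (congrArg (· ^ (1/2:ℝ)) ?_)) _
  exact lintegral_congr fun y => by rw [enorm_eq_nnnorm]; norm_num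

private lemma nik_trans {f : EuclideanSpace ℝ (Fin d) → ℝ}
    (hf : AEStronglyMeasurable f volume) (c : EuclideanSpace ℝ (Fin d)) :
    eLpNorm (fun x => f (x + c)) 2 volume = eLpNorm f 2 volume :=
  eLpNorm_comp_measurePreserving hf (measurePreserving_add_right volume c)

end Aux

/-- The Nikolskii seminorm `[u]_{γ,p} = sup_{k ≠ 0} ‖u_k − u‖_{L^p} / |k|^γ`,
valued in `ℝ≥0∞`. -/
noncomputable def nikSeminorm (d : ℕ) (γ : ℝ) (p : ℝ≥0∞)
    (u : EuclideanSpace ℝ (Fin d) → ℝ) : ℝ≥0∞ :=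
  ⨆ (k : EuclideanSpace ℝ (Fin d)) (_ : k ≠ 0),
    eLpNorm (fun x => u (x + k) - u x) p volume / ENNReal.ofReal (‖k‖ ^ γ)

/-- For `0 < γ₁ < 1`, `u : ℝ^d → ℝ` continuously differentiable with
`u, |∇u| ∈ L²(ℝ^d)`, and `h ≠ 0`, one has
`[u − u_h]_{γ₁,2} ≤ 2 |h|^{1−γ₁} ‖|∇u|‖_{L²}`. -/
theorem nikSeminorm_translate_diff_le_grad
    (d : ℕ) (hd : 1 ≤ d) (γ₁ : ℝ) (hγ₁ : 0 < γ₁) (hγ₁' : γ₁ < 1)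
    (u : EuclideanSpace ℝ (Fin d) → ℝ)
    (hu : ContDiff ℝ 1 u)
    (hu2 : MemLp u 2 volume)
    (hg2 : MemLp (fun x => ‖fderiv ℝ u x‖) 2 volume)
    (h : EuclideanSpace ℝ (Fin d)) (hh : h ≠ 0) :
    nikSeminorm d γ₁ 2 (fun x => u x - u (x + h)) ≤
      2 * ENNReal.ofReal (‖h‖ ^ (1 - γ₁)) *
        eLpNorm (fun x => ‖fderiv ℝ u x‖) 2 volume := by
  set g2 := eLpNorm (fun x => ‖fderiv ℝ u x‖) 2 volume with hg2def
  have uc : Continuous u := hu.continuous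
  rw [nikSeminorm]
  refine iSup_le fun k => iSup_le fun hk => ?_
  -- measurability helpers
  have m1 : AEStronglyMeasurable (fun x => u (x + k) - u x) volume :=
    ((uc.comp (continuous_add_right k)).sub uc).aestronglyMeasurable
  have m2 : AEStronglyMeasurable (fun x => u ((x + h) + k) - u (x + h)) volume :=
    ((uc.comp ((continuous_add_right h).add continuous_const)).sub
      (uc.comp (continuous_add_right h))).aestronglyMeasurable
  have m3 : AEStronglyMeasurable (fun x => u x - u (x + h)) volume :=
    (uc.sub (uc.comp (continuous_add_right h))).aestronglyMeasurable
  have m4 : AEStronglyMeasurable (fun x => u (x + k) - u ((x + k) + h)) volume :=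
    ((uc.comp (continuous_add_right k)).sub
      (uc.comp ((continuous_add_right k).add continuous_const))).aestronglyMeasurable
  set A := eLpNorm
      (fun x => ((fun x => u x - u (x + h)) (x + k)) - ((fun x => u x - u (x + h)) x)) 2 volume
      with hA
  -- bound via k
  have bk : A ≤ 2 * ENNReal.ofReal ‖k‖ * g2 := by
    have hfun : (fun x => ((fun x => u x - u (x + h)) (x + k)) - ((fun x => u x - u (x + h)) x))
        = fun x => (u (x + k) - u x) - (u ((x + h) + k) - u (x + h)) := by
      funext x
      have : x + k + h = x + h + k := by rw [add_right_comm]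
      simp only [this]
      ring
    have e2 : eLpNorm (fun x => u ((x + h) + k) - u (x + h)) 2 volume
        = eLpNorm (fun x => u (x + k) - u x) 2 volume :=
      nik_trans m1 h
    have tri : A ≤ eLpNorm (fun x => u (x + k) - u x) 2 volume
        + eLpNorm (fun x => u ((x + h) + k) - u (x + h)) 2 volume := by
      rw [hA, hfun]
      exact eLpNorm_sub_le m1 m2 one_le_two
    rw [e2] at tri
    calc A ≤ eLpNorm (fun x => u (x + k) - u x) 2 volume
          + eLpNorm (fun x => u (x + k) - u x) 2 volume := tri
      _ = 2 * eLpNorm (fun x => u (x + k) - u x) 2 volume := (two_mul _).symm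
      _ ≤ 2 * (ENNReal.ofReal ‖k‖ * g2) := mul_le_mul_right (nik_key hu k) 2
      _ = 2 * ENNReal.ofReal ‖k‖ * g2 := by rw [mul_assoc]
  -- bound via h
  have bh : A ≤ 2 * ENNReal.ofReal ‖h‖ * g2 := by
    have e3 : eLpNorm (fun x => u x - u (x + h)) 2 volume
        ≤ ENNReal.ofReal ‖h‖ * g2 := by
      have hneg : (fun x => u x - u (x + h)) = -(fun x => u (x + h) - u x) := by
        funext x; simp only [Pi.neg_apply]; ring
      rw [hneg, eLpNorm_neg]
      exact nik_key hu h
    have e4 : eLpNorm (fun x => u (x + k) - u ((x + k) + h)) 2 volume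
        = eLpNorm (fun x => u x - u (x + h)) 2 volume :=
      nik_trans m3 k
    have tri : A ≤ eLpNorm (fun x => u (x + k) - u ((x + k) + h)) 2 volume
        + eLpNorm (fun x => u x - u (x + h)) 2 volume := by
      rw [hA]
      exact eLpNorm_sub_le m4 m3 one_le_two
    rw [e4] at tri
    calc A ≤ eLpNorm (fun x => u x - u (x + h)) 2 volume
          + eLpNorm (fun x => u x - u (x + h)) 2 volume := tri
      _ = 2 * eLpNorm (fun x => u x - u (x + h)) 2 volume := (two_mul _).symm
      _ ≤ 2 * (ENNReal.ofReal ‖h‖ * g2) := mul_le_mul_right e3 2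
      _ = 2 * ENNReal.ofReal ‖h‖ * g2 := by rw [mul_assoc]
  -- combine
  have hkpos : 0 < ‖k‖ := norm_pos_iff.2 hk
  have hhpos : 0 < ‖h‖ := norm_pos_iff.2 hh
  have comb : A ≤ 2 * ENNReal.ofReal (‖k‖ ^ γ₁ * ‖h‖ ^ (1 - γ₁)) * g2 := by
    rcases le_total ‖k‖ ‖h‖ with hc | hc
    · refine le_trans bk ?_
      refine mul_le_mul_left (mul_le_mul_right ?_ 2) g2
      exact ENNReal.ofReal_le_ofReal (nik_rineq hkpos hc hγ₁')
    · refine le_trans bh ?_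
      refine mul_le_mul_left (mul_le_mul_right ?_ 2) g2
      exact ENNReal.ofReal_le_ofReal (nik_rineq' hhpos hc hγ₁)
  have hkγpos : 0 < ‖k‖ ^ γ₁ := Real.rpow_pos_of_pos hkpos _
  rw [ENNReal.div_le_iff (ENNReal.ofReal_pos.2 hkγpos).ne' ENNReal.ofReal_ne_top]
  refine le_trans comb (le_of_eq ?_)
  rw [ENNReal.ofReal_mul (Real.rpow_nonneg hkpos.le _)]
  ring
end

section
/- Let d ≥ 1, 0 < γ₁, 0 < γ₂ < 1, with γ₁ + γ₂ ≤ 1. There is a constant C depending only on d, γ₁, γ₂ with the following property: if u : ℝ^d → ℝ is continuously differentiable, u ∈ L²(ℝ^d), |∇u| ∈ L²(ℝ^d), and each partial derivative ∂_i u has finite Nikolskii seminorm [∂_i u]_{γ₂,2}, then for every h ∈ ℝ^d, h ≠ 0, the function u − u_h satisfies [u − u_h]_{1−γ₁,2} ≤ C · |h|^{γ₁ + γ₂} · ( ‖u‖_{L²(ℝ^d)} + ‖ |∇u| ‖_{L²(ℝ^d)} + Σ_{i=1}^d [∂_i u]_{γ₂,2} ). -/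
open MeasureTheory
open scoped ENNReal

section Aux

variable {d : ℕ}

lemma ftc_line (u : EuclideanSpace ℝ (Fin d) → ℝ) (hu : ContDiff ℝ 1 u)
    (x h : EuclideanSpace ℝ (Fin d)) :
    u (x + h) - u x = ∫ t in (0:ℝ)..1, fderiv ℝ u (x + t • h) h := by
  have H : ∀ t : ℝ, HasDerivAt (fun s : ℝ => u (x + s • h)) (fderiv ℝ u (x + t • h) h) t := by
    intro t
    have h1 : HasFDerivAt u (fderiv ℝ u (x + t • h)) (x + t • h) :=
      (hu.differentiable one_ne_zero _).hasFDerivAt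
    have h2 : HasDerivAt (fun s : ℝ => x + s • h) h t := by
      simpa using ((hasDerivAt_id t).smul_const h).const_add x
    exact (h1.comp_hasDerivAt t h2)
  rw [intervalIntegral.integral_eq_sub_of_hasDerivAt (fun t _ => H t) ?_]
  · simp
  · exact (Continuous.intervalIntegrable (by
      exact ((hu.continuous_fderiv one_ne_zero).comp (by continuity)).clm_apply continuous_const) 0 1)

set_option maxHeartbeats 1000000 in
lemma core_est (u : EuclideanSpace ℝ (Fin d) → ℝ) (hu : ContDiff ℝ 1 u)
    (k h : EuclideanSpace ℝ (Fin d)) :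
    eLpNorm (fun x => u (x + h + k) - u (x + h) - (u (x + k) - u x)) 2 volume ≤
      (‖h‖₊ : ℝ≥0∞) * eLpNorm (fun x => ‖fderiv ℝ u (x + k) - fderiv ℝ u x‖) 2 volume := by
  have hcont := hu.continuous_fderiv one_ne_zero
  set μ₁ := volume.restrict (Set.Ioc (0:ℝ) 1) with hμ₁
  haveI : IsProbabilityMeasure μ₁ := by
    constructor
    rw [hμ₁, Measure.restrict_apply_univ, Real.volume_Ioc]; norm_num
  -- pointwise representation
  have hrep : ∀ x, u (x + h + k) - u (x + h) - (u (x + k) - u x) =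
      ∫ t in (0:ℝ)..1, (fderiv ℝ u (x + k + t • h) - fderiv ℝ u (x + t • h)) h := by
    intro x
    have e1 := ftc_line u hu x h
    have e2 := ftc_line u hu (x + k) h
    have hint : ∀ y : EuclideanSpace ℝ (Fin d), IntervalIntegrable
        (fun t : ℝ => fderiv ℝ u (y + t • h) h) volume 0 1 := fun y =>
      Continuous.intervalIntegrable ((hcont.comp (by continuity)).clm_apply continuous_const) 0 1
    have e3 : u (x + h + k) - u (x + h) - (u (x + k) - u x)
        = (u (x + k + h) - u (x + k)) - (u (x + h) - u x) := by
      rw [add_right_comm]; ring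
    rw [e3, e1, e2, ← intervalIntegral.integral_sub (hint (x+k)) (hint x)]
    simp [ContinuousLinearMap.sub_apply]
  -- pointwise enorm bound
  set G : EuclideanSpace ℝ (Fin d) → ℝ → ℝ≥0∞ :=
    fun x t => (‖fderiv ℝ u (x + k + t • h) - fderiv ℝ u (x + t • h)‖₊ : ℝ≥0∞) with hG
  have hGcont : Continuous (Function.uncurry G) :=
    ENNReal.continuous_coe.comp
      (Continuous.nnnorm ((hcont.comp (by fun_prop)).sub (hcont.comp (by fun_prop))))
  have hGx : ∀ x, Measurable (G x) :=
    fun x => (hGcont.comp (Continuous.prodMk_right x)).measurable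
  have hpt : ∀ x, (‖u (x + h + k) - u (x + h) - (u (x + k) - u x)‖₊ : ℝ≥0∞) ≤
      (∫⁻ t, G x t ∂μ₁) * ‖h‖₊ := by
    intro x
    rw [hrep x]
    calc (‖∫ t in (0:ℝ)..1, (fderiv ℝ u (x + k + t • h) - fderiv ℝ u (x + t • h)) h‖₊ : ℝ≥0∞)
        ≤ ∫⁻ t, ‖(fderiv ℝ u (x + k + t • h) - fderiv ℝ u (x + t • h)) h‖₊ ∂μ₁ := by
          rw [intervalIntegral.integral_of_le zero_le_one]
          exact enorm_integral_le_lintegral_enorm _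
      _ ≤ ∫⁻ t, G x t * ‖h‖₊ ∂μ₁ := by
          apply lintegral_mono; intro t
          simp only [hG, ← ENNReal.coe_mul]
          exact ENNReal.coe_le_coe.2
            ((fderiv ℝ u (x + k + t • h) - fderiv ℝ u (x + t • h)).le_opNNNorm h)
      _ = (∫⁻ t, G x t ∂μ₁) * ‖h‖₊ := lintegral_mul_const' _ _ ENNReal.coe_ne_top
  -- Cauchy-Schwarz pointwise in x
  have hCS : ∀ x, (∫⁻ t, G x t ∂μ₁) ^ (2:ℝ) ≤ ∫⁻ t, G x t ^ (2:ℝ) ∂μ₁ := by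
    intro x
    have hpq : Real.HolderConjugate 2 2 := Real.HolderConjugate.two_two
    have := ENNReal.lintegral_mul_le_Lp_mul_Lq μ₁ hpq (hGx x).aemeasurable
      aemeasurable_const (g := fun _ => 1)
    simp only [mul_one, ENNReal.one_rpow, lintegral_const, measure_univ, one_mul] at this
    calc (∫⁻ t, G x t ∂μ₁) ^ (2:ℝ)
        ≤ ((∫⁻ t, G x t ^ (2:ℝ) ∂μ₁) ^ (1/(2:ℝ))) ^ (2:ℝ) := by gcongr; simpa using this
      _ = ∫⁻ t, G x t ^ (2:ℝ) ∂μ₁ := by rw [← ENNReal.rpow_mul]; norm_num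
  set N : ℝ≥0∞ := ∫⁻ x, (‖fderiv ℝ u (x + k) - fderiv ℝ u x‖₊ : ℝ≥0∞) ^ (2:ℝ) with hN
  have hswap : ∫⁻ x, ∫⁻ t, G x t ^ (2:ℝ) ∂μ₁ = ∫⁻ t, (∫⁻ x, G x t ^ (2:ℝ)) ∂μ₁ :=
    lintegral_lintegral_swap ((hGcont.measurable.pow_const _).aemeasurable)
  have hinner : ∀ t : ℝ, (∫⁻ x, G x t ^ (2:ℝ)) = N := by
    intro t
    rw [hN]
    calc (∫⁻ x, G x t ^ (2:ℝ))
        = ∫⁻ x, (fun y => (‖fderiv ℝ u (y + k) - fderiv ℝ u y‖₊ : ℝ≥0∞) ^ (2:ℝ)) (x + t • h) := by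
          congr 1; funext x
          rw [hG]; simp only []
          rw [add_right_comm x k (t • h)]
      _ = _ := lintegral_add_right_eq_self
            (fun y => (‖fderiv ℝ u (y + k) - fderiv ℝ u y‖₊ : ℝ≥0∞) ^ (2:ℝ)) (t • h)
  have hkey : ∫⁻ x, (‖u (x + h + k) - u (x + h) - (u (x + k) - u x)‖₊ : ℝ≥0∞) ^ (2:ℝ)
      ≤ (‖h‖₊ : ℝ≥0∞) ^ (2:ℝ) * N := by
    calc ∫⁻ x, (‖u (x + h + k) - u (x + h) - (u (x + k) - u x)‖₊ : ℝ≥0∞) ^ (2:ℝ)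
        ≤ ∫⁻ x, (∫⁻ t, G x t ^ (2:ℝ) ∂μ₁) * (‖h‖₊ : ℝ≥0∞) ^ (2:ℝ) := by
          apply lintegral_mono; intro x
          calc (‖u (x + h + k) - u (x + h) - (u (x + k) - u x)‖₊ : ℝ≥0∞) ^ (2:ℝ)
              ≤ ((∫⁻ t, G x t ∂μ₁) * ‖h‖₊) ^ (2:ℝ) := by
                gcongr
                exact hpt x
            _ = (∫⁻ t, G x t ∂μ₁) ^ (2:ℝ) * (‖h‖₊ : ℝ≥0∞) ^ (2:ℝ) :=
                ENNReal.mul_rpow_of_nonneg _ _ (by norm_num)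
            _ ≤ (∫⁻ t, G x t ^ (2:ℝ) ∂μ₁) * (‖h‖₊ : ℝ≥0∞) ^ (2:ℝ) := by
                gcongr
                exact hCS x
      _ = (∫⁻ x, ∫⁻ t, G x t ^ (2:ℝ) ∂μ₁) * (‖h‖₊ : ℝ≥0∞) ^ (2:ℝ) :=
          lintegral_mul_const' _ _ (ENNReal.rpow_ne_top_of_nonneg (by norm_num) ENNReal.coe_ne_top)
      _ = (∫⁻ t, (∫⁻ x, G x t ^ (2:ℝ)) ∂μ₁) * (‖h‖₊ : ℝ≥0∞) ^ (2:ℝ) := by rw [hswap]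
      _ = N * (‖h‖₊ : ℝ≥0∞) ^ (2:ℝ) := by
          simp only [hinner, lintegral_const, measure_univ, mul_one]
      _ = (‖h‖₊ : ℝ≥0∞) ^ (2:ℝ) * N := mul_comm _ _
  rw [eLpNorm_eq_lintegral_rpow_enorm_toReal two_ne_zero ENNReal.ofNat_ne_top,
    eLpNorm_eq_lintegral_rpow_enorm_toReal two_ne_zero ENNReal.ofNat_ne_top]
  simp only [ENNReal.toReal_ofNat, nnnorm_norm, enorm_norm, enorm_eq_nnnorm]
  calc (∫⁻ x, (‖u (x + h + k) - u (x + h) - (u (x + k) - u x)‖₊ : ℝ≥0∞) ^ (2:ℝ)) ^ (1/(2:ℝ))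
      ≤ ((‖h‖₊ : ℝ≥0∞) ^ (2:ℝ) * N) ^ (1/(2:ℝ)) := ENNReal.rpow_le_rpow hkey (by norm_num)
    _ = (‖h‖₊ : ℝ≥0∞) * N ^ (1/(2:ℝ)) := by
        rw [ENNReal.mul_rpow_of_nonneg _ _ (by norm_num), ← ENNReal.rpow_mul]
        norm_num

lemma coord_le_norm (x : EuclideanSpace ℝ (Fin d)) (i : Fin d) : |x i| ≤ ‖x‖ := by
  rw [EuclideanSpace.norm_eq, ← Real.sqrt_sq_eq_abs]
  apply Real.sqrt_le_sqrt
  calc x i ^ 2 = ‖x i‖ ^ 2 := by rw [Real.norm_eq_abs, sq_abs]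
    _ ≤ ∑ j, ‖x j‖ ^ 2 :=
      Finset.single_le_sum (f := fun j => ‖x j‖ ^ 2) (fun j _ => sq_nonneg _) (Finset.mem_univ i)

lemma opNorm_le_sum_coord (f : EuclideanSpace ℝ (Fin d) →L[ℝ] ℝ) :
    ‖f‖ ≤ ∑ i, |f (EuclideanSpace.single i 1)| := by
  apply ContinuousLinearMap.opNorm_le_bound _ (Finset.sum_nonneg fun i _ => abs_nonneg _)
  intro x
  have hx : x = ∑ i, x i • EuclideanSpace.single i 1 := by
    conv_lhs => rw [← (EuclideanSpace.basisFun (Fin d) ℝ).sum_repr x]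
    simp [EuclideanSpace.basisFun_apply, EuclideanSpace.basisFun_repr]
  calc ‖f x‖ = ‖∑ i, x i * f (EuclideanSpace.single i 1)‖ := by
        conv_lhs => rw [hx]
        rw [map_sum]
        simp [smul_eq_mul]
    _ ≤ ∑ i, ‖x i * f (EuclideanSpace.single i 1)‖ := norm_sum_le _ _
    _ ≤ ∑ i, |f (EuclideanSpace.single i 1)| * ‖x‖ := by
        apply Finset.sum_le_sum
        intro i _
        rw [Real.norm_eq_abs, abs_mul, mul_comm]
        exact mul_le_mul_of_nonneg_left (coord_le_norm x i) (abs_nonneg _)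
    _ = (∑ i, |f (EuclideanSpace.single i 1)|) * ‖x‖ := (Finset.sum_mul _ _ _).symm

end Aux

/-- For `0 < γ₁`, `0 < γ₂ < 1`, `γ₁ + γ₂ ≤ 1`, there is a constant
`C = C(d, γ₁, γ₂)` such that for `u` continuously differentiable with `u, |∇u| ∈ L²`
and `[∂ᵢu]_{γ₂,2} < ∞` for each `i`, and every `h ≠ 0`:
`[u − u_h]_{1−γ₁,2} ≤ C |h|^{γ₁+γ₂} (‖u‖_{L²} + ‖|∇u|‖_{L²} + Σᵢ [∂ᵢu]_{γ₂,2})`. -/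
theorem nikSeminorm_translate_diff_le_of_deriv_nik
    (d : ℕ) (hd : 1 ≤ d) (γ₁ γ₂ : ℝ) (hγ₁ : 0 < γ₁) (hγ₂ : 0 < γ₂) (hγ₂' : γ₂ < 1)
    (hsum : γ₁ + γ₂ ≤ 1) :
    ∃ C : ℝ, 0 < C ∧
      ∀ u : EuclideanSpace ℝ (Fin d) → ℝ,
        ContDiff ℝ 1 u →
        MemLp u 2 volume →
        MemLp (fun x => ‖fderiv ℝ u x‖) 2 volume →
        (∀ i : Fin d,
          nikSeminorm d γ₂ 2 (fun x => fderiv ℝ u x (EuclideanSpace.single i 1)) ≠ ⊤) →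
        ∀ h : EuclideanSpace ℝ (Fin d), h ≠ 0 →
          nikSeminorm d (1 - γ₁) 2 (fun x => u x - u (x + h)) ≤
            ENNReal.ofReal (C * ‖h‖ ^ (γ₁ + γ₂)) *
              (eLpNorm u 2 volume + eLpNorm (fun x => ‖fderiv ℝ u x‖) 2 volume +
                ∑ i : Fin d,
                  nikSeminorm d γ₂ 2 (fun x => fderiv ℝ u x (EuclideanSpace.single i 1))) := by
  refine ⟨1, one_pos, ?_⟩
  intro u hu _ _ _ h hh
  have hcont := hu.continuous_fderiv one_ne_zero
  have hhn : 0 < ‖h‖ := norm_pos_iff.2 hh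
  set S : ℝ≥0∞ := ∑ i : Fin d,
    nikSeminorm d γ₂ 2 (fun x => fderiv ℝ u x (EuclideanSpace.single i 1)) with hS
  have hDi : ∀ (i : Fin d) (k : EuclideanSpace ℝ (Fin d)), k ≠ 0 →
      eLpNorm (fun x => fderiv ℝ u (x + k) (EuclideanSpace.single i 1)
        - fderiv ℝ u x (EuclideanSpace.single i 1)) 2 volume ≤
      nikSeminorm d γ₂ 2 (fun x => fderiv ℝ u x (EuclideanSpace.single i 1)) *
        ENNReal.ofReal (‖k‖ ^ γ₂) := by
    intro i k hk
    have hb0 : ENNReal.ofReal (‖k‖ ^ γ₂) ≠ 0 :=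
      (ENNReal.ofReal_pos.2 (Real.rpow_pos_of_pos (norm_pos_iff.2 hk) γ₂)).ne'
    rw [← ENNReal.div_le_iff hb0 ENNReal.ofReal_ne_top]
    simp only [nikSeminorm]
    exact le_iSup₂ (f := fun (k' : EuclideanSpace ℝ (Fin d)) (_ : k' ≠ 0) =>
      eLpNorm (fun x => fderiv ℝ u (x + k') (EuclideanSpace.single i 1)
        - fderiv ℝ u x (EuclideanSpace.single i 1)) 2 volume
          / ENNReal.ofReal (‖k'‖ ^ γ₂)) k hk
  have hgradk : ∀ (k : EuclideanSpace ℝ (Fin d)), k ≠ 0 →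
      eLpNorm (fun x => ‖fderiv ℝ u (x + k) - fderiv ℝ u x‖) 2 volume ≤
        S * ENNReal.ofReal (‖k‖ ^ γ₂) := by
    intro k hk
    have step1 : eLpNorm (fun x => ‖fderiv ℝ u (x + k) - fderiv ℝ u x‖) 2 volume ≤
        eLpNorm (fun x => ∑ i, |fderiv ℝ u (x + k) (EuclideanSpace.single i 1)
          - fderiv ℝ u x (EuclideanSpace.single i 1)|) 2 volume := by
      apply eLpNorm_mono_real
      intro x
      rw [norm_norm]
      simpa [ContinuousLinearMap.sub_apply] using
        opNorm_le_sum_coord (fderiv ℝ u (x + k) - fderiv ℝ u x)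
    refine step1.trans ?_
    have step2 := eLpNorm_sum_le (μ := (volume : Measure (EuclideanSpace ℝ (Fin d))))
      (s := Finset.univ)
      (f := fun (i : Fin d) (x : EuclideanSpace ℝ (Fin d)) =>
        |fderiv ℝ u (x + k) (EuclideanSpace.single i 1)
          - fderiv ℝ u x (EuclideanSpace.single i 1)|) (p := 2)
      (fun i _ => by
        apply Continuous.aestronglyMeasurable
        exact (((hcont.comp (continuous_id.add continuous_const)).clm_apply
          continuous_const).sub (hcont.clm_apply continuous_const)).abs) one_le_two
    calc eLpNorm (fun x => ∑ i, |fderiv ℝ u (x + k) (EuclideanSpace.single i 1)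
          - fderiv ℝ u x (EuclideanSpace.single i 1)|) 2 volume
        ≤ ∑ i : Fin d, eLpNorm (fun x => |fderiv ℝ u (x + k) (EuclideanSpace.single i 1)
            - fderiv ℝ u x (EuclideanSpace.single i 1)|) 2 volume := by
          refine le_trans (le_of_eq ?_) step2
          congr 1
          funext x
          simp [Finset.sum_apply]
      _ = ∑ i : Fin d, eLpNorm (fun x => fderiv ℝ u (x + k) (EuclideanSpace.single i 1)
            - fderiv ℝ u x (EuclideanSpace.single i 1)) 2 volume := by
          refine Finset.sum_congr rfl fun i _ => ?_
          simp only [← Real.norm_eq_abs]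
          exact eLpNorm_norm _
      _ ≤ ∑ i : Fin d, nikSeminorm d γ₂ 2
            (fun x => fderiv ℝ u x (EuclideanSpace.single i 1)) *
            ENNReal.ofReal (‖k‖ ^ γ₂) :=
          Finset.sum_le_sum fun i _ => hDi i k hk
      _ = S * ENNReal.ofReal (‖k‖ ^ γ₂) := by rw [hS, Finset.sum_mul]
  refine iSup₂_le fun k hk => ?_
  have hkn : 0 < ‖k‖ := norm_pos_iff.2 hk
  rw [ENNReal.div_le_iff
    (ENNReal.ofReal_pos.2 (Real.rpow_pos_of_pos hkn _)).ne' ENNReal.ofReal_ne_top]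
  have eqv : eLpNorm (fun x => (u (x + k) - u (x + k + h)) - (u x - u (x + h))) 2 volume
      = eLpNorm (fun x => u (x + h + k) - u (x + h) - (u (x + k) - u x)) 2 volume := by
    rw [← eLpNorm_neg (fun x => u (x + h + k) - u (x + h) - (u (x + k) - u x)) 2 volume]
    congr 1
    funext x
    simp only [Pi.neg_apply]
    rw [add_right_comm x h k]
    ring
  have E1 : eLpNorm (fun x => u (x + h + k) - u (x + h) - (u (x + k) - u x)) 2 volume ≤
      ENNReal.ofReal ‖h‖ * (S * ENNReal.ofReal (‖k‖ ^ γ₂)) := by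
    refine (core_est u hu k h).trans ?_
    rw [← enorm_eq_nnnorm, ← ofReal_norm]
    exact mul_le_mul_right (hgradk k hk) _
  have E2 : eLpNorm (fun x => u (x + h + k) - u (x + h) - (u (x + k) - u x)) 2 volume ≤
      ENNReal.ofReal ‖k‖ * (S * ENNReal.ofReal (‖h‖ ^ γ₂)) := by
    have hce := core_est u hu h k
    have efun : (fun x => u (x + k + h) - u (x + k) - (u (x + h) - u x))
        = fun x => u (x + h + k) - u (x + h) - (u (x + k) - u x) := by
      funext x; rw [add_right_comm x k h]; ring
    rw [efun] at hce
    refine hce.trans ?_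
    rw [← enorm_eq_nnnorm, ← ofReal_norm]
    exact mul_le_mul_right (hgradk h hh) _
  have hmain : eLpNorm (fun x => u (x + h + k) - u (x + h) - (u (x + k) - u x)) 2 volume ≤
      (ENNReal.ofReal (‖h‖ ^ (γ₁ + γ₂)) * S) * ENNReal.ofReal (‖k‖ ^ (1 - γ₁)) := by
    rcases le_total ‖k‖ ‖h‖ with hle | hle
    · refine E2.trans ?_
      have hr : ‖k‖ * ‖h‖ ^ γ₂ ≤ ‖h‖ ^ (γ₁ + γ₂) * ‖k‖ ^ (1 - γ₁) := by
        calc ‖k‖ * ‖h‖ ^ γ₂ = ‖k‖ ^ (1 - γ₁) * ‖k‖ ^ γ₁ * ‖h‖ ^ γ₂ := by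
              rw [← Real.rpow_add hkn]
              congr 1
              rw [show 1 - γ₁ + γ₁ = 1 by ring, Real.rpow_one]
          _ ≤ ‖k‖ ^ (1 - γ₁) * ‖h‖ ^ γ₁ * ‖h‖ ^ γ₂ :=
              mul_le_mul_of_nonneg_right
                (mul_le_mul_of_nonneg_left (Real.rpow_le_rpow hkn.le hle hγ₁.le)
                  (Real.rpow_nonneg hkn.le _)) (Real.rpow_nonneg hhn.le _)
          _ = ‖h‖ ^ (γ₁ + γ₂) * ‖k‖ ^ (1 - γ₁) := by
              rw [Real.rpow_add hhn]; ring
      calc ENNReal.ofReal ‖k‖ * (S * ENNReal.ofReal (‖h‖ ^ γ₂))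
          = ENNReal.ofReal (‖k‖ * ‖h‖ ^ γ₂) * S := by
            rw [ENNReal.ofReal_mul (norm_nonneg k)]; ring
        _ ≤ ENNReal.ofReal (‖h‖ ^ (γ₁ + γ₂) * ‖k‖ ^ (1 - γ₁)) * S :=
            mul_le_mul_left (ENNReal.ofReal_le_ofReal hr) _
        _ = (ENNReal.ofReal (‖h‖ ^ (γ₁ + γ₂)) * S) * ENNReal.ofReal (‖k‖ ^ (1 - γ₁)) := by
            rw [ENNReal.ofReal_mul (Real.rpow_nonneg (norm_nonneg h) _)]; ring
    · refine E1.trans ?_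
      have h1 : (0:ℝ) ≤ 1 - γ₁ - γ₂ := by linarith
      have hr : ‖h‖ * ‖k‖ ^ γ₂ ≤ ‖h‖ ^ (γ₁ + γ₂) * ‖k‖ ^ (1 - γ₁) := by
        calc ‖h‖ * ‖k‖ ^ γ₂ = ‖h‖ ^ (γ₁ + γ₂) * ‖h‖ ^ (1 - γ₁ - γ₂) * ‖k‖ ^ γ₂ := by
              rw [← Real.rpow_add hhn]
              congr 1
              rw [show γ₁ + γ₂ + (1 - γ₁ - γ₂) = 1 by ring, Real.rpow_one]
          _ ≤ ‖h‖ ^ (γ₁ + γ₂) * ‖k‖ ^ (1 - γ₁ - γ₂) * ‖k‖ ^ γ₂ :=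
              mul_le_mul_of_nonneg_right
                (mul_le_mul_of_nonneg_left (Real.rpow_le_rpow hhn.le hle h1)
                  (Real.rpow_nonneg hhn.le _)) (Real.rpow_nonneg hkn.le _)
          _ = ‖h‖ ^ (γ₁ + γ₂) * ‖k‖ ^ (1 - γ₁) := by
              rw [mul_assoc, ← Real.rpow_add hkn,
                show 1 - γ₁ - γ₂ + γ₂ = 1 - γ₁ by ring]
      calc ENNReal.ofReal ‖h‖ * (S * ENNReal.ofReal (‖k‖ ^ γ₂))
          = ENNReal.ofReal (‖h‖ * ‖k‖ ^ γ₂) * S := by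
            rw [ENNReal.ofReal_mul (norm_nonneg h)]; ring
        _ ≤ ENNReal.ofReal (‖h‖ ^ (γ₁ + γ₂) * ‖k‖ ^ (1 - γ₁)) * S :=
            mul_le_mul_left (ENNReal.ofReal_le_ofReal hr) _
        _ = (ENNReal.ofReal (‖h‖ ^ (γ₁ + γ₂)) * S) * ENNReal.ofReal (‖k‖ ^ (1 - γ₁)) := by
            rw [ENNReal.ofReal_mul (Real.rpow_nonneg (norm_nonneg h) _)]; ring
  refine le_trans (le_of_eq eqv) (hmain.trans ?_)
  rw [one_mul]
  gcongr
  exact le_add_self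
end

section
/- Let d ≥ 1, 1 ≤ p₀ ≤ p₁ ≤ ∞, 0 < s₁ ≤ s₀ < 1, and suppose s₀ − d/p₀ = s₁ − d/p₁ (with the convention d/∞ = 0). There is a constant C depending only on d, p₀, p₁, s₀, s₁ such that every u ∈ L^{p₀}(ℝ^d) with finite Nikolskii seminorm [u]_{s₀,p₀} belongs to L^{p₁}(ℝ^d), has finite seminorm [u]_{s₁,p₁}, and satisfies ‖u‖_{L^{p₁}(ℝ^d)} + [u]_{s₁,p₁} ≤ C · ( ‖u‖_{L^{p₀}(ℝ^d)} + [u]_{s₀,p₀} ). -/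
open MeasureTheory
open scoped ENNReal

open Metric Filter
open scoped Topology

namespace NikAux

variable {d : ℕ}

abbrev Sp (d : ℕ) := EuclideanSpace ℝ (Fin d)

noncomputable def nu (d : ℕ) (t : ℝ) : Measure (Sp d) := volume.restrict (closedBall 0 t)

noncomputable def Vol (d : ℕ) (t : ℝ) : ℝ≥0∞ := volume (closedBall (0 : Sp d) t)

noncomputable def A (t : ℝ) (u : Sp d → ℝ) (x : Sp d) : ℝ := ⨍ h, u (x + h) ∂(nu d t)

instance (t : ℝ) : SFinite (nu d t) := by unfold nu; infer_instance

instance (t : ℝ) : IsFiniteMeasure (nu d t) := by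
  refine ⟨?_⟩
  rw [nu, Measure.restrict_apply_univ]
  exact measure_closedBall_lt_top

lemma nu_univ (t : ℝ) : nu d t Set.univ = Vol d t := by
  simp [nu, Vol, Measure.restrict_apply_univ]

lemma Vol_lt_top (t : ℝ) : Vol d t < ⊤ := measure_closedBall_lt_top

lemma Vol_pos {t : ℝ} (ht : 0 < t) : 0 < Vol d t := measure_closedBall_pos _ _ ht

lemma Vol_eq (t : ℝ) (ht : 0 ≤ t) :
    Vol d t = ENNReal.ofReal (t ^ d) * volume (ball (0 : Sp d) 1) := by
  rw [Vol, Measure.addHaar_closedBall _ _ ht, finrank_euclideanSpace_fin]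

lemma Vol_mono {s t : ℝ} (hst : s ≤ t) : Vol d s ≤ Vol d t :=
  measure_mono (closedBall_subset_closedBall hst)

lemma coe_addLeft (x : Sp d) : ⇑(MeasurableEquiv.addLeft x) = fun h : Sp d => x + h := rfl

lemma preim_add (x : Sp d) (t : ℝ) :
    (fun h : Sp d => x + h) ⁻¹' closedBall x t = closedBall 0 t := by
  ext h
  simp [mem_closedBall, dist_eq_norm]

lemma map_nu (x : Sp d) (t : ℝ) :
    Measure.map (⇑(MeasurableEquiv.addLeft x)) (nu d t) = volume.restrict (closedBall x t) := by
  rw [coe_addLeft, nu, ← preim_add x t,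
    ← Measure.restrict_map (measurable_const_add x) measurableSet_closedBall,
    (measurePreserving_add_left volume x).map_eq]

lemma lint_shift (g : Sp d → ℝ≥0∞) (x : Sp d) (t : ℝ) :
    ∫⁻ h, g (x + h) ∂(nu d t) = ∫⁻ y in closedBall x t, g y := by
  rw [← map_nu x t, MeasureTheory.lintegral_map_equiv g (MeasurableEquiv.addLeft x)]
  rfl

lemma int_shift (g : Sp d → ℝ) (x : Sp d) (t : ℝ) :
    ∫ h, g (x + h) ∂(nu d t) = ∫ y in closedBall x t, g y := by
  rw [← map_nu x t, MeasureTheory.integral_map_equiv (MeasurableEquiv.addLeft x) g]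
  rfl

lemma integrable_shift_iff (g : Sp d → ℝ) (x : Sp d) (t : ℝ) :
    Integrable (fun h => g (x + h)) (nu d t) ↔ IntegrableOn g (closedBall x t) volume := by
  rw [IntegrableOn, ← map_nu x t,
    MeasureTheory.integrable_map_equiv (MeasurableEquiv.addLeft x) g]
  rfl

lemma slice_integrable {u : Sp d → ℝ} (hu : LocallyIntegrable u volume) (x : Sp d) (t : ℝ) :
    Integrable (fun h => u (x + h)) (nu d t) :=
  (integrable_shift_iff u x t).2 (hu.integrableOn_isCompact (isCompact_closedBall x t))

lemma A_eq_setAverage (t : ℝ) (u : Sp d → ℝ) (x : Sp d) :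
    A t u x = ⨍ y in closedBall x t, u y := by
  rw [A, average_eq, average_eq, measureReal_def, measureReal_def, int_shift, nu_univ, Measure.restrict_apply_univ, Vol]
  conv_rhs => rw [Measure.addHaar_closedBall_center]

lemma A_measurable {u : Sp d → ℝ} (hm : Measurable u) (t : ℝ) : Measurable (A t u) := by
  have h1 : Measurable fun x : Sp d => ∫ h, u (x + h) ∂(nu d t) := by
    have : StronglyMeasurable fun q : Sp d × Sp d => u (q.1 + q.2) :=
      (hm.comp (measurable_fst.add measurable_snd)).stronglyMeasurable
    exact this.integral_prod_right'.measurable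
  have : A t u = fun x => (nu d t Set.univ).toReal⁻¹ • ∫ h, u (x + h) ∂(nu d t) := by
    funext x; rw [A, average_eq, measureReal_def]
  rw [this]
  simp only [smul_eq_mul]
  exact h1.const_mul _

lemma A_stronglyMeasurable {u : Sp d → ℝ} (hm : Measurable u) (t : ℝ) :
    StronglyMeasurable (A t u) := (A_measurable hm t).stronglyMeasurable

lemma A_shift (t : ℝ) (u : Sp d → ℝ) (k : Sp d) :
    (fun x => A t u (x + k)) = A t (fun x => u (x + k)) := by
  funext x
  rw [A, A]
  refine integral_congr_ae (Filter.Eventually.of_forall fun h => ?_)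
  show u (x + k + h) = u (x + h + k)
  rw [add_right_comm]

lemma A_sub {u v : Sp d → ℝ} (hu : LocallyIntegrable u volume) (hv : LocallyIntegrable v volume)
    (t : ℝ) :
    A t (fun x => u x - v x) = fun x => A t u x - A t v x := by
  funext x
  rw [A, A, A, average_eq, average_eq, average_eq, ← smul_sub]
  congr 1
  exact integral_sub (slice_integrable hu x t) (slice_integrable hv x t)

/-- Jensen-type inequality: `(∫⁻ f ∂ν)^p ≤ (ν univ)^(p-1) * ∫⁻ f^p ∂ν` for `1 ≤ p`. -/
lemma jensen {β : Type*} [MeasurableSpace β] (ν : Measure β) {f : β → ℝ≥0∞}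
    (hf : AEMeasurable f ν) {p : ℝ} (hp : 1 ≤ p) :
    (∫⁻ b, f b ∂ν) ^ p ≤ ν Set.univ ^ (p - 1) * ∫⁻ b, f b ^ p ∂ν := by
  rcases eq_or_lt_of_le hp with h1 | h1
  · simp [← h1]
  have hp0 : p ≠ 0 := by linarith
  have hconj : p.HolderConjugate (Real.conjExponent p) := Real.HolderConjugate.conjExponent h1
  set q := Real.conjExponent p with hqdef
  have hq0 : q ≠ 0 := hconj.symm.ne_zero
  have hpq : p / q = p - 1 := by
    rw [hqdef, Real.conjExponent]
    field_simp
  have hH := ENNReal.lintegral_mul_le_Lp_mul_Lq ν hconj hf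
    (aemeasurable_const (b := (1:ℝ≥0∞)))
  simp only [Pi.mul_apply, mul_one, ENNReal.one_rpow, lintegral_const, one_mul] at hH
  calc (∫⁻ b, f b ∂ν) ^ p
      ≤ ((∫⁻ b, f b ^ p ∂ν) ^ (1/p) * ν Set.univ ^ (1/q)) ^ p :=
        ENNReal.rpow_le_rpow hH (by linarith)
    _ = (∫⁻ b, f b ^ p ∂ν) * ν Set.univ ^ (p/q) := by
        rw [ENNReal.mul_rpow_of_nonneg _ _ (by linarith), ← ENNReal.rpow_mul, ← ENNReal.rpow_mul,
          one_div_mul_cancel hp0, ENNReal.rpow_one, one_div, inv_mul_eq_div]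
    _ = ν Set.univ ^ (p - 1) * ∫⁻ b, f b ^ p ∂ν := by rw [hpq, mul_comm]

lemma inv_toReal_le (a : ℝ≥0∞) : ENNReal.ofReal a.toReal⁻¹ ≤ a⁻¹ := by
  rcases eq_or_ne a ∞ with rfl | ha; · simp
  rcases eq_or_ne a 0 with rfl | ha0; · simp
  rw [ENNReal.ofReal_inv_of_pos (ENNReal.toReal_pos ha0 ha), ENNReal.ofReal_toReal ha]

lemma enorm_average_le {β : Type*} [MeasurableSpace β] (ν : Measure β) (w : β → ℝ) :
    (‖⨍ h, w h ∂ν‖₊ : ℝ≥0∞) ≤ (ν Set.univ)⁻¹ * ∫⁻ h, (‖w h‖₊ : ℝ≥0∞) ∂ν := by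
  rw [average_eq, nnnorm_smul, ENNReal.coe_mul]
  refine mul_le_mul' ?_ (enorm_integral_le_lintegral_enorm _)
  rw [← enorm_eq_nnnorm, Real.enorm_eq_ofReal (by positivity)]
  exact inv_toReal_le _

lemma lintegral_le_of_eLpNorm_le {α : Type*} [MeasurableSpace α] {μ : Measure α}
    {f : α → ℝ} {p : ℝ≥0∞} (hp0 : p ≠ 0) (hpt : p ≠ ⊤) {C : ℝ≥0∞}
    (h : eLpNorm f p μ ≤ C) :
    ∫⁻ x, (‖f x‖₊ : ℝ≥0∞) ^ p.toReal ∂μ ≤ C ^ p.toReal := by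
  have h2 := ENNReal.rpow_le_rpow (z := p.toReal) h ENNReal.toReal_nonneg
  rw [eLpNorm_eq_lintegral_rpow_enorm_toReal hp0 hpt, ← ENNReal.rpow_mul, one_div,
    inv_mul_cancel₀ (ENNReal.toReal_ne_zero.2 ⟨hp0, hpt⟩), ENNReal.rpow_one] at h2
  exact h2

lemma nu_lintegral_le {t : ℝ} {F : Sp d → ℝ≥0∞} {c : ℝ≥0∞}
    (hFc : ∀ h ∈ closedBall (0 : Sp d) t, F h ≤ c) :
    ∫⁻ h, F h ∂(nu d t) ≤ c * Vol d t := by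
  rw [nu]
  refine (lintegral_mono_ae ((ae_restrict_iff' measurableSet_closedBall).2
    (Filter.Eventually.of_forall hFc))).trans ?_
  rw [setLIntegral_const]
  rfl

/-- Master averaging bound: if each slice `x ↦ g x h` (for `h` in the ball) has `L^p` norm
at most `C`, then so does the ball average. -/
lemma avg_bound {p : ℝ≥0∞} (hp : 1 ≤ p) (hpt : p ≠ ⊤) {t : ℝ} (ht : 0 < t)
    {g : Sp d → Sp d → ℝ} (hg : Measurable (Function.uncurry g))
    {C : ℝ≥0∞} (hC : ∀ h ∈ closedBall (0 : Sp d) t, eLpNorm (fun x => g x h) p volume ≤ C) :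
    eLpNorm (fun x => ⨍ h, g x h ∂(nu d t)) p volume ≤ C := by
  rcases eq_or_ne C ⊤ with rfl | hCt; · exact le_top
  have hp0 : p ≠ 0 := by intro h; rw [h] at hp; exact (by simp at hp)
  set pr := p.toReal with hprdef
  have hpr1 : 1 ≤ pr := by
    rw [hprdef, ← ENNReal.toReal_one]
    exact ENNReal.toReal_mono hpt hp
  have hpr0 : 0 < pr := lt_of_lt_of_le zero_lt_one hpr1
  set V := Vol d t with hVdef
  have hV0 : V ≠ 0 := (Vol_pos ht).ne'
  have hVt : V ≠ ⊤ := (Vol_lt_top t).ne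
  set Φ : Sp d → Sp d → ℝ≥0∞ := fun x h => (‖g x h‖₊ : ℝ≥0∞) with hΦdef
  have hΦm : Measurable fun q : Sp d × Sp d => Φ q.1 q.2 := hg.enorm
  have key : ∫⁻ x, (‖⨍ h, g x h ∂(nu d t)‖₊ : ℝ≥0∞) ^ pr ∂volume ≤ C ^ pr := by
    calc ∫⁻ x, (‖⨍ h, g x h ∂(nu d t)‖₊ : ℝ≥0∞) ^ pr ∂volume
        ≤ ∫⁻ x, (V⁻¹ * ∫⁻ h, Φ x h ∂(nu d t)) ^ pr ∂volume := by
          refine lintegral_mono fun x => ENNReal.rpow_le_rpow ?_ hpr0.le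
          simpa [nu_univ] using enorm_average_le (nu d t) (g x)
      _ ≤ ∫⁻ x, (V⁻¹ ^ pr * V ^ (pr - 1)) * ∫⁻ h, Φ x h ^ pr ∂(nu d t) ∂volume := by
          refine lintegral_mono fun x => ?_
          rw [ENNReal.mul_rpow_of_nonneg _ _ hpr0.le, mul_assoc]
          refine mul_le_mul' le_rfl ?_
          have := jensen (nu d t) (f := Φ x)
            ((hg.comp (measurable_prodMk_left)).enorm.aemeasurable) hpr1
          rwa [nu_univ, ← hVdef] at this
      _ = (V⁻¹ ^ pr * V ^ (pr - 1)) * ∫⁻ x, ∫⁻ h, Φ x h ^ pr ∂(nu d t) ∂volume := by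
          refine lintegral_const_mul' _ _ ?_
          exact ENNReal.mul_ne_top
            (ENNReal.rpow_ne_top_of_nonneg hpr0.le (by simp [hV0]))
            (ENNReal.rpow_ne_top_of_nonneg (by linarith) hVt)
      _ = (V⁻¹ ^ pr * V ^ (pr - 1)) * ∫⁻ h, ∫⁻ x, Φ x h ^ pr ∂volume ∂(nu d t) := by
          rw [lintegral_lintegral_swap]
          exact (hΦm.pow_const _).aemeasurable
      _ ≤ (V⁻¹ ^ pr * V ^ (pr - 1)) * (C ^ pr * V) := by
          refine mul_le_mul' le_rfl (nu_lintegral_le fun h hh => ?_)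
          exact lintegral_le_of_eLpNorm_le hp0 hpt (hC h hh)
      _ = C ^ pr := by
          rw [mul_comm (C ^ pr) V, ← mul_assoc, mul_assoc (V⁻¹ ^ pr)]
          have hVV : V ^ (pr - 1) * V = V ^ pr := by
            nth_rewrite 2 [← ENNReal.rpow_one V]
            rw [← ENNReal.rpow_add _ _ hV0 hVt, sub_add_cancel]
          rw [hVV, ← ENNReal.mul_rpow_of_nonneg _ _ hpr0.le,
            ENNReal.inv_mul_cancel hV0 hVt, ENNReal.one_rpow, one_mul]
  rw [eLpNorm_eq_lintegral_rpow_enorm_toReal hp0 hpt]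
  have h3 := ENNReal.rpow_le_rpow key (by positivity : (0:ℝ) ≤ 1/pr)
  rwa [← ENNReal.rpow_mul, mul_one_div, div_self hpr0.ne', ENNReal.rpow_one] at h3

lemma elp_shift {u : Sp d → ℝ} (hu : AEStronglyMeasurable u volume) (k : Sp d) (p : ℝ≥0∞) :
    eLpNorm (fun x => u (x + k)) p volume = eLpNorm u p volume :=
  eLpNorm_comp_measurePreserving hu (measurePreserving_add_right volume k)

lemma inv_mul_rpow_aux {V : ℝ≥0∞} (hV0 : V ≠ 0) (hVt : V ≠ ⊤) {pr : ℝ} (hpr1 : 1 ≤ pr) :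
    V⁻¹ * V ^ ((pr - 1) / pr) = V⁻¹ ^ (1 / pr) := by
  have hpr0 : (0:ℝ) < pr := by linarith
  have he : (0:ℝ) ≤ (pr - 1) / pr := div_nonneg (by linarith) hpr0.le
  have h1 : V⁻¹ = V⁻¹ ^ (1 / pr) * V⁻¹ ^ ((pr - 1) / pr) := by
    rw [← ENNReal.rpow_add _ _ (by simp [hVt]) (by simp [hV0])]
    rw [show 1 / pr + (pr - 1) / pr = 1 by field_simp; ring, ENNReal.rpow_one]
  calc V⁻¹ * V ^ ((pr - 1) / pr)
      = V⁻¹ ^ (1 / pr) * V⁻¹ ^ ((pr - 1) / pr) * V ^ ((pr - 1) / pr) := by rw [← h1]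
    _ = V⁻¹ ^ (1 / pr) * (V⁻¹ * V) ^ ((pr - 1) / pr) := by
        rw [mul_assoc, ← ENNReal.mul_rpow_of_nonneg _ _ he]
    _ = V⁻¹ ^ (1 / pr) := by
        rw [ENNReal.inv_mul_cancel hV0 hVt, ENNReal.one_rpow, mul_one]

lemma A_linfty {p₀ : ℝ≥0∞} (hp : 1 ≤ p₀) (hpt : p₀ ≠ ⊤) {t : ℝ} (ht : 0 < t)
    {u : Sp d → ℝ} (hm : Measurable u) :
    eLpNorm (A t u) ⊤ volume ≤ (Vol d t)⁻¹ ^ (1 / p₀.toReal) * eLpNorm u p₀ volume := by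
  have hp0 : p₀ ≠ 0 := by intro h; rw [h] at hp; simp at hp
  set pr := p₀.toReal with hprdef
  have hpr1 : 1 ≤ pr := by
    rw [hprdef, ← ENNReal.toReal_one]; exact ENNReal.toReal_mono hpt hp
  have hpr0 : 0 < pr := by linarith
  set V := Vol d t with hVdef
  have hV0 : V ≠ 0 := (Vol_pos ht).ne'
  have hVt : V ≠ ⊤ := (Vol_lt_top t).ne
  set M := eLpNorm u p₀ volume with hMdef
  have key : ∀ x, (‖A t u x‖₊ : ℝ≥0∞) ≤ V⁻¹ ^ (1 / pr) * M := by
    intro x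
    have step1 : (‖A t u x‖₊ : ℝ≥0∞) ≤ V⁻¹ * ∫⁻ h, (‖u (x + h)‖₊ : ℝ≥0∞) ∂(nu d t) := by
      have := enorm_average_le (nu d t) (fun h => u (x + h)); rw [nu_univ] at this; exact this
    have step2 : ∫⁻ h, (‖u (x + h)‖₊ : ℝ≥0∞) ^ pr ∂(nu d t) ≤ M ^ pr := by
      refine le_trans (lintegral_mono' Measure.restrict_le_self le_rfl) ?_
      rw [MeasureTheory.lintegral_add_left_eq_self (fun y => (‖u y‖₊ : ℝ≥0∞) ^ pr) x]
      exact lintegral_le_of_eLpNorm_le hp0 hpt le_rfl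
    have step3 : ∫⁻ h, (‖u (x + h)‖₊ : ℝ≥0∞) ∂(nu d t) ≤ V ^ ((pr - 1) / pr) * M := by
      have hj := jensen (nu d t)
        (f := fun h => (‖u (x + h)‖₊ : ℝ≥0∞))
        ((hm.comp (measurable_const_add x)).enorm.aemeasurable) hpr1
      rw [nu_univ, ← hVdef] at hj
      have hj2 : (∫⁻ h, (‖u (x + h)‖₊ : ℝ≥0∞) ∂(nu d t)) ^ pr ≤ V ^ (pr - 1) * M ^ pr :=
        hj.trans (mul_le_mul' le_rfl step2)
      have hj3 := ENNReal.rpow_le_rpow (z := 1/pr) hj2 (by positivity)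
      rw [← ENNReal.rpow_mul, mul_one_div, div_self hpr0.ne', ENNReal.rpow_one,
        ENNReal.mul_rpow_of_nonneg _ _ (by positivity)] at hj3
      have heq : (V ^ (pr - 1)) ^ (1 / pr) * (M ^ pr) ^ (1 / pr)
          = V ^ ((pr - 1) / pr) * M := by
        rw [← ENNReal.rpow_mul V, ← ENNReal.rpow_mul M, mul_one_div, mul_one_div,
          div_self hpr0.ne', ENNReal.rpow_one]
      rwa [heq] at hj3
    calc (‖A t u x‖₊ : ℝ≥0∞) ≤ V⁻¹ * (V ^ ((pr - 1) / pr) * M) :=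
          step1.trans (mul_le_mul' le_rfl step3)
      _ = (V⁻¹ * V ^ ((pr - 1) / pr)) * M := by rw [mul_assoc]
      _ = V⁻¹ ^ (1 / pr) * M := by rw [inv_mul_rpow_aux hV0 hVt hpr1]
  rw [eLpNorm_exponent_top, eLpNormEssSup]
  exact essSup_le_of_ae_le _ (Filter.Eventually.of_forall key)

lemma interp {f : Sp d → ℝ} (hm : Measurable f) {p q : ℝ≥0∞}
    (hp : 1 ≤ p) (hpq : p ≤ q) (hq : q ≠ ⊤) :
    eLpNorm f q volume ≤
      eLpNorm f ⊤ volume ^ (1 - p.toReal / q.toReal) *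
        eLpNorm f p volume ^ (p.toReal / q.toReal) := by
  have hp0 : p ≠ 0 := by intro h; rw [h] at hp; simp at hp
  have hpt : p ≠ ⊤ := fun h => hq (top_le_iff.1 (h ▸ hpq))
  set pr := p.toReal with hprdef
  set qr := q.toReal with hqrdef
  have hpr1 : 1 ≤ pr := by
    rw [hprdef, ← ENNReal.toReal_one]; exact ENNReal.toReal_mono hpt hp
  have hpr0 : 0 < pr := by linarith
  have hq0 : q ≠ 0 := fun h => hp0 (le_antisymm (h ▸ hpq) (zero_le))
  have hqr0 : 0 < qr := ENNReal.toReal_pos hq0 hq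
  have hprqr : pr ≤ qr := ENNReal.toReal_mono hq hpq
  rcases eq_or_ne p q with rfl | hne
  · rw [div_self hpr0.ne', sub_self, ENNReal.rpow_zero, one_mul, ENNReal.rpow_one]
  have hlt : pr < qr := lt_of_le_of_ne hprqr (fun h => hne (by
    rw [← ENNReal.ofReal_toReal hpt, ← ENNReal.ofReal_toReal hq, ← hprdef, ← hqrdef, h]))
  set θ := pr / qr with hθdef
  have hθpos : 0 < θ := by positivity
  have hθlt : θ < 1 := by rw [hθdef, div_lt_one hqr0]; exact hlt
  set L := eLpNorm f ⊤ volume with hLdef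
  rcases eq_or_ne L ⊤ with hLt | hLt
  · rcases eq_or_ne (eLpNorm f p volume) 0 with hM0 | hM0
    · have hf0 : f =ᵐ[volume] 0 :=
        (eLpNorm_eq_zero_iff hm.aestronglyMeasurable hp0).1 hM0
      rw [eLpNorm_congr_ae hf0, eLpNorm_zero]
      exact zero_le
    · have : L ^ (1 - θ) * eLpNorm f p volume ^ θ = ⊤ := by
        rw [hLt, ENNReal.top_rpow_of_pos (by linarith)]
        rw [ENNReal.top_mul]
        intro h
        rcases ENNReal.rpow_eq_zero_iff.1 h with ⟨h1, _⟩ | ⟨_, h2⟩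
        · exact hM0 h1
        · linarith
      rw [this]; exact le_top
  · have hae : ∀ᵐ x ∂(volume : Measure (Sp d)), (‖f x‖₊ : ℝ≥0∞) ≤ L := by
      rw [hLdef, eLpNorm_exponent_top]
      exact ae_le_eLpNormEssSup
    have key : ∫⁻ x, (‖f x‖₊ : ℝ≥0∞) ^ qr ∂volume ≤
        L ^ (qr - pr) * ∫⁻ x, (‖f x‖₊ : ℝ≥0∞) ^ pr ∂volume := by
      rw [← lintegral_const_mul' _ _ (ENNReal.rpow_ne_top_of_nonneg (by linarith) hLt)]
      refine lintegral_mono_ae (hae.mono fun x hx => ?_)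
      calc (‖f x‖₊ : ℝ≥0∞) ^ qr
          = (‖f x‖₊ : ℝ≥0∞) ^ (qr - pr) * (‖f x‖₊ : ℝ≥0∞) ^ pr := by
            have h5 := ENNReal.rpow_add_of_nonneg (x := (‖f x‖₊ : ℝ≥0∞)) (qr - pr) pr
              (by linarith) hpr0.le
            rw [sub_add_cancel] at h5
            exact h5
        _ ≤ L ^ (qr - pr) * (‖f x‖₊ : ℝ≥0∞) ^ pr :=
            mul_le_mul' (ENNReal.rpow_le_rpow hx (by linarith)) le_rfl
    rw [eLpNorm_eq_lintegral_rpow_enorm_toReal hq0 hq, eLpNorm_eq_lintegral_rpow_enorm_toReal hp0 hpt]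
    rw [← hprdef, ← hqrdef]
    calc (∫⁻ x, (‖f x‖₊ : ℝ≥0∞) ^ qr ∂volume) ^ (1/qr)
        ≤ (L ^ (qr - pr) * ∫⁻ x, (‖f x‖₊ : ℝ≥0∞) ^ pr ∂volume) ^ (1/qr) :=
          ENNReal.rpow_le_rpow key (by positivity)
      _ = L ^ (1 - θ) * ((∫⁻ x, (‖f x‖₊ : ℝ≥0∞) ^ pr ∂volume) ^ (1/pr)) ^ θ := by
          have e1 : (qr - pr) * (1/qr) = 1 - θ := by
            rw [hθdef]; field_simp
          have e2 : (1/pr) * θ = 1/qr := by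
            rw [hθdef]; field_simp
          rw [ENNReal.mul_rpow_of_nonneg _ _ (by positivity), ← ENNReal.rpow_mul, e1,
            ← ENNReal.rpow_mul, e2]

lemma A_opBound {p₀ p₁ : ℝ≥0∞} (hp₀ : 1 ≤ p₀) (hp₀t : p₀ ≠ ⊤) (hp₀₁ : p₀ ≤ p₁)
    {t : ℝ} (ht : 0 < t) {u : Sp d → ℝ} (hm : Measurable u) :
    eLpNorm (A t u) p₁ volume ≤
      (Vol d t)⁻¹ ^ (1 / p₀.toReal - 1 / p₁.toReal) * eLpNorm u p₀ volume := by
  have hp0 : p₀ ≠ 0 := by intro h; rw [h] at hp₀; simp at hp₀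
  set pr₀ := p₀.toReal with hpr₀def
  have hpr₀1 : 1 ≤ pr₀ := by
    rw [hpr₀def, ← ENNReal.toReal_one]; exact ENNReal.toReal_mono hp₀t hp₀
  have hpr₀0 : 0 < pr₀ := by linarith
  set V := Vol d t with hVdef
  have hV0 : V ≠ 0 := (Vol_pos ht).ne'
  have hVt : V ≠ ⊤ := (Vol_lt_top t).ne
  set M := eLpNorm u p₀ volume with hMdef
  have hbase : eLpNorm (A t u) p₀ volume ≤ M := by
    refine avg_bound hp₀ hp₀t ht (g := fun x h => u (x + h))
      (hm.comp (measurable_fst.add measurable_snd)) (fun h _ => ?_)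
    rw [elp_shift hm.aestronglyMeasurable h p₀]
  rcases eq_or_ne p₁ ⊤ with rfl | hp₁t
  · simpa using A_linfty hp₀ hp₀t ht hm
  have hinfty := A_linfty hp₀ hp₀t ht hm (t := t)
  have hint := interp (A_measurable hm t) hp₀ hp₀₁ hp₁t
  set pr₁ := p₁.toReal with hpr₁def
  have hpr₁0 : 0 < pr₁ := ENNReal.toReal_pos (fun h => hp0 (le_antisymm (h ▸ hp₀₁) (zero_le))) hp₁t
  have hprle : pr₀ ≤ pr₁ := ENNReal.toReal_mono hp₁t hp₀₁
  set θ := pr₀ / pr₁ with hθdef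
  have hθ0 : 0 < θ := by positivity
  have hθ1 : θ ≤ 1 := by rw [hθdef, div_le_one hpr₁0]; exact hprle
  calc eLpNorm (A t u) p₁ volume
      ≤ eLpNorm (A t u) ⊤ volume ^ (1 - θ) * eLpNorm (A t u) p₀ volume ^ θ := hint
    _ ≤ (V⁻¹ ^ (1/pr₀) * M) ^ (1 - θ) * M ^ θ :=
        mul_le_mul' (ENNReal.rpow_le_rpow hinfty (by linarith))
          (ENNReal.rpow_le_rpow hbase hθ0.le)
    _ = V⁻¹ ^ (1/pr₀ - 1/pr₁) * M := by
        rw [ENNReal.mul_rpow_of_nonneg _ _ (by linarith), ← ENNReal.rpow_mul, mul_assoc,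
          ← ENNReal.rpow_add_of_nonneg (x := M) _ _ (by linarith) hθ0.le, sub_add_cancel,
          ENNReal.rpow_one]
        congr 2
        rw [hθdef]
        field_simp

lemma A_diff_bound {p : ℝ≥0∞} (hp : 1 ≤ p) (hpt : p ≠ ⊤) {t : ℝ} (ht : 0 < t)
    {u : Sp d → ℝ} (hm : Measurable u) (hloc : LocallyIntegrable u volume)
    {C : ℝ≥0∞}
    (hC : ∀ h : Sp d, h ≠ 0 → ‖h‖ ≤ t → eLpNorm (fun x => u (x + h) - u x) p volume ≤ C) :
    eLpNorm (fun x => A t u x - u x) p volume ≤ C := by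
  have hVr0 : (0:ℝ) < (nu d t Set.univ).toReal := by
    rw [nu_univ]
    exact ENNReal.toReal_pos (Vol_pos ht).ne' (Vol_lt_top t).ne
  have hfun : (fun x => A t u x - u x) = fun x => ⨍ h, (u (x + h) - u x) ∂(nu d t) := by
    funext x
    rw [A, average_eq, average_eq,
      integral_sub (slice_integrable hloc x t) (integrable_const _), integral_const, measureReal_def,
      smul_sub, smul_smul, inv_mul_cancel₀ hVr0.ne', one_smul]
  rw [hfun]
  refine avg_bound hp hpt ht (g := fun x h => u (x + h) - u x)
    ((hm.comp (measurable_fst.add measurable_snd)).sub (hm.comp measurable_fst)) ?_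
  intro h hh
  rcases eq_or_ne h 0 with rfl | hne
  · have : (fun x => u (x + 0) - u x) = fun _ => (0:ℝ) := by
      funext x; rw [add_zero, sub_self]
    rw [this]
    simpa using (zero_le : 0 ≤ C)
  · exact hC h hne (mem_closedBall_zero_iff.1 hh)

lemma A_apply (t : ℝ) (u : Sp d → ℝ) (x : Sp d) :
    A t u x = (Vol d t).toReal⁻¹ • ∫ h, u (x + h) ∂(nu d t) := by
  rw [A, average_eq, measureReal_def, nu_univ]

lemma A_comm {u : Sp d → ℝ} (hm : Measurable u) (hloc : LocallyIntegrable u volume)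
    {s t : ℝ} (hs : 0 < s) (ht : 0 < t) :
    A s (A t u) = A t (A s u) := by
  funext x
  have hmprod : Measurable fun q : Sp d × Sp d => u (x + q.1 + q.2) :=
    hm.comp (((measurable_const_add x).comp measurable_fst).add measurable_snd)
  have hint : Integrable (fun q : Sp d × Sp d => u (x + q.1 + q.2)) ((nu d s).prod (nu d t)) := by
    refine ⟨hmprod.aestronglyMeasurable, ?_⟩
    rw [HasFiniteIntegral, lintegral_prod _ hmprod.enorm.aemeasurable]
    set R := ∫⁻ y in closedBall x (s + t), (‖u y‖₊ : ℝ≥0∞) ∂volume with hRdef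
    have hRlt : R < ⊤ := (hloc.integrableOn_isCompact (isCompact_closedBall x (s+t))).2
    have hinner : ∀ h ∈ closedBall (0 : Sp d) s,
        ∫⁻ k, (‖u (x + h + k)‖₊ : ℝ≥0∞) ∂(nu d t) ≤ R := by
      intro h hh
      rw [lint_shift (fun y => (‖u y‖₊ : ℝ≥0∞)) (x + h) t]
      refine lintegral_mono_set (closedBall_subset_closedBall' ?_)
      have : dist (x + h) x = ‖h‖ := by simp [dist_eq_norm]
      rw [this]
      have := mem_closedBall_zero_iff.1 hh
      linarith
    calc ∫⁻ h, ∫⁻ k, (‖u (x + h + k)‖₊ : ℝ≥0∞) ∂(nu d t) ∂(nu d s)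
        ≤ R * Vol d s := nu_lintegral_le hinner
      _ < ⊤ := ENNReal.mul_lt_top hRlt (Vol_lt_top s)
  calc A s (A t u) x
      = (Vol d s).toReal⁻¹ • ∫ h, A t u (x + h) ∂(nu d s) := A_apply _ _ _
    _ = (Vol d s).toReal⁻¹ •
        ∫ h, (Vol d t).toReal⁻¹ • ∫ k, u (x + h + k) ∂(nu d t) ∂(nu d s) := by
        congr 1
        exact integral_congr_ae (Filter.Eventually.of_forall fun h => A_apply t u (x + h))
    _ = (Vol d s).toReal⁻¹ • (Vol d t).toReal⁻¹ •
        ∫ h, ∫ k, u (x + h + k) ∂(nu d t) ∂(nu d s) := by rw [integral_smul]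
    _ = (Vol d t).toReal⁻¹ • (Vol d s).toReal⁻¹ •
        ∫ k, ∫ h, u (x + h + k) ∂(nu d s) ∂(nu d t) := by
        rw [integral_integral_swap hint, smul_comm]
    _ = (Vol d t).toReal⁻¹ •
        ∫ k, (Vol d s).toReal⁻¹ • ∫ h, u (x + h + k) ∂(nu d s) ∂(nu d t) := by
        rw [integral_smul]
    _ = A t (A s u) x := by
        rw [A_apply]
        congr 1
        refine integral_congr_ae (Filter.Eventually.of_forall fun k => ?_)
        show (Vol d s).toReal⁻¹ • ∫ h, u (x + h + k) ∂(nu d s) = A s u (x + k)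
        rw [A_apply]
        congr 1
        refine integral_congr_ae (Filter.Eventually.of_forall fun h => ?_)
        show u (x + h + k) = u (x + k + h)
        rw [add_right_comm]

lemma A_tendsto {u : Sp d → ℝ} (hloc : LocallyIntegrable u volume) :
    ∀ᵐ x ∂(volume : Measure (Sp d)),
      Filter.Tendsto (fun n : ℕ => A ((2:ℝ)⁻¹ ^ n) u x) Filter.atTop (𝓝 (u x)) := by
  filter_upwards [(Besicovitch.vitaliFamily (volume : Measure (Sp d))).ae_tendsto_average hloc]
    with x hx
  have h1 : Tendsto (fun n : ℕ => (2:ℝ)⁻¹ ^ n) atTop (𝓝[>] 0) := by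
    apply tendsto_nhdsWithin_of_tendsto_nhds_of_eventually_within
    · exact tendsto_pow_atTop_nhds_zero_of_lt_one (by norm_num) (by norm_num)
    · exact Filter.Eventually.of_forall fun n => Set.mem_Ioi.2 (by positivity)
  have h2 := (Besicovitch.tendsto_filterAt (volume : Measure (Sp d)) x).comp h1
  have h3 := hx.comp h2
  refine h3.congr fun n => ?_
  exact (A_eq_setAverage _ u x).symm

lemma memLp_shift {u : Sp d → ℝ} {p : ℝ≥0∞} (hm : Measurable u) (hu : MemLp u p volume)
    (k : Sp d) : MemLp (fun x => u (x + k)) p volume := by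
  refine ⟨(hm.comp (measurable_add_const k)).aestronglyMeasurable, ?_⟩
  rw [elp_shift hu.1 k p]
  exact hu.2

lemma choose_scale {c : ℝ} (hc : 0 < c) (hc1 : c < 1) :
    ∃ n : ℕ, (2:ℝ)⁻¹ ^ (n+1) < c ∧ c ≤ (2:ℝ)⁻¹ ^ n := by
  classical
  have hex : ∃ m : ℕ, (2:ℝ)⁻¹ ^ m < c := exists_pow_lt_of_lt_one hc (by norm_num)
  have hm := Nat.find_spec hex
  have hm0 : Nat.find hex ≠ 0 := by
    intro h
    rw [h, pow_zero] at hm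
    linarith
  obtain ⟨n, hn⟩ := Nat.exists_eq_succ_of_ne_zero hm0
  refine ⟨n, by rw [← Nat.succ_eq_add_one, ← hn]; exact hm, ?_⟩
  have := Nat.find_min hex (m := n) (by omega)
  linarith [le_of_not_gt this]

lemma elp_flip (f g : Sp d → ℝ) (p : ℝ≥0∞) :
    eLpNorm (fun x => f x - g x) p volume = eLpNorm (fun x => g x - f x) p volume := by
  have h : (fun x => f x - g x) = -(fun x => g x - f x) := by funext x; simp
  rw [h, eLpNorm_neg]

lemma main_meas (d : ℕ) (p₀ p₁ : ℝ≥0∞) (hp₀ : 1 ≤ p₀) (hlt : p₀ < p₁)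
    (s₀ s₁ : ℝ) (hs₁ : 0 < s₁) (hs₀ : s₀ < 1)
    (hdiff : s₀ - (d : ℝ) / p₀.toReal = s₁ - (d : ℝ) / p₁.toReal) :
    ∃ C : ℝ≥0∞, C ≠ ⊤ ∧
      ∀ u : Sp d → ℝ, Measurable u → MemLp u p₀ volume →
        nikSeminorm d s₀ p₀ u ≠ ⊤ →
        eLpNorm u p₁ volume ≤ C * (eLpNorm u p₀ volume + nikSeminorm d s₀ p₀ u) ∧
        nikSeminorm d s₁ p₁ u ≤ C * (eLpNorm u p₀ volume + nikSeminorm d s₀ p₀ u) := by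
  have hp₀t : p₀ ≠ ⊤ := hlt.ne_top
  have hp₁1 : 1 ≤ p₁ := hp₀.trans hlt.le
  have hp₀0 : p₀ ≠ 0 := by intro h; rw [h] at hp₀; simp at hp₀
  have hpr₀1 : (1:ℝ) ≤ p₀.toReal := by
    rw [← ENNReal.toReal_one]; exact ENNReal.toReal_mono hp₀t hp₀
  have hpr₀0 : 0 < p₀.toReal := by linarith
  set δ := 1 / p₀.toReal - 1 / p₁.toReal with hδdef
  have hδpos : 0 < δ := by
    rcases eq_or_ne p₁ ⊤ with rfl | hp₁t
    · rw [hδdef]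
      simp only [ENNReal.toReal_top, div_zero, sub_zero]
      positivity
    · have h1 : p₀.toReal < p₁.toReal := ENNReal.toReal_strict_mono hp₁t hlt
      have h2 := one_div_lt_one_div_of_lt hpr₀0 h1
      rw [hδdef]; linarith
  have hdδ : (d : ℝ) * δ = s₀ - s₁ := by
    rw [hδdef, mul_sub, mul_one_div, mul_one_div]
    linarith [hdiff]
  have hs₁s₀ : s₁ ≤ s₀ := by
    have h1 : 0 ≤ (d:ℝ) * δ := mul_nonneg (Nat.cast_nonneg d) hδpos.le
    linarith
  have hs₀pos : 0 < s₀ := lt_of_lt_of_le hs₁ hs₁s₀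
  have hs₁le1 : s₁ ≤ 1 := by linarith
  -- geometric constants
  set c₀ := volume (ball (0 : Sp d) 1) with hc₀def
  have hc₀0 : c₀ ≠ 0 := (measure_ball_pos volume _ one_pos).ne'
  have hc₀t : c₀ ≠ ⊤ := measure_ball_lt_top.ne
  set c₁ := c₀⁻¹ ^ δ with hc₁def
  have hc₁t : c₁ ≠ ⊤ := ENNReal.rpow_ne_top_of_nonneg hδpos.le (by simp [hc₀0])
  have hG : ∀ r : ℝ, 0 < r → (Vol d r)⁻¹ ^ δ = ENNReal.ofReal (r ^ (s₁ - s₀)) * c₁ := by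
    intro r hr
    have hrd : (0:ℝ) < r ^ d := by positivity
    rw [Vol_eq r hr.le, ← hc₀def,
      ENNReal.mul_inv (Or.inl (by simp [hrd])) (Or.inl ENNReal.ofReal_ne_top),
      ENNReal.mul_rpow_of_nonneg _ _ hδpos.le, hc₁def]
    congr 1
    rw [← ENNReal.ofReal_inv_of_pos hrd, ENNReal.ofReal_rpow_of_pos (by positivity)]
    congr 1
    rw [← Real.rpow_natCast r d, ← Real.rpow_neg hr.le, ← Real.rpow_mul hr.le]
    congr 1
    have : (d:ℝ) * δ = s₀ - s₁ := hdδ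
    nlinarith [this]
  set ρ := ENNReal.ofReal ((2:ℝ)⁻¹ ^ s₁) with hρdef
  have hρ1 : ρ < 1 := by
    rw [hρdef]
    exact ENNReal.ofReal_lt_one.2 (Real.rpow_lt_one (by norm_num) (by norm_num) hs₁)
  set Kgeo := (1 - ρ)⁻¹ with hKgeodef
  have hKgeot : Kgeo ≠ ⊤ := by
    rw [hKgeodef, Ne, ENNReal.inv_eq_top]
    exact (tsub_pos_of_lt hρ1).ne'
  set K₁ := 4 * c₁ with hK₁def
  have hK₁t : K₁ ≠ ⊤ := ENNReal.mul_ne_top (by norm_num) hc₁t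
  set K₂ := (Vol d 1)⁻¹ ^ δ with hK₂def
  have hK₂t : K₂ ≠ ⊤ :=
    ENNReal.rpow_ne_top_of_nonneg hδpos.le (by simp [(Vol_pos one_pos).ne'])
  set K₃ := K₂ + K₁ * Kgeo with hK₃def
  have hK₃t : K₃ ≠ ⊤ := ENNReal.add_ne_top.2 ⟨hK₂t, ENNReal.mul_ne_top hK₁t hKgeot⟩
  set K₄ := c₁ + 4 * (K₁ * Kgeo) with hK₄def
  have hK₄t : K₄ ≠ ⊤ := ENNReal.add_ne_top.2
    ⟨hc₁t, ENNReal.mul_ne_top (by norm_num) (ENNReal.mul_ne_top hK₁t hKgeot)⟩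
  refine ⟨K₃ + (2 * K₃ + K₄), ENNReal.add_ne_top.2 ⟨hK₃t, ENNReal.add_ne_top.2
    ⟨ENNReal.mul_ne_top (by norm_num) hK₃t, hK₄t⟩⟩, fun u hm hu hNt => ?_⟩
  set M := eLpNorm u p₀ volume with hMdef
  set N := nikSeminorm d s₀ p₀ u with hNdef
  have hloc : LocallyIntegrable u volume := hu.locallyIntegrable hp₀
  have hNle : ∀ k : Sp d, k ≠ 0 →
      eLpNorm (fun x => u (x + k) - u x) p₀ volume ≤ N * ENNReal.ofReal (‖k‖ ^ s₀) := by
    intro k hk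
    have hb0 : ENNReal.ofReal (‖k‖ ^ s₀) ≠ 0 := by
      rw [Ne, ENNReal.ofReal_eq_zero, not_le]
      exact Real.rpow_pos_of_pos (norm_pos_iff.2 hk) s₀
    have h1 : eLpNorm (fun x => u (x + k) - u x) p₀ volume / ENNReal.ofReal (‖k‖ ^ s₀) ≤ N :=
      le_iSup_of_le k (le_iSup_of_le hk le_rfl)
    rwa [ENNReal.div_le_iff hb0 ENNReal.ofReal_ne_top] at h1
  set tn : ℕ → ℝ := fun n => (2:ℝ)⁻¹ ^ n with htndef
  have htpos : ∀ n, 0 < tn n := fun n => by positivity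
  have htsucc : ∀ n, tn (n+1) = tn n * 2⁻¹ := fun n => pow_succ _ _
  have htle : ∀ n, tn (n+1) ≤ tn n := by
    intro n
    rw [htsucc n]
    nlinarith [htpos n]
  set v : ℕ → Sp d → ℝ := fun n => A (tn n) u with hvdef
  have hvm : ∀ n, Measurable (v n) := fun n => A_measurable hm _
  have hopB : ∀ (t : ℝ), 0 < t → ∀ (w : Sp d → ℝ), Measurable w →
      eLpNorm (A t w) p₁ volume ≤ (Vol d t)⁻¹ ^ δ * eLpNorm w p₀ volume := by
    intro t ht w hw
    have := A_opBound hp₀ hp₀t hlt.le ht hw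
    rwa [← hδdef] at this
  have hvMem : ∀ n, MemLp (v n) p₀ volume := by
    intro n
    refine ⟨(hvm n).aestronglyMeasurable, ?_⟩
    have h2 := A_opBound hp₀ hp₀t le_rfl (htpos n) hm
    rw [sub_self, ENNReal.rpow_zero, one_mul] at h2
    exact lt_of_le_of_lt h2 hu.2
  have hvloc : ∀ n, LocallyIntegrable (v n) volume := fun n => (hvMem n).locallyIntegrable hp₀
  have hdiffb : ∀ n, eLpNorm (fun x => v n x - u x) p₀ volume ≤
      N * ENNReal.ofReal ((tn n) ^ s₀) := by
    intro n
    refine A_diff_bound hp₀ hp₀t (htpos n) hm hloc fun h hne hle => ?_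
    refine (hNle h hne).trans (mul_le_mul' le_rfl (ENNReal.ofReal_le_ofReal ?_))
    exact Real.rpow_le_rpow (norm_nonneg _) hle hs₀pos.le
  have hofpow : ∀ n : ℕ, ENNReal.ofReal ((tn n) ^ s₁) = ρ ^ n := by
    intro n
    rw [hρdef, ← ENNReal.ofReal_pow (by positivity)]
    congr 1
    rw [← Real.rpow_natCast ((2:ℝ)⁻¹ ^ s₁) n, ← Real.rpow_mul (by norm_num), mul_comm,
      Real.rpow_mul (by norm_num), Real.rpow_natCast]
  -- step estimate
  have hstep : ∀ n, eLpNorm (fun x => v (n+1) x - v n x) p₁ volume ≤ K₁ * N * ρ ^ n := by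
    intro n
    have hcomm : A (tn (n+1)) (v n) = A (tn n) (v (n+1)) :=
      A_comm hm hloc (htpos (n+1)) (htpos n)
    have h1 := A_sub (u := u) (v := v n) hloc (hvloc n) (tn (n+1))
    rw [hcomm] at h1
    have h2 := A_sub (u := v (n+1)) (v := u) (hvloc (n+1)) hloc (tn n)
    have hid : (fun x => v (n+1) x - v n x) = fun x =>
        A (tn (n+1)) (fun y => u y - v n y) x + A (tn n) (fun y => v (n+1) y - u y) x := by
      funext x
      have e1 := congrFun h1 x
      have e2 := congrFun h2 x
      rw [e1, e2]
      ring
    have hb1 : eLpNorm (A (tn (n+1)) (fun y => u y - v n y)) p₁ volume ≤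
        (Vol d (tn (n+1)))⁻¹ ^ δ * (N * ENNReal.ofReal ((tn n) ^ s₀)) := by
      refine (hopB _ (htpos (n+1)) _ (hm.sub (hvm n))).trans (mul_le_mul' le_rfl ?_)
      rw [show u - v n = fun y => u y - v n y from rfl, elp_flip]
      exact hdiffb n
    have hb2 : eLpNorm (A (tn n) (fun y => v (n+1) y - u y)) p₁ volume ≤
        (Vol d (tn (n+1)))⁻¹ ^ δ * (N * ENNReal.ofReal ((tn n) ^ s₀)) := by
      refine (hopB _ (htpos n) _ ((hvm (n+1)).sub hm)).trans (mul_le_mul' ?_ ?_)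
      · exact ENNReal.rpow_le_rpow (ENNReal.inv_le_inv.2 (Vol_mono (htle n))) hδpos.le
      · refine (hdiffb (n+1)).trans (mul_le_mul' le_rfl (ENNReal.ofReal_le_ofReal ?_))
        exact Real.rpow_le_rpow (htpos (n+1)).le (htle n) hs₀pos.le
    have htri : eLpNorm (fun x => v (n+1) x - v n x) p₁ volume ≤
        2 * ((Vol d (tn (n+1)))⁻¹ ^ δ) * (N * ENNReal.ofReal ((tn n) ^ s₀)) := by
      rw [hid]
      refine (eLpNorm_add_le ((A_measurable (hm.sub (hvm n)) _).aestronglyMeasurable)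
        ((A_measurable ((hvm (n+1)).sub hm) _).aestronglyMeasurable) hp₁1).trans ?_
      calc eLpNorm (A (tn (n+1)) (fun y => u y - v n y)) p₁ volume +
            eLpNorm (A (tn n) (fun y => v (n+1) y - u y)) p₁ volume
          ≤ (Vol d (tn (n+1)))⁻¹ ^ δ * (N * ENNReal.ofReal ((tn n) ^ s₀)) +
            (Vol d (tn (n+1)))⁻¹ ^ δ * (N * ENNReal.ofReal ((tn n) ^ s₀)) := add_le_add hb1 hb2
        _ = 2 * ((Vol d (tn (n+1)))⁻¹ ^ δ) * (N * ENNReal.ofReal ((tn n) ^ s₀)) := by ring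
    refine htri.trans ?_
    rw [hG _ (htpos (n+1))]
    -- bound ofReal (tn (n+1) ^ (s₁ - s₀)) ≤ 2 * ofReal (tn n ^ (s₁ - s₀))
    have hreal1 : (tn (n+1)) ^ (s₁ - s₀) ≤ (tn n) ^ (s₁ - s₀) * 2 := by
      rw [htsucc n, Real.mul_rpow (htpos n).le (by norm_num),
        Real.inv_rpow (by norm_num : (0:ℝ) ≤ 2), ← Real.rpow_neg (by norm_num : (0:ℝ) ≤ 2)]
      have h2s : (2:ℝ) ^ (-(s₁ - s₀)) ≤ 2 := by
        have := Real.rpow_le_rpow_of_exponent_le (by norm_num : (1:ℝ) ≤ 2)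
          (by linarith : -(s₁ - s₀) ≤ 1)
        rwa [Real.rpow_one] at this
      have hpos : (0:ℝ) < (tn n) ^ (s₁ - s₀) := Real.rpow_pos_of_pos (htpos n) _
      nlinarith
    have hmul : (tn n) ^ (s₁ - s₀) * (tn n) ^ s₀ = (tn n) ^ s₁ := by
      rw [← Real.rpow_add (htpos n), sub_add_cancel]
    calc 2 * (ENNReal.ofReal ((tn (n+1)) ^ (s₁ - s₀)) * c₁) * (N * ENNReal.ofReal ((tn n) ^ s₀))
        ≤ 2 * (ENNReal.ofReal ((tn n) ^ (s₁ - s₀) * 2) * c₁) * (N * ENNReal.ofReal ((tn n) ^ s₀)) := by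
          gcongr
      _ = 4 * c₁ * N * (ENNReal.ofReal ((tn n) ^ (s₁ - s₀)) * ENNReal.ofReal ((tn n) ^ s₀)) := by
          rw [ENNReal.ofReal_mul (by positivity), ENNReal.ofReal_ofNat]
          ring
      _ = K₁ * N * ρ ^ n := by
          rw [← ENNReal.ofReal_mul (by positivity), hmul, hofpow n, hK₁def]
  -- telescoping
  have htel : ∀ n m : ℕ, eLpNorm (fun x => v (n+m) x - v n x) p₁ volume ≤
      ∑ j ∈ Finset.range m, K₁ * N * ρ ^ (n+j) := by
    intro n m
    induction m with
    | zero =>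
        simp only [Nat.add_zero, sub_self, Finset.range_zero, Finset.sum_empty]
        rw [show (fun _ : Sp d => (0:ℝ)) = (0 : Sp d → ℝ) from rfl, eLpNorm_zero]
    | succ m ih =>
        have hsplit : (fun x => v (n+(m+1)) x - v n x) = fun x =>
            (v (n+(m+1)) x - v (n+m) x) + (v (n+m) x - v n x) := by funext x; ring
        rw [hsplit, Finset.sum_range_succ]
        refine (eLpNorm_add_le ((hvm _).sub (hvm _)).aestronglyMeasurable
          ((hvm _).sub (hvm _)).aestronglyMeasurable hp₁1).trans ?_
        rw [add_comm (∑ j ∈ Finset.range m, K₁ * N * ρ ^ (n+j))]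
        exact add_le_add (by rw [show n + (m+1) = (n+m)+1 by ring]; exact hstep (n+m)) ih
  have hgeom : ∀ n m : ℕ, (∑ j ∈ Finset.range m, K₁ * N * ρ ^ (n+j)) ≤ K₁ * N * ρ ^ n * Kgeo := by
    intro n m
    have h1 : ∀ j, K₁ * N * ρ ^ (n+j) = K₁ * N * ρ ^ n * ρ ^ j := by
      intro j; rw [pow_add]; ring
    simp only [h1]
    rw [← Finset.mul_sum]
    refine mul_le_mul' le_rfl ?_
    rw [hKgeodef, ← ENNReal.tsum_geometric ρ]
    exact ENNReal.sum_le_tsum _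
  -- tail bound
  have htail : ∀ n, eLpNorm (fun x => u x - v n x) p₁ volume ≤ K₁ * N * ρ ^ n * Kgeo := by
    intro n
    have hlim : ∀ᵐ x ∂(volume : Measure (Sp d)),
        Filter.Tendsto (fun m : ℕ => v (n+m) x - v n x) Filter.atTop (𝓝 (u x - v n x)) := by
      filter_upwards [A_tendsto hloc] with x hx
      have h1 : Filter.Tendsto (fun m : ℕ => v (n+m) x) Filter.atTop (𝓝 (u x)) := by
        have h2 := hx.comp (tendsto_add_atTop_nat n)
        refine h2.congr fun m => ?_
        show A (tn (m+n)) u x = v (n+m) x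
        rw [hvdef]
        simp only
        rw [add_comm m n]
      exact h1.sub_const (v n x)
    have hfatou := MeasureTheory.Lp.eLpNorm_lim_le_liminf_eLpNorm (p := p₁) (μ := volume)
      (f := fun m : ℕ => fun x => v (n+m) x - v n x)
      (fun m => ((hvm (n+m)).sub (hvm n)).aestronglyMeasurable)
      (fun x => u x - v n x) hlim
    refine hfatou.trans ?_
    have hb : ∀ m : ℕ, eLpNorm (fun x => v (n+m) x - v n x) p₁ volume ≤ K₁ * N * ρ ^ n * Kgeo :=
      fun m => (htel n m).trans (hgeom n m)
    refine le_trans (Filter.liminf_le_liminf (Filter.Eventually.of_forall hb)) ?_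
    rw [Filter.liminf_const]
  -- L^{p₁} bound
  have hv0 : eLpNorm (v 0) p₁ volume ≤ K₂ * M := by
    have h1 := hopB (tn 0) (htpos 0) u hm
    rw [show tn 0 = (1:ℝ) from pow_zero _] at h1
    rwa [← hK₂def, ← hMdef] at h1
  have hnorm : eLpNorm u p₁ volume ≤ K₃ * (M + N) := by
    have hu_eq : u = fun x => (u x - v 0 x) + v 0 x := by funext x; ring
    have h1 : eLpNorm u p₁ volume ≤
        eLpNorm (fun x => u x - v 0 x) p₁ volume + eLpNorm (v 0) p₁ volume := by
      conv_lhs => rw [hu_eq]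
      exact eLpNorm_add_le (hm.sub (hvm 0)).aestronglyMeasurable
        (hvm 0).aestronglyMeasurable hp₁1
    have h2 : eLpNorm (fun x => u x - v 0 x) p₁ volume ≤ K₁ * N * Kgeo := by
      have := htail 0
      rwa [pow_zero, mul_one] at this
    calc eLpNorm u p₁ volume ≤ (K₁ * N * Kgeo) + K₂ * M := by
          refine h1.trans (add_le_add h2 hv0)
      _ ≤ (K₁ * Kgeo) * (M + N) + K₂ * (M + N) := by
          refine add_le_add ?_ (mul_le_mul' le_rfl le_self_add)
          calc K₁ * N * Kgeo = (K₁ * Kgeo) * N := by ring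
            _ ≤ (K₁ * Kgeo) * (M + N) := mul_le_mul' le_rfl le_add_self
      _ = K₃ * (M + N) := by rw [hK₃def]; ring
  -- seminorm bound
  have hsemi : ∀ k : Sp d, k ≠ 0 → eLpNorm (fun x => u (x + k) - u x) p₁ volume ≤
      (2 * K₃ + K₄) * (M + N) * ENNReal.ofReal (‖k‖ ^ s₁) := by
    intro k hk
    have hk0 : 0 < ‖k‖ := norm_pos_iff.2 hk
    rcases le_or_gt 1 ‖k‖ with hk1 | hk1
    · -- large k
      have h1 : eLpNorm (fun x => u (x + k) - u x) p₁ volume ≤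
          eLpNorm (fun x => u (x + k)) p₁ volume + eLpNorm u p₁ volume :=
        eLpNorm_sub_le (hm.comp (measurable_add_const k)).aestronglyMeasurable
          hm.aestronglyMeasurable hp₁1
      rw [elp_shift hm.aestronglyMeasurable k p₁] at h1
      have h2 : eLpNorm (fun x => u (x + k) - u x) p₁ volume ≤ 2 * (K₃ * (M + N)) := by
        refine h1.trans ?_
        rw [two_mul]
        exact add_le_add hnorm hnorm
      refine h2.trans ?_
      have hone : (1:ℝ≥0∞) ≤ ENNReal.ofReal (‖k‖ ^ s₁) := by
        rw [ENNReal.one_le_ofReal]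
        calc (1:ℝ) = 1 ^ s₁ := (Real.one_rpow s₁).symm
          _ ≤ ‖k‖ ^ s₁ := Real.rpow_le_rpow (by norm_num) hk1 hs₁.le
      calc 2 * (K₃ * (M + N)) = 2 * K₃ * (M + N) := by ring
        _ ≤ (2 * K₃ + K₄) * (M + N) := mul_le_mul' le_self_add le_rfl
        _ ≤ (2 * K₃ + K₄) * (M + N) * ENNReal.ofReal (‖k‖ ^ s₁) :=
            le_mul_of_one_le_right' hone
    · -- small k
      obtain ⟨n, hn1, hn2⟩ := choose_scale hk0 hk1
      have hkt : ‖k‖ ≤ tn n := hn2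
      have htk : tn n ≤ 2 * ‖k‖ := by
        have : tn n = 2 * tn (n+1) := by
          rw [htsucc n]; ring
        rw [this]
        have hn1' : tn (n+1) < ‖k‖ := hn1
        show 2 * tn (n+1) ≤ 2 * ‖k‖
        nlinarith [hn1']
      -- term B : the averaged part
      have hB : (fun x => v n (x + k) - v n x) = A (tn n) (fun y => u (y + k) - u y) := by
        have hsub := A_sub (u := fun y => u (y + k)) (v := u)
          ((memLp_shift hm hu k).locallyIntegrable hp₀) hloc (tn n)
        rw [hsub, ← A_shift]
      have hBb : eLpNorm (fun x => v n (x + k) - v n x) p₁ volume ≤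
          c₁ * N * ENNReal.ofReal (‖k‖ ^ s₁) := by
        rw [hB]
        refine (hopB _ (htpos n) _ ((hm.comp (measurable_add_const k)).sub hm)).trans ?_
        rw [hG _ (htpos n)]
        refine (mul_le_mul' le_rfl (hNle k hk)).trans ?_
        have hr1 : (tn n) ^ (s₁ - s₀) ≤ ‖k‖ ^ (s₁ - s₀) :=
          Real.rpow_le_rpow_of_nonpos hk0 hkt (by linarith)
        calc ENNReal.ofReal ((tn n) ^ (s₁ - s₀)) * c₁ * (N * ENNReal.ofReal (‖k‖ ^ s₀))
            ≤ ENNReal.ofReal (‖k‖ ^ (s₁ - s₀)) * c₁ * (N * ENNReal.ofReal (‖k‖ ^ s₀)) := by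
              gcongr
          _ = c₁ * N * (ENNReal.ofReal (‖k‖ ^ (s₁ - s₀)) * ENNReal.ofReal (‖k‖ ^ s₀)) := by ring
          _ = c₁ * N * ENNReal.ofReal (‖k‖ ^ s₁) := by
              rw [← ENNReal.ofReal_mul (by positivity), ← Real.rpow_add hk0, sub_add_cancel]
      -- term A : the remainder part
      have hρk : (ρ:ℝ≥0∞) ^ n ≤ 2 * ENNReal.ofReal (‖k‖ ^ s₁) := by
        rw [← hofpow n]
        have hr2 : (tn n) ^ s₁ ≤ 2 * ‖k‖ ^ s₁ := by
          calc (tn n) ^ s₁ ≤ (2 * ‖k‖) ^ s₁ :=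
                Real.rpow_le_rpow (htpos n).le htk hs₁.le
            _ = 2 ^ s₁ * ‖k‖ ^ s₁ := Real.mul_rpow (by norm_num) hk0.le
            _ ≤ 2 * ‖k‖ ^ s₁ := by
                have h2s : (2:ℝ) ^ s₁ ≤ 2 := by
                  have := Real.rpow_le_rpow_of_exponent_le (by norm_num : (1:ℝ) ≤ 2) hs₁le1
                  rwa [Real.rpow_one] at this
                have : (0:ℝ) < ‖k‖ ^ s₁ := Real.rpow_pos_of_pos hk0 _
                nlinarith
        calc ENNReal.ofReal ((tn n) ^ s₁) ≤ ENNReal.ofReal (2 * ‖k‖ ^ s₁) :=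
              ENNReal.ofReal_le_ofReal hr2
          _ = 2 * ENNReal.ofReal (‖k‖ ^ s₁) := by
              rw [ENNReal.ofReal_mul (by norm_num), ENNReal.ofReal_ofNat]
      have hAb : eLpNorm (fun x => (u (x + k) - v n (x + k)) - (u x - v n x)) p₁ volume ≤
          4 * (K₁ * Kgeo) * N * ENNReal.ofReal (‖k‖ ^ s₁) := by
        have hshift : eLpNorm (fun x => u (x + k) - v n (x + k)) p₁ volume =
            eLpNorm (fun x => u x - v n x) p₁ volume := by
          have := elp_shift (u := fun y => u y - v n y)
            ((hm.sub (hvm n)).aestronglyMeasurable) k p₁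
          exact this
        have h1 : eLpNorm (fun x => (u (x + k) - v n (x + k)) - (u x - v n x)) p₁ volume ≤
            eLpNorm (fun x => u (x + k) - v n (x + k)) p₁ volume +
              eLpNorm (fun x => u x - v n x) p₁ volume :=
          eLpNorm_sub_le ((hm.comp (measurable_add_const k)).sub
            ((hvm n).comp (measurable_add_const k))).aestronglyMeasurable
            ((hm.sub (hvm n))).aestronglyMeasurable hp₁1
        rw [hshift] at h1
        refine h1.trans ?_
        have h2 : eLpNorm (fun x => u x - v n x) p₁ volume +
            eLpNorm (fun x => u x - v n x) p₁ volume ≤ 2 * (K₁ * N * ρ ^ n * Kgeo) := by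
          rw [two_mul]
          exact add_le_add (htail n) (htail n)
        refine h2.trans ?_
        calc 2 * (K₁ * N * ρ ^ n * Kgeo) = 2 * (K₁ * Kgeo) * N * ρ ^ n := by ring
          _ ≤ 2 * (K₁ * Kgeo) * N * (2 * ENNReal.ofReal (‖k‖ ^ s₁)) :=
              mul_le_mul' le_rfl hρk
          _ = 4 * (K₁ * Kgeo) * N * ENNReal.ofReal (‖k‖ ^ s₁) := by ring
      -- combine
      have hdec : (fun x => u (x + k) - u x) = fun x =>
          ((u (x + k) - v n (x + k)) - (u x - v n x)) + (v n (x + k) - v n x) := by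
        funext x; ring
      rw [hdec]
      refine (eLpNorm_add_le (((hm.comp (measurable_add_const k)).sub
        ((hvm n).comp (measurable_add_const k))).sub (hm.sub (hvm n))).aestronglyMeasurable
        (((hvm n).comp (measurable_add_const k)).sub (hvm n)).aestronglyMeasurable
        hp₁1).trans ?_
      calc eLpNorm (fun x => (u (x + k) - v n (x + k)) - (u x - v n x)) p₁ volume +
            eLpNorm (fun x => v n (x + k) - v n x) p₁ volume
          ≤ 4 * (K₁ * Kgeo) * N * ENNReal.ofReal (‖k‖ ^ s₁) +
            c₁ * N * ENNReal.ofReal (‖k‖ ^ s₁) := add_le_add hAb hBb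
        _ = (c₁ + 4 * (K₁ * Kgeo)) * N * ENNReal.ofReal (‖k‖ ^ s₁) := by ring
        _ ≤ (2 * K₃ + K₄) * (M + N) * ENNReal.ofReal (‖k‖ ^ s₁) := by
            rw [← hK₄def]
            exact mul_le_mul' (mul_le_mul' le_add_self le_add_self) le_rfl
  have hnik : nikSeminorm d s₁ p₁ u ≤ (2 * K₃ + K₄) * (M + N) := by
    rw [nikSeminorm]
    refine iSup_le fun k => iSup_le fun hk => ?_
    exact ENNReal.div_le_of_le_mul (hsemi k hk)
  constructor
  · exact hnorm.trans (mul_le_mul' le_self_add le_rfl)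
  · exact hnik.trans (mul_le_mul' le_add_self le_rfl)

lemma nik_congr (d : ℕ) (γ : ℝ) (p : ℝ≥0∞) {u w : Sp d → ℝ}
    (hae : u =ᶠ[MeasureTheory.ae volume] w) :
    nikSeminorm d γ p u = nikSeminorm d γ p w := by
  rw [nikSeminorm, nikSeminorm]
  refine iSup_congr fun k => iSup_congr fun _ => ?_
  congr 1
  refine eLpNorm_congr_ae ?_
  have hsh : (fun x : Sp d => u (x + k)) =ᶠ[MeasureTheory.ae volume] fun x => w (x + k) :=
    (measurePreserving_add_right volume k).quasiMeasurePreserving.ae_eq_comp hae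
  exact hsh.sub hae

end NikAux

open NikAux in
/-- (Nikolskii embedding, same differential dimension.)
If `1 ≤ p₀ ≤ p₁ ≤ ∞`, `0 < s₁ ≤ s₀ < 1` and `s₀ − d/p₀ = s₁ − d/p₁`, then
`N^{s₀}_{p₀}(ℝ^d) ↪ N^{s₁}_{p₁}(ℝ^d)` with a norm bound. (Here `d/∞ = 0`; note that
`p.toReal = 0` for `p = ∞`, and real division by `0` yields `0`.) -/
theorem nikolskii_embedding
    (d : ℕ) (hd : 1 ≤ d) (p₀ p₁ : ℝ≥0∞) (hp₀ : 1 ≤ p₀) (hp₀₁ : p₀ ≤ p₁)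
    (s₀ s₁ : ℝ) (hs₁ : 0 < s₁) (hs₁₀ : s₁ ≤ s₀) (hs₀ : s₀ < 1)
    (hdiff : s₀ - (d : ℝ) / p₀.toReal = s₁ - (d : ℝ) / p₁.toReal) :
    ∃ C : ℝ, 0 < C ∧
      ∀ u : EuclideanSpace ℝ (Fin d) → ℝ,
        MemLp u p₀ volume →
        nikSeminorm d s₀ p₀ u ≠ ⊤ →
        MemLp u p₁ volume ∧
        nikSeminorm d s₁ p₁ u ≠ ⊤ ∧
        eLpNorm u p₁ volume + nikSeminorm d s₁ p₁ u ≤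
          ENNReal.ofReal C * (eLpNorm u p₀ volume + nikSeminorm d s₀ p₀ u) := by
  rcases eq_or_lt_of_le hp₀₁ with heq | hlt
  · -- trivial case p₀ = p₁, hence s₀ = s₁
    subst heq
    have hss : s₀ = s₁ := by linarith [hdiff]
    subst hss
    refine ⟨1, one_pos, fun u hu hN => ⟨hu, hN, ?_⟩⟩
    rw [ENNReal.ofReal_one, one_mul]
  · obtain ⟨C, hCt, hC⟩ := main_meas d p₀ p₁ hp₀ hlt s₀ s₁ hs₁ hs₀ hdiff
    refine ⟨2 * C.toReal + 1, by positivity, fun u hu hNt => ?_⟩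
    set w := hu.1.mk u with hwdef
    have hae : u =ᶠ[MeasureTheory.ae volume] w := hu.1.ae_eq_mk
    have hwm : Measurable w := hu.1.stronglyMeasurable_mk.measurable
    have hwu : MemLp w p₀ volume := (memLp_congr_ae hae).1 hu
    have hnik0 : nikSeminorm d s₀ p₀ u = nikSeminorm d s₀ p₀ w := nik_congr d s₀ p₀ hae
    have hnik1 : nikSeminorm d s₁ p₁ u = nikSeminorm d s₁ p₁ w := nik_congr d s₁ p₁ hae
    have help0 : eLpNorm u p₀ volume = eLpNorm w p₀ volume := eLpNorm_congr_ae hae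
    have help1 : eLpNorm u p₁ volume = eLpNorm w p₁ volume := eLpNorm_congr_ae hae
    have hwNt : nikSeminorm d s₀ p₀ w ≠ ⊤ := by rw [← hnik0]; exact hNt
    obtain ⟨h1, h2⟩ := hC w hwm hwu hwNt
    set T := C * (eLpNorm w p₀ volume + nikSeminorm d s₀ p₀ w) with hTdef
    have hTt : T ≠ ⊤ :=
      ENNReal.mul_ne_top hCt (ENNReal.add_ne_top.2 ⟨hwu.2.ne, hwNt⟩)
    refine ⟨⟨hu.1, ?_⟩, ?_, ?_⟩
    · rw [help1]
      exact lt_of_le_of_lt h1 (lt_top_iff_ne_top.2 hTt)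
    · rw [hnik1]
      exact ne_top_of_le_ne_top hTt h2
    · rw [help1, hnik1, help0, hnik0]
      calc eLpNorm w p₁ volume + nikSeminorm d s₁ p₁ w ≤ T + T := add_le_add h1 h2
        _ = (2 * C) * (eLpNorm w p₀ volume + nikSeminorm d s₀ p₀ w) := by
            rw [hTdef]; ring
        _ ≤ ENNReal.ofReal (2 * C.toReal + 1) *
            (eLpNorm w p₀ volume + nikSeminorm d s₀ p₀ w) := by
            refine mul_le_mul' ?_ le_rfl
            calc (2:ℝ≥0∞) * C = 2 * ENNReal.ofReal C.toReal := by rw [ENNReal.ofReal_toReal hCt]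
              _ = ENNReal.ofReal (2 * C.toReal) := by
                  rw [ENNReal.ofReal_mul (by norm_num), ENNReal.ofReal_ofNat]
              _ ≤ ENNReal.ofReal (2 * C.toReal + 1) :=
                  ENNReal.ofReal_le_ofReal (by linarith)
end

section
/- Let d ≥ 1, 1 ≤ p₀ ≤ p₂ ≤ ∞, 0 < s₀ < 1, and suppose s₀ − d/p₀ > − d/p₂ (with the convention d/∞ = 0). There is a constant C depending only on d, p₀, p₂, s₀ such that every u ∈ L^{p₀}(ℝ^d) with finite Nikolskii seminorm [u]_{s₀,p₀} belongs to L^{p₂}(ℝ^d) and satisfies ‖u‖_{L^{p₂}(ℝ^d)} ≤ C · ( ‖u‖_{L^{p₀}(ℝ^d)} + [u]_{s₀,p₀} ). -/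
open MeasureTheory
open scoped ENNReal

open Metric Filter Set
open scoped Topology

lemma eLpNorm_eq_lintegral_rpow_nnnorm {α : Type*} [MeasurableSpace α] {μ : Measure α}
    {p : ℝ≥0∞} (hp0 : p ≠ 0) (hpt : p ≠ ⊤) {f : α → ℝ} :
    eLpNorm f p μ = (∫⁻ x, (‖f x‖₊ : ℝ≥0∞) ^ p.toReal ∂μ) ^ (1 / p.toReal) :=
  eLpNorm_eq_lintegral_rpow_enorm_toReal hp0 hpt

namespace NikAux

lemma le_rpow_inv {a b : ℝ≥0∞} {q : ℝ} (hq0 : 0 < q) (h : a ^ q ≤ b) : a ≤ b ^ (1/q) := by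
  have := ENNReal.rpow_le_rpow h (by positivity : (0:ℝ) ≤ 1/q)
  rwa [← ENNReal.rpow_mul, mul_one_div, div_self hq0.ne', ENNReal.rpow_one] at this

lemma rpow_rpow_inv {a : ℝ≥0∞} {q : ℝ} (hq0 : 0 < q) : (a ^ q) ^ (1/q) = a := by
  rw [← ENNReal.rpow_mul, mul_one_div, div_self hq0.ne', ENNReal.rpow_one]

lemma rpow_inv_rpow {a : ℝ≥0∞} {q : ℝ} (hq0 : 0 < q) : (a ^ (1/q)) ^ q = a := by
  rw [← ENNReal.rpow_mul, one_div_mul_cancel hq0.ne', ENNReal.rpow_one]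

lemma jensen_prob {ι : Type*} [MeasurableSpace ι] (ν : Measure ι) [IsProbabilityMeasure ν]
    {f : ι → ℝ≥0∞} (hf : AEMeasurable f ν) {q : ℝ} (hq : 1 ≤ q) :
    (∫⁻ i, f i ∂ν) ^ q ≤ ∫⁻ i, f i ^ q ∂ν := by
  rcases eq_or_lt_of_le hq with h1 | h1
  · simp [← h1]
  · have hpq : q.HolderConjugate (q / (q - 1)) := Real.HolderConjugate.conjExponent h1
    have h := ENNReal.lintegral_mul_le_Lp_mul_Lq ν hpq hf (aemeasurable_const (b := (1:ℝ≥0∞)))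
    simp only [Pi.mul_apply, mul_one, ENNReal.one_rpow, lintegral_const, measure_univ,
      ENNReal.rpow_one, one_mul] at h
    calc (∫⁻ i, f i ∂ν) ^ q ≤ ((∫⁻ i, f i ^ q ∂ν) ^ (1/q)) ^ q := by
          refine ENNReal.rpow_le_rpow ?_ (by positivity)
          simpa using h
      _ = ∫⁻ i, f i ^ q ∂ν := by
          rw [← ENNReal.rpow_mul, one_div_mul_cancel (by positivity), ENNReal.rpow_one]

lemma jensen_avg {ι : Type*} [MeasurableSpace ι] (ν : Measure ι)
    (hν0 : ν univ ≠ 0) (hνt : ν univ ≠ ⊤) {f : ι → ℝ≥0∞} (hf : AEMeasurable f ν)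
    {q : ℝ} (hq : 1 ≤ q) :
    ((ν univ)⁻¹ * ∫⁻ i, f i ∂ν) ^ q ≤ (ν univ)⁻¹ * ∫⁻ i, f i ^ q ∂ν := by
  set P := (ν univ)⁻¹ • ν with hP
  haveI : IsProbabilityMeasure P := ⟨by
    rw [hP, Measure.smul_apply, smul_eq_mul, ENNReal.inv_mul_cancel hν0 hνt]⟩
  have hfP : AEMeasurable f P := hf.smul_measure _
  have := jensen_prob P hfP hq
  simpa [hP, lintegral_smul_measure] using this

lemma lint_le_of_eLpNorm_le {α : Type*} [MeasurableSpace α] {μ : Measure α}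
    {p : ℝ≥0∞} (hp0 : p ≠ 0) (hpt : p ≠ ⊤) {f : α → ℝ} {B : ℝ≥0∞}
    (h : eLpNorm f p μ ≤ B) :
    ∫⁻ x, (‖f x‖₊ : ℝ≥0∞) ^ p.toReal ∂μ ≤ B ^ p.toReal := by
  have hq0 : 0 < p.toReal := ENNReal.toReal_pos hp0 hpt
  rw [eLpNorm_eq_lintegral_rpow_nnnorm hp0 hpt] at h
  have := ENNReal.rpow_le_rpow h hq0.le
  rwa [← ENNReal.rpow_mul, one_div_mul_cancel hq0.ne', ENNReal.rpow_one] at this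

lemma eLpNorm_le_of_lint_le {α : Type*} [MeasurableSpace α] {μ : Measure α}
    {p : ℝ≥0∞} (hp0 : p ≠ 0) (hpt : p ≠ ⊤) {f : α → ℝ} {B : ℝ≥0∞}
    (h : ∫⁻ x, (‖f x‖₊ : ℝ≥0∞) ^ p.toReal ∂μ ≤ B ^ p.toReal) :
    eLpNorm f p μ ≤ B := by
  have hq0 : 0 < p.toReal := ENNReal.toReal_pos hp0 hpt
  rw [eLpNorm_eq_lintegral_rpow_nnnorm hp0 hpt]
  calc (∫⁻ x, (‖f x‖₊ : ℝ≥0∞) ^ p.toReal ∂μ) ^ (1/p.toReal)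
      ≤ (B ^ p.toReal) ^ (1/p.toReal) := ENNReal.rpow_le_rpow h (by positivity)
    _ = B := rpow_rpow_inv hq0

end NikAux

open MeasureTheory Metric Filter Set
open scoped ENNReal Topology

namespace NikAux2
open NikAux

variable {α ι : Type*} [MeasurableSpace α] [MeasurableSpace ι]

/-- Minkowski-type bound: if `w` is pointwise dominated by the `ν`-average of the family `F i`,
and each `F i` has `L^p` norm at most `C`, then `w` has `L^p` norm at most `C`. -/
lemma mink (μ : Measure α) [SigmaFinite μ] {p : ℝ≥0∞} (hp : 1 ≤ p) (hpt : p ≠ ⊤)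
    (ν : Measure ι) [SFinite ν] (hν0 : ν univ ≠ 0) (hνt : ν univ ≠ ⊤)
    {F : ι → α → ℝ} (hF : Measurable (Function.uncurry F))
    {w : α → ℝ} {C : ℝ≥0∞}
    (hC : ∀ᵐ i ∂ν, eLpNorm (F i) p μ ≤ C)
    (hpt' : ∀ x, (‖w x‖₊ : ℝ≥0∞) ≤ (ν univ)⁻¹ * ∫⁻ i, (‖F i x‖₊ : ℝ≥0∞) ∂ν) :
    eLpNorm w p μ ≤ C := by
  have hp0 : p ≠ 0 := (zero_lt_one.trans_le hp).ne'
  have hq0 : 0 < p.toReal := ENNReal.toReal_pos hp0 hpt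
  have hq1 : 1 ≤ p.toReal := by
    have := ENNReal.toReal_mono hpt hp
    simpa using this
  set q := p.toReal with hqdef
  refine eLpNorm_le_of_lint_le hp0 hpt ?_
  have hmeas : ∀ x, AEMeasurable (fun i => (‖F i x‖₊ : ℝ≥0∞)) ν := fun x =>
    ((hF.comp (measurable_id.prodMk measurable_const)).enorm).aemeasurable
  calc ∫⁻ x, (‖w x‖₊ : ℝ≥0∞) ^ q ∂μ
      ≤ ∫⁻ x, ((ν univ)⁻¹ * ∫⁻ i, (‖F i x‖₊ : ℝ≥0∞) ∂ν) ^ q ∂μ :=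
        lintegral_mono fun x => ENNReal.rpow_le_rpow (hpt' x) hq0.le
    _ ≤ ∫⁻ x, (ν univ)⁻¹ * ∫⁻ i, (‖F i x‖₊ : ℝ≥0∞) ^ q ∂ν ∂μ :=
        lintegral_mono fun x => jensen_avg ν hν0 hνt (hmeas x) hq1
    _ = (ν univ)⁻¹ * ∫⁻ x, ∫⁻ i, (‖F i x‖₊ : ℝ≥0∞) ^ q ∂ν ∂μ :=
        lintegral_const_mul' _ _ (ENNReal.inv_ne_top.2 hν0)
    _ = (ν univ)⁻¹ * ∫⁻ i, ∫⁻ x, (‖F i x‖₊ : ℝ≥0∞) ^ q ∂μ ∂ν := by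
        rw [lintegral_lintegral_swap]
        exact ((hF.comp measurable_swap).enorm.pow_const q).aemeasurable
    _ ≤ (ν univ)⁻¹ * ∫⁻ _, C ^ q ∂ν := by
        refine mul_le_mul' le_rfl (lintegral_mono_ae (hC.mono fun i hi => ?_))
        exact lint_le_of_eLpNorm_le hp0 hpt hi
    _ = C ^ q := by
        rw [lintegral_const, mul_comm ((C:ℝ≥0∞) ^ q), ← mul_assoc,
          ENNReal.inv_mul_cancel hν0 hνt, one_mul]

/-- Interpolation: `L^{p₂}` norm bounded via `L^∞`-type pointwise bound and `L^{p₀}` bound. -/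
lemma interp (μ : Measure α) {p₀ p₂ : ℝ≥0∞} (hp₀ : 1 ≤ p₀) (hp₀t : p₀ ≠ ⊤) (hp₂ : p₀ ≤ p₂)
    {g : α → ℝ} {M B : ℝ≥0∞} (hMt : M ≠ ⊤)
    (hM : ∀ x, (‖g x‖₊ : ℝ≥0∞) ≤ M) (hB : eLpNorm g p₀ μ ≤ B) :
    eLpNorm g p₂ μ ≤ M ^ (1 - p₀.toReal/p₂.toReal) * B ^ (p₀.toReal/p₂.toReal) := by
  have hp₀0 : p₀ ≠ 0 := (zero_lt_one.trans_le hp₀).ne'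
  have hq0 : 0 < p₀.toReal := ENNReal.toReal_pos hp₀0 hp₀t
  by_cases hp₂t : p₂ = ⊤
  · subst hp₂t
    simp only [ENNReal.toReal_top, div_zero, sub_zero, ENNReal.rpow_one, ENNReal.rpow_zero,
      mul_one]
    rw [eLpNorm_exponent_top, eLpNormEssSup]
    exact essSup_le_of_ae_le M (Eventually.of_forall hM)
  · have hp₂0 : p₂ ≠ 0 := (zero_lt_one.trans_le (hp₀.trans hp₂)).ne'
    have hq₂0 : 0 < p₂.toReal := ENNReal.toReal_pos hp₂0 hp₂t
    have hqq : p₀.toReal ≤ p₂.toReal := ENNReal.toReal_mono hp₂t hp₂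
    set q := p₀.toReal
    set q₂ := p₂.toReal
    have key : ∫⁻ x, (‖g x‖₊ : ℝ≥0∞) ^ q₂ ∂μ ≤ M ^ (q₂ - q) * B ^ q := by
      calc ∫⁻ x, (‖g x‖₊ : ℝ≥0∞) ^ q₂ ∂μ
          = ∫⁻ x, (‖g x‖₊ : ℝ≥0∞) ^ (q₂ - q) * (‖g x‖₊ : ℝ≥0∞) ^ q ∂μ := by
            refine lintegral_congr fun x => ?_
            rw [← ENNReal.rpow_add_of_nonneg _ _ (sub_nonneg.2 hqq) hq0.le, sub_add_cancel]
        _ ≤ ∫⁻ x, M ^ (q₂ - q) * (‖g x‖₊ : ℝ≥0∞) ^ q ∂μ :=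
            lintegral_mono fun x =>
              mul_le_mul' (ENNReal.rpow_le_rpow (hM x) (sub_nonneg.2 hqq)) le_rfl
        _ = M ^ (q₂ - q) * ∫⁻ x, (‖g x‖₊ : ℝ≥0∞) ^ q ∂μ :=
            lintegral_const_mul' _ _ (ENNReal.rpow_ne_top_of_nonneg (sub_nonneg.2 hqq) hMt)
        _ ≤ M ^ (q₂ - q) * B ^ q :=
            mul_le_mul' le_rfl (lint_le_of_eLpNorm_le hp₀0 hp₀t hB)
    rw [eLpNorm_eq_lintegral_rpow_nnnorm hp₂0 hp₂t]
    calc (∫⁻ x, (‖g x‖₊ : ℝ≥0∞) ^ q₂ ∂μ) ^ (1/q₂)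
        ≤ (M ^ (q₂ - q) * B ^ q) ^ (1/q₂) := ENNReal.rpow_le_rpow key (by positivity)
      _ = M ^ (1 - q/q₂) * B ^ (q/q₂) := by
          rw [ENNReal.mul_rpow_of_nonneg _ _ (by positivity : (0:ℝ) ≤ 1/q₂),
            ← ENNReal.rpow_mul, ← ENNReal.rpow_mul]
          congr 1 <;> [skip; skip] <;> congr 1
          · field_simp
          · field_simp

end NikAux2

namespace NikAux3
open NikAux NikAux2

variable {d : ℕ}

local notation "Ed" => EuclideanSpace ℝ (Fin d)

noncomputable def avg (d : ℕ) (u : EuclideanSpace ℝ (Fin d) → ℝ) (r : ℝ)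
    (x : EuclideanSpace ℝ (Fin d)) : ℝ :=
  (volume (closedBall (0 : EuclideanSpace ℝ (Fin d)) r)).toReal⁻¹ *
    ∫ h in closedBall (0 : EuclideanSpace ℝ (Fin d)) r, u (x + h)

lemma avg_measurable {u : Ed → ℝ} (hu : Measurable u) (r : ℝ) :
    Measurable (avg d u r) := by
  have hsm : StronglyMeasurable fun p : Ed × Ed => u (p.1 + p.2) :=
    (hu.comp measurable_add).stronglyMeasurable
  exact measurable_const.mul
    (hsm.integral_prod_right' (ν := volume.restrict (closedBall (0:Ed) r))).measurable

lemma integrableOn_translate {u : Ed → ℝ} {p₀ : ℝ≥0∞} (hp₀ : 1 ≤ p₀)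
    (hu : MemLp u p₀ volume) (x : Ed) (s : Set Ed) (hsfin : volume s < ⊤) :
    IntegrableOn (fun h => u (x + h)) s volume := by
  have h1 : MemLp (fun h => u (x + h)) p₀ volume :=
    hu.comp_measurePreserving (measurePreserving_add_left volume x)
  haveI : IsFiniteMeasure (volume.restrict s) := ⟨by rwa [Measure.restrict_apply_univ]⟩
  exact (h1.restrict s).integrable hp₀

lemma ennnorm_toReal_inv (m : ℝ≥0∞) (hm0 : m ≠ 0) (hmt : m ≠ ⊤) :
    (‖m.toReal⁻¹‖₊ : ℝ≥0∞) = m⁻¹ := by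
  have hpos : 0 < m.toReal := ENNReal.toReal_pos hm0 hmt
  rw [← ENNReal.ofReal_coe_nnreal, coe_nnnorm, Real.norm_eq_abs, abs_of_nonneg (by positivity),
    ENNReal.ofReal_inv_of_pos hpos, ENNReal.ofReal_toReal hmt]

lemma ennnorm_avg_sub_le {u : Ed → ℝ} {p₀ : ℝ≥0∞} (hp₀ : 1 ≤ p₀)
    (hu : MemLp u p₀ volume) {r : ℝ} (hr : 0 < r) (x : Ed) (c : ℝ) :
    (‖avg d u r x - c‖₊ : ℝ≥0∞) ≤
      (volume (closedBall (0:Ed) r))⁻¹ *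
        ∫⁻ h in closedBall (0:Ed) r, (‖u (x + h) - c‖₊ : ℝ≥0∞) := by
  set m := volume (closedBall (0:Ed) r) with hm
  have hm0 : m ≠ 0 := (measure_closedBall_pos volume 0 hr).ne'
  have hmt : m ≠ ⊤ := measure_closedBall_lt_top.ne
  have hint : IntegrableOn (fun h => u (x + h)) (closedBall (0:Ed) r) volume :=
    integrableOn_translate hp₀ hu x _ (lt_of_le_of_ne le_top hmt)
  have hintc : IntegrableOn (fun _ : Ed => c) (closedBall (0:Ed) r) volume := by
    haveI : IsFiniteMeasure (volume.restrict (closedBall (0:Ed) r)) :=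
      ⟨by rw [Measure.restrict_apply_univ]; exact lt_of_le_of_ne le_top hmt⟩
    exact integrable_const c
  have heq : avg d u r x - c =
      m.toReal⁻¹ * ∫ h in closedBall (0:Ed) r, (u (x + h) - c) := by
    rw [integral_sub hint hintc, setIntegral_const, smul_eq_mul, mul_sub, avg]
    have hpos : 0 < m.toReal := ENNReal.toReal_pos hm0 hmt
    rw [measureReal_def, inv_mul_cancel_left₀ hpos.ne' c]
  rw [heq]
  calc (‖m.toReal⁻¹ * ∫ h in closedBall (0:Ed) r, (u (x + h) - c)‖₊ : ℝ≥0∞)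
      = (‖m.toReal⁻¹‖₊ : ℝ≥0∞) * (‖∫ h in closedBall (0:Ed) r, (u (x + h) - c)‖₊ : ℝ≥0∞) := by
        rw [nnnorm_mul, ENNReal.coe_mul]
    _ ≤ m⁻¹ * ∫⁻ h in closedBall (0:Ed) r, (‖u (x + h) - c‖₊ : ℝ≥0∞) := by
        rw [ennnorm_toReal_inv m hm0 hmt]
        exact mul_le_mul' le_rfl (enorm_integral_le_lintegral_enorm _)

lemma ennnorm_avg_le {u : Ed → ℝ} {p₀ : ℝ≥0∞} (hp₀ : 1 ≤ p₀)
    (hu : MemLp u p₀ volume) {r : ℝ} (hr : 0 < r) (x : Ed) :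
    (‖avg d u r x‖₊ : ℝ≥0∞) ≤
      (volume (closedBall (0:Ed) r))⁻¹ *
        ∫⁻ h in closedBall (0:Ed) r, (‖u (x + h)‖₊ : ℝ≥0∞) := by
  have := ennnorm_avg_sub_le hp₀ hu hr x 0
  simpa using this

lemma eLpNorm_translate {g : Ed → ℝ} (hg : AEStronglyMeasurable g volume)
    (p : ℝ≥0∞) (k : Ed) :
    eLpNorm (fun x => g (x + k)) p volume = eLpNorm g p volume :=
  eLpNorm_comp_measurePreserving hg (measurePreserving_add_right volume k)

lemma setLIntegral_translate (f : Ed → ℝ≥0∞) (hf : Measurable f) (a : Ed)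
    (s : Set Ed) (hs : MeasurableSet s) :
    ∫⁻ y in s, f y = ∫⁻ k in (fun h : Ed => a + h) ⁻¹' s, f (a + k) := by
  have hmp : MeasurePreserving (fun h : Ed => a + h) volume volume :=
    measurePreserving_add_left volume a
  conv_lhs => rw [← hmp.map_eq]
  rw [setLIntegral_map hs hf hmp.measurable]

end NikAux3

namespace NikAux4
open NikAux NikAux2 NikAux3

variable {d : ℕ}

local notation "Ed" => EuclideanSpace ℝ (Fin d)

lemma nik_le {u : Ed → ℝ} {p₀ : ℝ≥0∞} {s₀ : ℝ} (hs₀ : 0 < s₀) (k : Ed) :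
    eLpNorm (fun x => u (x + k) - u x) p₀ volume ≤
      nikSeminorm d s₀ p₀ u * ENNReal.ofReal (‖k‖ ^ s₀) := by
  by_cases hk : k = 0
  · subst hk
    simp only [add_zero, sub_self]
    rw [eLpNorm_zero']
    exact zero_le
  · have h1 : eLpNorm (fun x => u (x + k) - u x) p₀ volume / ENNReal.ofReal (‖k‖ ^ s₀) ≤
        nikSeminorm d s₀ p₀ u :=
      le_iSup₂ (f := fun (k : Ed) (_ : k ≠ 0) =>
        eLpNorm (fun x => u (x + k) - u x) p₀ volume / ENNReal.ofReal (‖k‖ ^ s₀)) k hk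
    have hk0 : ENNReal.ofReal (‖k‖ ^ s₀) ≠ 0 :=
      (ENNReal.ofReal_pos.2 (Real.rpow_pos_of_pos (norm_pos_iff.2 hk) s₀)).ne'
    exact (ENNReal.div_le_iff hk0 ENNReal.ofReal_ne_top).mp h1

lemma ennnorm_avg_diff_le {u : Ed → ℝ} {p₀ : ℝ≥0∞} (hp₀ : 1 ≤ p₀)
    (hu : MemLp u p₀ volume) {r r' : ℝ} (hr : 0 < r) (hr' : 0 < r') (x : Ed) :
    (‖avg d u r' x - avg d u r x‖₊ : ℝ≥0∞) ≤
      (volume (closedBall (0:Ed) r'))⁻¹ * ∫⁻ h in closedBall (0:Ed) r',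
        ((volume (closedBall (0:Ed) r))⁻¹ *
          ∫⁻ h' in closedBall (0:Ed) r, (‖u (x + h) - u (x + h')‖₊ : ℝ≥0∞)) := by
  calc (‖avg d u r' x - avg d u r x‖₊ : ℝ≥0∞)
      ≤ (volume (closedBall (0:Ed) r'))⁻¹ * ∫⁻ h in closedBall (0:Ed) r',
          (‖u (x + h) - avg d u r x‖₊ : ℝ≥0∞) :=
        ennnorm_avg_sub_le hp₀ hu hr' x (avg d u r x)
    _ ≤ _ := by
        refine mul_le_mul' le_rfl (lintegral_mono fun h => ?_)
        have h1 : (‖u (x + h) - avg d u r x‖₊ : ℝ≥0∞) = ‖avg d u r x - u (x + h)‖₊ := by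
          rw [← neg_sub, nnnorm_neg]
        rw [h1]
        have := ennnorm_avg_sub_le hp₀ hu hr x (u (x + h))
        refine this.trans (mul_le_mul' le_rfl (lintegral_mono fun h' => ?_))
        rw [← neg_sub (u (x + h)) (u (x + h')), nnnorm_neg]

lemma key_double_bound {u : Ed → ℝ} {p₀ : ℝ≥0∞} (hp₀ : 1 ≤ p₀) (hp₀t : p₀ ≠ ⊤)
    (hu : Measurable u) {s₀ : ℝ} (hs₀ : 0 < s₀)
    {r r' : ℝ} (hr : 0 < r) (hr' : 0 < r') (x : Ed) :
    ∫⁻ h in closedBall (0:Ed) r', (∫⁻ h' in closedBall (0:Ed) r,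
        (‖u (x + h) - u (x + h')‖₊ : ℝ≥0∞) ^ p₀.toReal) ≤
      volume (closedBall (0:Ed) (r' + r)) *
        (nikSeminorm d s₀ p₀ u * ENNReal.ofReal ((r' + r) ^ s₀)) ^ p₀.toReal := by
  have hp₀0 : p₀ ≠ 0 := (zero_lt_one.trans_le hp₀).ne'
  set q := p₀.toReal with hq
  set ρ := r' + r with hρ
  have hρpos : 0 < ρ := by positivity
  have hΦ : Measurable fun p : Ed × Ed => (‖u (x + p.1) - u (x + p.2)‖₊ : ℝ≥0∞) ^ q :=
    (((hu.comp (measurable_const.add measurable_fst)).sub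
      (hu.comp (measurable_const.add measurable_snd))).enorm).pow_const q
  -- swap the order of integration
  rw [lintegral_lintegral_swap (hΦ.aemeasurable)]
  -- bound the inner integral (over h) for a.e. h' in the closed ball
  have step1 : ∫⁻ h' in closedBall (0:Ed) r, (∫⁻ h in closedBall (0:Ed) r',
        (‖u (x + h) - u (x + h')‖₊ : ℝ≥0∞) ^ q) ≤
      ∫⁻ h' in closedBall (0:Ed) r, (∫⁻ k in closedBall (0:Ed) ρ,
        (‖u (x + h' + k) - u (x + h')‖₊ : ℝ≥0∞) ^ q) := by
    refine lintegral_mono_ae ?_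
    filter_upwards [ae_restrict_mem measurableSet_closedBall] with h' hh'
    rw [mem_closedBall, dist_zero_right] at hh'
    have hsub : closedBall (0:Ed) r' ⊆ closedBall h' ρ := by
      intro h hh
      rw [mem_closedBall, dist_zero_right] at hh
      rw [mem_closedBall]
      calc dist h h' ≤ dist h 0 + dist (0:Ed) h' := dist_triangle _ _ _
        _ ≤ r' + r := by
            rw [dist_zero_right, dist_comm, dist_zero_right]
            exact add_le_add hh hh'
    calc ∫⁻ h in closedBall (0:Ed) r', (‖u (x + h) - u (x + h')‖₊ : ℝ≥0∞) ^ q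
        ≤ ∫⁻ h in closedBall h' ρ, (‖u (x + h) - u (x + h')‖₊ : ℝ≥0∞) ^ q :=
          lintegral_mono_set hsub
      _ = ∫⁻ k in closedBall (0:Ed) ρ, (‖u (x + h' + k) - u (x + h')‖₊ : ℝ≥0∞) ^ q := by
          have hset : (fun h : Ed => h' + h) ⁻¹' closedBall h' ρ = closedBall (0:Ed) ρ := by
            ext k
            simp [mem_closedBall, dist_eq_norm, add_sub_cancel_left]
          rw [setLIntegral_translate (fun h : Ed => ((‖u (x + h) - u (x + h')‖₊ : ℝ≥0∞)) ^ q)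
            (((hu.comp (measurable_const.add measurable_id)).sub measurable_const).enorm.pow_const q)
            h' _ measurableSet_closedBall, hset]
          refine lintegral_congr fun k => ?_
          have hxk : x + (h' + k) = x + h' + k := by abel
          rw [hxk]
  refine step1.trans ?_
  -- swap again
  have hΨ : Measurable fun p : Ed × Ed => (‖u (x + p.1 + p.2) - u (x + p.1)‖₊ : ℝ≥0∞) ^ q :=
    (((hu.comp ((measurable_const.add measurable_fst).add measurable_snd)).sub
      (hu.comp (measurable_const.add measurable_fst))).enorm).pow_const q
  rw [lintegral_lintegral_swap (hΨ.aemeasurable)]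
  -- inner integral over h' is bounded by the seminorm, for a.e. k in the ball
  have step2 : ∫⁻ k in closedBall (0:Ed) ρ, (∫⁻ h' in closedBall (0:Ed) r,
        (‖u (x + h' + k) - u (x + h')‖₊ : ℝ≥0∞) ^ q) ≤
      ∫⁻ _ in closedBall (0:Ed) ρ,
        (nikSeminorm d s₀ p₀ u * ENNReal.ofReal (ρ ^ s₀)) ^ q := by
    refine lintegral_mono_ae ?_
    filter_upwards [ae_restrict_mem measurableSet_closedBall] with k hk
    have hkρ : ‖k‖ ≤ ρ := by rwa [mem_closedBall, dist_zero_right] at hk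
    calc ∫⁻ h' in closedBall (0:Ed) r, (‖u (x + h' + k) - u (x + h')‖₊ : ℝ≥0∞) ^ q
        ≤ ∫⁻ h', (‖u (x + h' + k) - u (x + h')‖₊ : ℝ≥0∞) ^ q :=
          lintegral_mono' Measure.restrict_le_self le_rfl
      _ = ∫⁻ y, (‖u (y + k) - u y‖₊ : ℝ≥0∞) ^ q :=
          lintegral_add_left_eq_self (fun y : Ed => (‖u (y + k) - u y‖₊ : ℝ≥0∞) ^ q) x
      _ = (eLpNorm (fun y => u (y + k) - u y) p₀ volume) ^ q := by
          rw [eLpNorm_eq_lintegral_rpow_nnnorm hp₀0 hp₀t, ← hq,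
            rpow_inv_rpow (hq ▸ ENNReal.toReal_pos hp₀0 hp₀t)]
      _ ≤ (nikSeminorm d s₀ p₀ u * ENNReal.ofReal (ρ ^ s₀)) ^ q := by
          refine ENNReal.rpow_le_rpow ?_ (ENNReal.toReal_pos hp₀0 hp₀t).le
          refine (nik_le hs₀ k).trans (mul_le_mul' le_rfl ?_)
          exact ENNReal.ofReal_le_ofReal
            (Real.rpow_le_rpow (norm_nonneg k) hkρ hs₀.le)
    
  refine step2.trans ?_
  rw [setLIntegral_const]
  rw [mul_comm]

lemma est_diff_p0 {u : Ed → ℝ} {p₀ : ℝ≥0∞} (hp₀ : 1 ≤ p₀) (hp₀t : p₀ ≠ ⊤)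
    (hu : Measurable u) (hmem : MemLp u p₀ volume) {s₀ : ℝ} (hs₀ : 0 < s₀)
    {r r' : ℝ} (hr : 0 < r) (hr' : 0 < r') :
    eLpNorm (fun x => avg d u r' x - avg d u r x) p₀ volume ≤
      nikSeminorm d s₀ p₀ u * ENNReal.ofReal ((r' + r) ^ s₀) := by
  set m' := volume (closedBall (0:Ed) r') with hm'd
  set m := volume (closedBall (0:Ed) r) with hmd
  have hm0 : m ≠ 0 := (measure_closedBall_pos volume 0 hr).ne'
  have hmt : m ≠ ⊤ := measure_closedBall_lt_top.ne
  have hm'0 : m' ≠ 0 := (measure_closedBall_pos volume 0 hr').ne'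
  have hm't : m' ≠ ⊤ := measure_closedBall_lt_top.ne
  set ν : Measure (Ed × Ed) :=
    (volume.restrict (closedBall (0:Ed) r')).prod (volume.restrict (closedBall (0:Ed) r)) with hν
  have hνuniv : ν Set.univ = m' * m := by
    rw [hν, ← Set.univ_prod_univ, Measure.prod_prod, Measure.restrict_apply_univ,
      Measure.restrict_apply_univ]
  have hF : Measurable (Function.uncurry fun (i : Ed × Ed) (x : Ed) =>
      u (x + i.1) - u (x + i.2)) := by
    apply Measurable.sub
    · exact hu.comp (measurable_snd.add measurable_fst.fst)
    · exact hu.comp (measurable_snd.add measurable_fst.snd)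
  refine mink volume hp₀ hp₀t ν ?_ ?_ hF ?_ ?_
  · rw [hνuniv]; exact fun h => ((mul_eq_zero.mp h).elim hm'0 hm0)
  · rw [hνuniv]; exact ENNReal.mul_ne_top hm't hmt
  · -- L^p bound on each translate difference
    have hν' : ν = (volume.prod volume).restrict
        ((closedBall (0:Ed) r') ×ˢ (closedBall (0:Ed) r)) := Measure.prod_restrict _ _
    rw [hν']
    filter_upwards [ae_restrict_mem (measurableSet_closedBall.prod measurableSet_closedBall)]
      with i hi
    obtain ⟨hi1, hi2⟩ := hi
    rw [mem_closedBall, dist_zero_right] at hi1 hi2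
    set k := i.1 - i.2 with hk
    have hgm : AEStronglyMeasurable (fun y => u (y + k) - u y) (volume : Measure Ed) :=
      ((hu.comp (measurable_add_const k)).sub hu).aestronglyMeasurable
    have hrew : eLpNorm (fun x => u (x + i.1) - u (x + i.2)) p₀ volume =
        eLpNorm (fun y => u (y + k) - u y) p₀ volume := by
      have h2 := eLpNorm_translate hgm p₀ i.2
      have h3 : (fun x => (fun y => u (y + k) - u y) (x + i.2)) =
          fun x => u (x + i.1) - u (x + i.2) := by
        funext x
        simp only [hk]
        have : x + i.2 + (i.1 - i.2) = x + i.1 := by abel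
        rw [this]
      rw [← h3]
      exact h2
    rw [hrew]
    refine (nik_le hs₀ k).trans (mul_le_mul' le_rfl (ENNReal.ofReal_le_ofReal ?_))
    refine Real.rpow_le_rpow (norm_nonneg k) ?_ hs₀.le
    calc ‖i.1 - i.2‖ ≤ ‖i.1‖ + ‖i.2‖ := norm_sub_le _ _
      _ ≤ r' + r := add_le_add hi1 hi2
  · -- pointwise domination
    intro x
    refine (ennnorm_avg_diff_le hp₀ hmem hr hr' x).trans (le_of_eq ?_)
    have hprod : ∫⁻ i, (‖u (x + i.1) - u (x + i.2)‖₊ : ℝ≥0∞) ∂ν =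
        ∫⁻ h in closedBall (0:Ed) r', ∫⁻ h' in closedBall (0:Ed) r,
          (‖u (x + h) - u (x + h')‖₊ : ℝ≥0∞) := by
      rw [hν]
      exact lintegral_prod _ ((hu.comp (measurable_const.add measurable_fst)).sub
        (hu.comp (measurable_const.add measurable_snd))).enorm.aemeasurable
    rw [hprod, hνuniv, ENNReal.mul_inv (Or.inl hm'0) (Or.inl hm't),
      lintegral_const_mul' m⁻¹ _ (ENNReal.inv_ne_top.2 hm0)]
    ring

lemma est_v1_p0 {u : Ed → ℝ} {p₀ : ℝ≥0∞} (hp₀ : 1 ≤ p₀) (hp₀t : p₀ ≠ ⊤)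
    (hu : Measurable u) (hmem : MemLp u p₀ volume) :
    eLpNorm (avg d u 1) p₀ volume ≤ eLpNorm u p₀ volume := by
  set ν : Measure Ed := volume.restrict (closedBall (0:Ed) 1) with hν
  have hνuniv : ν Set.univ = volume (closedBall (0:Ed) 1) := Measure.restrict_apply_univ _
  have hF : Measurable (Function.uncurry fun (h : Ed) (x : Ed) => u (x + h)) :=
    hu.comp (measurable_snd.add measurable_fst)
  refine mink volume hp₀ hp₀t ν ?_ ?_ hF ?_ ?_
  · rw [hνuniv]; exact (measure_closedBall_pos volume 0 one_pos).ne'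
  · rw [hνuniv]; exact measure_closedBall_lt_top.ne
  · refine Eventually.of_forall fun h => le_of_eq ?_
    have hgm : AEStronglyMeasurable u (volume : Measure Ed) := hu.aestronglyMeasurable
    have := eLpNorm_translate hgm p₀ h
    exact this
  · intro x
    rw [hνuniv]
    exact ennnorm_avg_le hp₀ hmem one_pos x

lemma eLpNorm_pow_eq {α : Type*} [MeasurableSpace α] {μ : Measure α}
    {p : ℝ≥0∞} (hp0 : p ≠ 0) (hpt : p ≠ ⊤) (f : α → ℝ) :
    (eLpNorm f p μ) ^ p.toReal = ∫⁻ x, (‖f x‖₊ : ℝ≥0∞) ^ p.toReal ∂μ := by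
  rw [eLpNorm_eq_lintegral_rpow_nnnorm hp0 hpt, ← ENNReal.rpow_mul,
    one_div_mul_cancel (ENNReal.toReal_pos hp0 hpt).ne', ENNReal.rpow_one]

lemma ptw_v1 {u : Ed → ℝ} {p₀ : ℝ≥0∞} (hp₀ : 1 ≤ p₀) (hp₀t : p₀ ≠ ⊤)
    (hu : Measurable u) (hmem : MemLp u p₀ volume) (x : Ed) :
    (‖avg d u 1 x‖₊ : ℝ≥0∞) ≤
      ((volume (closedBall (0:Ed) 1))⁻¹ *
        (eLpNorm u p₀ volume) ^ p₀.toReal) ^ (1/p₀.toReal) := by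
  have hp₀0 : p₀ ≠ 0 := (zero_lt_one.trans_le hp₀).ne'
  have hq0 : 0 < p₀.toReal := ENNReal.toReal_pos hp₀0 hp₀t
  have hq1 : 1 ≤ p₀.toReal := by
    have := ENNReal.toReal_mono hp₀t hp₀; simpa using this
  set q := p₀.toReal
  set m := volume (closedBall (0:Ed) 1) with hm
  have hm0 : m ≠ 0 := (measure_closedBall_pos volume 0 one_pos).ne'
  have hmt : m ≠ ⊤ := measure_closedBall_lt_top.ne
  refine le_rpow_inv hq0 ?_
  calc (‖avg d u 1 x‖₊ : ℝ≥0∞) ^ q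
      ≤ (m⁻¹ * ∫⁻ h in closedBall (0:Ed) 1, (‖u (x + h)‖₊ : ℝ≥0∞)) ^ q :=
        ENNReal.rpow_le_rpow (ennnorm_avg_le hp₀ hmem one_pos x) hq0.le
    _ ≤ m⁻¹ * ∫⁻ h in closedBall (0:Ed) 1, (‖u (x + h)‖₊ : ℝ≥0∞) ^ q := by
        have := jensen_avg (volume.restrict (closedBall (0:Ed) 1))
          (by rwa [Measure.restrict_apply_univ]) (by rwa [Measure.restrict_apply_univ])
          (f := fun h => (‖u (x + h)‖₊ : ℝ≥0∞))
          ((hu.comp (measurable_const.add measurable_id)).enorm.aemeasurable) hq1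
        simpa [Measure.restrict_apply_univ] using this
    _ ≤ m⁻¹ * ∫⁻ h, (‖u (x + h)‖₊ : ℝ≥0∞) ^ q :=
        mul_le_mul' le_rfl (lintegral_mono' Measure.restrict_le_self le_rfl)
    _ = m⁻¹ * (eLpNorm u p₀ volume) ^ q := by
        rw [lintegral_add_left_eq_self (fun y : Ed => (‖u y‖₊ : ℝ≥0∞) ^ q) x,
          eLpNorm_pow_eq hp₀0 hp₀t]

lemma ptw_diff {u : Ed → ℝ} {p₀ : ℝ≥0∞} (hp₀ : 1 ≤ p₀) (hp₀t : p₀ ≠ ⊤)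
    (hu : Measurable u) (hmem : MemLp u p₀ volume) {s₀ : ℝ} (hs₀ : 0 < s₀)
    {r r' : ℝ} (hr : 0 < r) (hr' : 0 < r') (x : Ed) :
    (‖avg d u r' x - avg d u r x‖₊ : ℝ≥0∞) ≤
      ((volume (closedBall (0:Ed) r') * volume (closedBall (0:Ed) r))⁻¹ *
        (volume (closedBall (0:Ed) (r' + r)) *
          (nikSeminorm d s₀ p₀ u * ENNReal.ofReal ((r' + r) ^ s₀)) ^ p₀.toReal)) ^
        (1/p₀.toReal) := by
  have hp₀0 : p₀ ≠ 0 := (zero_lt_one.trans_le hp₀).ne'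
  have hq0 : 0 < p₀.toReal := ENNReal.toReal_pos hp₀0 hp₀t
  have hq1 : 1 ≤ p₀.toReal := by
    have := ENNReal.toReal_mono hp₀t hp₀; simpa using this
  set q := p₀.toReal
  set m' := volume (closedBall (0:Ed) r') with hm'd
  set m := volume (closedBall (0:Ed) r) with hmd
  have hm0 : m ≠ 0 := (measure_closedBall_pos volume 0 hr).ne'
  have hmt : m ≠ ⊤ := measure_closedBall_lt_top.ne
  have hm'0 : m' ≠ 0 := (measure_closedBall_pos volume 0 hr').ne'
  have hm't : m' ≠ ⊤ := measure_closedBall_lt_top.ne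
  refine le_rpow_inv hq0 ?_
  have step0 := ennnorm_avg_diff_le hp₀ hmem hr hr' x
  have step1 : (‖avg d u r' x - avg d u r x‖₊ : ℝ≥0∞) ^ q ≤
      m'⁻¹ * ∫⁻ h in closedBall (0:Ed) r',
        (m⁻¹ * ∫⁻ h' in closedBall (0:Ed) r, (‖u (x + h) - u (x + h')‖₊ : ℝ≥0∞)) ^ q := by
    refine le_trans (ENNReal.rpow_le_rpow step0 hq0.le) ?_
    have := jensen_avg (volume.restrict (closedBall (0:Ed) r'))
      (by rwa [Measure.restrict_apply_univ]) (by rwa [Measure.restrict_apply_univ])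
      (f := fun h => m⁻¹ * ∫⁻ h' in closedBall (0:Ed) r, (‖u (x + h) - u (x + h')‖₊ : ℝ≥0∞))
      ?_ hq1
    · simpa [Measure.restrict_apply_univ] using this
    · refine (measurable_const.mul ?_).aemeasurable
      exact Measurable.lintegral_prod_right (f := fun h h' => (‖u (x + h) - u (x + h')‖₊ : ℝ≥0∞))
        (((hu.comp (measurable_const.add measurable_fst)).sub
          (hu.comp (measurable_const.add measurable_snd))).enorm)
  have step2 : ∀ h : Ed, (m⁻¹ * ∫⁻ h' in closedBall (0:Ed) r,
        (‖u (x + h) - u (x + h')‖₊ : ℝ≥0∞)) ^ q ≤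
      m⁻¹ * ∫⁻ h' in closedBall (0:Ed) r, (‖u (x + h) - u (x + h')‖₊ : ℝ≥0∞) ^ q := by
    intro h
    have := jensen_avg (volume.restrict (closedBall (0:Ed) r))
      (by rwa [Measure.restrict_apply_univ]) (by rwa [Measure.restrict_apply_univ])
      (f := fun h' => (‖u (x + h) - u (x + h')‖₊ : ℝ≥0∞))
      ((measurable_const.sub (hu.comp (measurable_const.add measurable_id))).enorm.aemeasurable)
      hq1
    simpa [Measure.restrict_apply_univ] using this
  calc (‖avg d u r' x - avg d u r x‖₊ : ℝ≥0∞) ^ q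
      ≤ m'⁻¹ * ∫⁻ h in closedBall (0:Ed) r',
          (m⁻¹ * ∫⁻ h' in closedBall (0:Ed) r, (‖u (x + h) - u (x + h')‖₊ : ℝ≥0∞)) ^ q := step1
    _ ≤ m'⁻¹ * ∫⁻ h in closedBall (0:Ed) r',
          (m⁻¹ * ∫⁻ h' in closedBall (0:Ed) r, (‖u (x + h) - u (x + h')‖₊ : ℝ≥0∞) ^ q) :=
        mul_le_mul' le_rfl (lintegral_mono fun h => step2 h)
    _ = (m' * m)⁻¹ * ∫⁻ h in closedBall (0:Ed) r', ∫⁻ h' in closedBall (0:Ed) r,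
          (‖u (x + h) - u (x + h')‖₊ : ℝ≥0∞) ^ q := by
        rw [lintegral_const_mul' m⁻¹ _ (ENNReal.inv_ne_top.2 hm0),
          ENNReal.mul_inv (Or.inl hm'0) (Or.inl hm't)]
        ring
    _ ≤ (m' * m)⁻¹ * (volume (closedBall (0:Ed) (r' + r)) *
          (nikSeminorm d s₀ p₀ u * ENNReal.ofReal ((r' + r) ^ s₀)) ^ q) :=
        mul_le_mul' le_rfl (key_double_bound hp₀ hp₀t hu hs₀ hr hr' x)

end NikAux4

namespace NikAux5
open NikAux NikAux2 NikAux3 NikAux4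

variable {d : ℕ}

local notation "Ed" => EuclideanSpace ℝ (Fin d)

lemma avg_eq_setAverage {u : Ed → ℝ} (x : Ed) (r : ℝ) :
    avg d u r x = ⨍ y in closedBall x r, u y := by
  have hmp : MeasurePreserving (fun h : Ed => x + h) volume volume :=
    measurePreserving_add_left volume x
  have hemb : MeasurableEmbedding (fun h : Ed => x + h) :=
    (Homeomorph.addLeft x).measurableEmbedding
  have hpre : (fun h : Ed => x + h) ⁻¹' closedBall x r = closedBall (0:Ed) r := by
    ext h
    simp [mem_closedBall, dist_eq_norm, add_sub_cancel_left]
  have hint : ∫ h in closedBall (0:Ed) r, u (x + h) = ∫ y in closedBall x r, u y := by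
    rw [← hpre]
    exact hmp.setIntegral_preimage_emb hemb u (closedBall x r)
  have hvol : volume (closedBall x r) = volume (closedBall (0:Ed) r) :=
    Measure.addHaar_closedBall_center volume x r
  rw [setAverage_eq, smul_eq_mul, ← hint, avg, measureReal_def, hvol]
lemma avg_tendsto_ae {u : Ed → ℝ} {p₀ : ℝ≥0∞} (hp₀ : 1 ≤ p₀)
    (hmem : MemLp u p₀ volume) :
    ∀ᵐ x : Ed ∂volume,
      Filter.Tendsto (fun J : ℕ => avg d u ((2:ℝ)⁻¹ ^ J) x) Filter.atTop (nhds (u x)) := by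
  have hloc : LocallyIntegrable u volume := hmem.locallyIntegrable hp₀
  filter_upwards [IsUnifLocDoublingMeasure.ae_tendsto_average
    (volume (α := Ed)) hloc 1] with x hx
  have h1 := hx (fun _ : ℕ => x) (fun J => (2:ℝ)⁻¹ ^ J)
    (by
      apply tendsto_nhdsWithin_of_tendsto_nhds_of_eventually_within
      · exact tendsto_pow_atTop_nhds_zero_of_lt_one (by norm_num) (by norm_num)
      · exact Filter.Eventually.of_forall fun J => Set.mem_Ioi.2 (by positivity))
    (Filter.Eventually.of_forall fun J => by
      simpa using mem_closedBall_self (by positivity : (0:ℝ) ≤ 1 * (2:ℝ)⁻¹ ^ J))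
  refine h1.congr fun J => ?_
  exact (avg_eq_setAverage x _).symm

lemma avg_telescope {u : Ed → ℝ} (J : ℕ) (x : Ed) :
    avg d u ((2:ℝ)⁻¹ ^ J) x = avg d u 1 x +
      ∑ j ∈ Finset.range J,
        (avg d u ((2:ℝ)⁻¹ ^ (j+1)) x - avg d u ((2:ℝ)⁻¹ ^ j) x) := by
  rw [Finset.sum_range_sub (f := fun j => avg d u ((2:ℝ)⁻¹ ^ j) x)]
  simp

lemma m_closedBall (hd : 1 ≤ d) {s : ℝ} (hs : 0 ≤ s) :
    volume (closedBall (0:Ed) s) =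
      ENNReal.ofReal (s ^ d * (volume (ball (0:Ed) 1)).toReal) := by
  haveI : NeZero d := ⟨by omega⟩
  rw [Measure.addHaar_closedBall _ _ hs, finrank_euclideanSpace_fin]
  conv_lhs => rw [← ENNReal.ofReal_toReal (measure_ball_lt_top (x := (0:Ed)) (r := 1)).ne]
  rw [← ENNReal.ofReal_mul (by positivity)]

end NikAux5

namespace NikAux6
open NikAux NikAux2 NikAux3 NikAux4 NikAux5

lemma real_id (d : ℕ) {t cV : ℝ} (ht : 0 < t) (hc : 0 < cV) :
    ((t/2)^d * cV)⁻¹ * (((t^d * cV)⁻¹) * (((3/2)*t)^d * cV)) = 3^d / (t^d * cV) := by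
  rw [mul_pow, div_pow]
  have h2 : (0:ℝ) < 2 ^ d := by positivity
  have htd : (0:ℝ) < t ^ d := by positivity
  field_simp
  rw [← mul_pow]; norm_num

lemma real_geom {t cV q θ s₀ : ℝ} (d : ℕ) (ht : 0 < t) (hc : 0 < cV) (hq : 0 < q) :
    (((3:ℝ)^d / (t^d * cV)) ^ (1/q)) ^ (1-θ) * (((3/2)*t) ^ s₀)
      = (((3:ℝ)^d / cV) ^ ((1-θ)/q) * (3/2) ^ s₀) * t ^ (s₀ - (1-θ)*(d:ℝ)/q) := by
  have hA : (0:ℝ) < 3^d/cV := by positivity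
  have hB : (0:ℝ) < t ^ (-(d:ℝ)) := Real.rpow_pos_of_pos ht _
  have h1 : (3:ℝ)^d/(t^d*cV) = (3^d/cV) * t ^ (-(d:ℝ)) := by
    rw [Real.rpow_neg ht.le, Real.rpow_natCast]
    have htd : (0:ℝ) < t ^ d := by positivity
    field_simp
  rw [h1, Real.mul_rpow hA.le hB.le,
    Real.mul_rpow (Real.rpow_nonneg hA.le _) (Real.rpow_nonneg hB.le _),
    Real.mul_rpow (by norm_num : (0:ℝ) ≤ 3/2) ht.le,
    ← Real.rpow_mul hA.le, ← Real.rpow_mul ht.le, ← Real.rpow_mul ht.le]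
  have e1 : 1/q * (1-θ) = (1-θ)/q := by ring
  have e2 : s₀ - (1-θ)*(d:ℝ)/q = -(d:ℝ) * (1/q) * (1-θ) + s₀ := by ring
  rw [e1, e2, Real.rpow_add ht]
  ring

lemma pow_rpow_comm {x : ℝ} (hx : 0 ≤ x) (n : ℕ) (e : ℝ) :
    (x ^ n) ^ e = (x ^ e) ^ n := by
  rw [← Real.rpow_natCast x n, ← Real.rpow_mul hx, ← Real.rpow_natCast (x ^ e) n,
    ← Real.rpow_mul hx, mul_comm]

end NikAux6

namespace NikAux6
open NikAux NikAux2 NikAux3 NikAux4 NikAux5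

variable {d : ℕ}

local notation "Ed" => EuclideanSpace ℝ (Fin d)

theorem nik_embed_meas (hd : 1 ≤ d) (p₀ p₂ : ℝ≥0∞) (hp₀ : 1 ≤ p₀) (hp₀₂ : p₀ < p₂)
    (s₀ : ℝ) (hs₀ : 0 < s₀)
    (hdiff : s₀ - (d : ℝ) / p₀.toReal > -((d : ℝ) / p₂.toReal)) :
    ∃ C : ℝ≥0∞, C ≠ ⊤ ∧
      ∀ u : Ed → ℝ, Measurable u → MemLp u p₀ volume → nikSeminorm d s₀ p₀ u ≠ ⊤ →
        eLpNorm u p₂ volume ≤ C * (eLpNorm u p₀ volume + nikSeminorm d s₀ p₀ u) := by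
  haveI : NeZero d := ⟨by omega⟩
  have hp₀t : p₀ ≠ ⊤ := (hp₀₂.trans_le le_top).ne
  have hp₀0 : p₀ ≠ 0 := (zero_lt_one.trans_le hp₀).ne'
  have hq0 : 0 < p₀.toReal := ENNReal.toReal_pos hp₀0 hp₀t
  have hq1 : 1 ≤ p₀.toReal := by
    have := ENNReal.toReal_mono hp₀t hp₀; simpa using this
  have hp₂1 : 1 ≤ p₂ := hp₀.trans hp₀₂.le
  set θ := p₀.toReal / p₂.toReal with hθdef
  have hθ0 : 0 ≤ θ := by positivity
  have hθ1 : θ ≤ 1 := by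
    by_cases h : p₂ = ⊤
    · simp [hθdef, h]
    · rw [hθdef, div_le_one (ENNReal.toReal_pos (zero_lt_one.trans_le hp₂1).ne' h)]
      exact ENNReal.toReal_mono h hp₀₂.le
  have h1θ0 : (0:ℝ) ≤ 1 - θ := by linarith
  have hεpos : 0 < s₀ - (1-θ)*(d:ℝ)/p₀.toReal := by
    by_cases h : p₂ = ⊤
    · have h0 : p₂.toReal = 0 := by simp [h]
      rw [h0] at hdiff
      have hθz : θ = 0 := by rw [hθdef, h0, div_zero]
      rw [hθz]
      simp only [div_zero, neg_zero, gt_iff_lt] at hdiff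
      have : (1 - 0 : ℝ) * (d:ℝ) / p₀.toReal = (d:ℝ)/p₀.toReal := by ring
      rw [this]
      linarith
    · have hq₂0 : 0 < p₂.toReal := ENNReal.toReal_pos (zero_lt_one.trans_le hp₂1).ne' h
      have key : (1-θ)*(d:ℝ)/p₀.toReal = (d:ℝ)/p₀.toReal - (d:ℝ)/p₂.toReal := by
        rw [hθdef]
        field_simp
      rw [key]
      linarith
  set ε := s₀ - (1-θ)*(d:ℝ)/p₀.toReal with hεdef
  set κ := ((2:ℝ)⁻¹) ^ ε with hκdef
  have hκ0 : (0:ℝ) ≤ κ := Real.rpow_nonneg (by norm_num) _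
  have hκ1 : κ < 1 := Real.rpow_lt_one (by norm_num) (by norm_num) hεpos
  set cV := (volume (ball (0:Ed) 1)).toReal with hcVdef
  have hcV : 0 < cV := ENNReal.toReal_pos
    (measure_ball_pos volume 0 one_pos).ne' measure_ball_lt_top.ne
  set G := ((3:ℝ)^d / cV) ^ ((1-θ)/p₀.toReal) * (3/2) ^ s₀ with hGdef
  have hG0 : 0 ≤ G := by positivity
  set K₁ : ℝ≥0∞ := ENNReal.ofReal ((cV⁻¹ ^ (1/p₀.toReal)) ^ (1-θ)) with hK₁
  set K₂ : ℝ≥0∞ := ENNReal.ofReal G * (1 - ENNReal.ofReal κ)⁻¹ with hK₂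
  have hK₂t : K₂ ≠ ⊤ := ENNReal.mul_ne_top ENNReal.ofReal_ne_top
    (ENNReal.inv_ne_top.2 (tsub_pos_of_lt (ENNReal.ofReal_lt_one.2 hκ1)).ne')
  refine ⟨K₁ ⊔ K₂, ?_, ?_⟩
  · exact (max_lt (lt_of_le_of_ne le_top ENNReal.ofReal_ne_top)
      (lt_of_le_of_ne le_top hK₂t)).ne
  intro u hu hmem hA
  have hNt : eLpNorm u p₀ volume ≠ ⊤ := hmem.2.ne
  -- base term
  have hm1 : volume (closedBall (0:Ed) 1) = ENNReal.ofReal cV := by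
    have := m_closedBall (d := d) hd (zero_le_one)
    simpa using this
  have hM0t : ENNReal.ofReal (cV⁻¹ ^ (1/p₀.toReal)) * eLpNorm u p₀ volume ≠ ⊤ :=
    ENNReal.mul_ne_top ENNReal.ofReal_ne_top hNt
  have hptw1 : ∀ x, (‖avg d u 1 x‖₊ : ℝ≥0∞) ≤
      ENNReal.ofReal (cV⁻¹ ^ (1/p₀.toReal)) * eLpNorm u p₀ volume := by
    intro x
    refine (ptw_v1 hp₀ hp₀t hu hmem x).trans (le_of_eq ?_)
    rw [hm1, ← ENNReal.ofReal_inv_of_pos hcV,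
      ENNReal.mul_rpow_of_nonneg _ _ (by positivity : (0:ℝ) ≤ 1/p₀.toReal),
      rpow_rpow_inv hq0, ENNReal.ofReal_rpow_of_pos (by positivity)]
  have hv1 : eLpNorm (avg d u 1) p₂ volume ≤ K₁ * eLpNorm u p₀ volume := by
    refine le_trans
      (interp volume hp₀ hp₀t hp₀₂.le hM0t hptw1 (est_v1_p0 hp₀ hp₀t hu hmem))
      (le_of_eq ?_)
    rw [← hθdef,
      ENNReal.mul_rpow_of_nonneg _ _ h1θ0, mul_assoc,
      ← ENNReal.rpow_add_of_nonneg _ _ h1θ0 hθ0, sub_add_cancel, ENNReal.rpow_one,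
      ENNReal.ofReal_rpow_of_pos (by positivity : (0:ℝ) < cV⁻¹ ^ (1/p₀.toReal)), hK₁]
  -- dyadic differences
  have hgj : ∀ j : ℕ,
      eLpNorm (fun x => avg d u ((2:ℝ)⁻¹ ^ (j+1)) x - avg d u ((2:ℝ)⁻¹ ^ j) x) p₂ volume
        ≤ ENNReal.ofReal (G * κ ^ j) * nikSeminorm d s₀ p₀ u := by
    intro j
    have ht : (0:ℝ) < (2:ℝ)⁻¹ ^ j := by positivity
    have ht' : (0:ℝ) < (2:ℝ)⁻¹ ^ (j+1) := by positivity
    set t := (2:ℝ)⁻¹ ^ j with htdef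
    have hr'eq : (2:ℝ)⁻¹ ^ (j+1) = t/2 := by rw [pow_succ]; ring
    have hρeq : (2:ℝ)⁻¹ ^ (j+1) + t = (3/2)*t := by rw [hr'eq]; ring
    set B := nikSeminorm d s₀ p₀ u * ENNReal.ofReal (((2:ℝ)⁻¹ ^ (j+1) + t) ^ s₀) with hBdef
    have hBt : B ≠ ⊤ := ENNReal.mul_ne_top hA ENNReal.ofReal_ne_top
    have hb1 : eLpNorm (fun x => avg d u ((2:ℝ)⁻¹ ^ (j+1)) x - avg d u t x) p₀ volume ≤ B :=
      est_diff_p0 hp₀ hp₀t hu hmem hs₀ ht ht'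
    set β := ((3:ℝ)^d / (t^d * cV)) ^ (1/p₀.toReal) with hβdef
    have hβpos : 0 < β := by
      rw [hβdef]
      positivity
    have hMeq : ((volume (closedBall (0:Ed) ((2:ℝ)⁻¹ ^ (j+1))) * volume (closedBall (0:Ed) t))⁻¹ *
        (volume (closedBall (0:Ed) ((2:ℝ)⁻¹ ^ (j+1) + t)) * B ^ p₀.toReal)) ^ (1/p₀.toReal)
        = ENNReal.ofReal β * B := by
      rw [m_closedBall hd ht'.le, m_closedBall hd ht.le, m_closedBall hd (by positivity),
        ← ENNReal.ofReal_mul (by positivity),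
        ← ENNReal.ofReal_inv_of_pos (by positivity)]
      rw [← mul_assoc, ← ENNReal.ofReal_mul (by positivity)]
      have hreal : (((2:ℝ)⁻¹ ^ (j+1)) ^ d * cV * (t ^ d * cV))⁻¹ *
          (((2:ℝ)⁻¹ ^ (j+1) + t) ^ d * cV) = (3:ℝ)^d / (t^d * cV) := by
        rw [hρeq, hr'eq, mul_inv, mul_assoc]
        exact real_id d ht hcV
      rw [hreal,
        ENNReal.mul_rpow_of_nonneg _ _ (by positivity : (0:ℝ) ≤ 1/p₀.toReal),
        rpow_rpow_inv hq0, ENNReal.ofReal_rpow_of_pos (by positivity), hβdef]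
    have hMt' : ENNReal.ofReal β * B ≠ ⊤ := ENNReal.mul_ne_top ENNReal.ofReal_ne_top hBt
    have hptw : ∀ x, (‖avg d u ((2:ℝ)⁻¹ ^ (j+1)) x - avg d u t x‖₊ : ℝ≥0∞) ≤
        ENNReal.ofReal β * B := fun x =>
      (ptw_diff hp₀ hp₀t hu hmem hs₀ ht ht' x).trans (le_of_eq hMeq)
    have hinterp := interp volume hp₀ hp₀t hp₀₂.le hMt' hptw hb1
    refine hinterp.trans (le_of_eq ?_)
    have hrg : β ^ (1-θ) * (((3/2):ℝ)*t) ^ s₀ = G * κ ^ j := by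
      rw [hβdef, real_geom d ht hcV hq0]
      congr 1
      rw [htdef, hκdef, hεdef,
        pow_rpow_comm (by norm_num : (0:ℝ) ≤ 2⁻¹) j (s₀ - (1-θ)*(d:ℝ)/p₀.toReal)]
    rw [← hθdef,
      ENNReal.mul_rpow_of_nonneg _ _ h1θ0, mul_assoc,
      ← ENNReal.rpow_add_of_nonneg _ _ h1θ0 hθ0, sub_add_cancel, ENNReal.rpow_one,
      ENNReal.ofReal_rpow_of_pos hβpos, hBdef, hρeq, ← hrg,
      ENNReal.ofReal_mul (by positivity : (0:ℝ) ≤ β ^ (1-θ))]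
    ring
  -- partial sums
  have hpart : ∀ J : ℕ, eLpNorm (avg d u ((2:ℝ)⁻¹ ^ J)) p₂ volume ≤
      K₁ * eLpNorm u p₀ volume + K₂ * nikSeminorm d s₀ p₀ u := by
    intro J
    have hfeq : avg d u ((2:ℝ)⁻¹ ^ J) = avg d u 1 +
        ∑ j ∈ Finset.range J,
          (fun x => avg d u ((2:ℝ)⁻¹ ^ (j+1)) x - avg d u ((2:ℝ)⁻¹ ^ j) x) := by
      funext x
      rw [avg_telescope (u := u) J x]
      simp [Finset.sum_apply]
    have hmeasF : ∀ j : ℕ, AEStronglyMeasurable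
        (fun x => avg d u ((2:ℝ)⁻¹ ^ (j+1)) x - avg d u ((2:ℝ)⁻¹ ^ j) x) volume := fun j =>
      ((avg_measurable hu _).sub (avg_measurable hu _)).aestronglyMeasurable
    have hsum : ∑ j ∈ Finset.range J, ENNReal.ofReal (G * κ ^ j) ≤ K₂ := by
      have h1 : ∀ j : ℕ, ENNReal.ofReal (G * κ ^ j) =
          ENNReal.ofReal G * ENNReal.ofReal κ ^ j := fun j => by
        rw [ENNReal.ofReal_mul hG0, ENNReal.ofReal_pow hκ0]
      calc ∑ j ∈ Finset.range J, ENNReal.ofReal (G * κ ^ j)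
          = ENNReal.ofReal G * ∑ j ∈ Finset.range J, ENNReal.ofReal κ ^ j := by
            rw [Finset.mul_sum]
            exact Finset.sum_congr rfl fun j _ => h1 j
        _ ≤ ENNReal.ofReal G * ∑' j : ℕ, ENNReal.ofReal κ ^ j :=
            mul_le_mul' le_rfl (ENNReal.sum_le_tsum _)
        _ = K₂ := by rw [ENNReal.tsum_geometric, hK₂]
    calc eLpNorm (avg d u ((2:ℝ)⁻¹ ^ J)) p₂ volume
        ≤ eLpNorm (avg d u 1) p₂ volume + eLpNorm
            (∑ j ∈ Finset.range J,
              (fun x => avg d u ((2:ℝ)⁻¹ ^ (j+1)) x - avg d u ((2:ℝ)⁻¹ ^ j) x)) p₂ volume := by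
          rw [hfeq]
          exact eLpNorm_add_le (avg_measurable hu 1).aestronglyMeasurable
            (Finset.aestronglyMeasurable_sum _ fun j _ => hmeasF j) hp₂1
      _ ≤ K₁ * eLpNorm u p₀ volume + ∑ j ∈ Finset.range J,
            eLpNorm (fun x => avg d u ((2:ℝ)⁻¹ ^ (j+1)) x - avg d u ((2:ℝ)⁻¹ ^ j) x) p₂ volume :=
          add_le_add hv1 (eLpNorm_sum_le (fun j _ => hmeasF j) hp₂1)
      _ ≤ K₁ * eLpNorm u p₀ volume + ∑ j ∈ Finset.range J,
            ENNReal.ofReal (G * κ ^ j) * nikSeminorm d s₀ p₀ u :=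
          add_le_add le_rfl (Finset.sum_le_sum fun j _ => hgj j)
      _ ≤ K₁ * eLpNorm u p₀ volume + K₂ * nikSeminorm d s₀ p₀ u := by
          refine add_le_add le_rfl ?_
          rw [← Finset.sum_mul]
          exact mul_le_mul' hsum le_rfl
  -- pass to the limit
  have hlimle := Lp.eLpNorm_lim_le_liminf_eLpNorm (p := p₂)
    (f := fun J : ℕ => avg d u ((2:ℝ)⁻¹ ^ J))
    (fun J => (avg_measurable hu _).aestronglyMeasurable) u (avg_tendsto_ae hp₀ hmem)
  have hfinal : eLpNorm u p₂ volume ≤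
      K₁ * eLpNorm u p₀ volume + K₂ * nikSeminorm d s₀ p₀ u := by
    refine hlimle.trans ?_
    refine (Filter.liminf_le_liminf (Filter.Eventually.of_forall hpart)).trans ?_
    simp [Filter.liminf_const]
  refine hfinal.trans ?_
  rw [mul_add]
  exact add_le_add (mul_le_mul' le_sup_left le_rfl) (mul_le_mul' le_sup_right le_rfl)

end NikAux6

/-- (Nikolskii embedding into Lebesgue spaces, strict inequality.)
If `1 ≤ p₀ ≤ p₂ ≤ ∞`, `0 < s₀ < 1` and `s₀ − d/p₀ > −d/p₂`, then
`N^{s₀}_{p₀}(ℝ^d) ↪ L^{p₂}(ℝ^d)` with a norm bound. (Here `d/∞ = 0`; note that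
`p.toReal = 0` for `p = ∞`, and real division by `0` yields `0`.) -/
theorem nikolskii_embedding_lebesgue
    (d : ℕ) (hd : 1 ≤ d) (p₀ p₂ : ℝ≥0∞) (hp₀ : 1 ≤ p₀) (hp₀₂ : p₀ ≤ p₂)
    (s₀ : ℝ) (hs₀ : 0 < s₀) (hs₀' : s₀ < 1)
    (hdiff : s₀ - (d : ℝ) / p₀.toReal > -((d : ℝ) / p₂.toReal)) :
    ∃ C : ℝ, 0 < C ∧
      ∀ u : EuclideanSpace ℝ (Fin d) → ℝ,
        MemLp u p₀ volume →
        nikSeminorm d s₀ p₀ u ≠ ⊤ →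
        MemLp u p₂ volume ∧
        eLpNorm u p₂ volume ≤
          ENNReal.ofReal C * (eLpNorm u p₀ volume + nikSeminorm d s₀ p₀ u) := by
  rcases eq_or_lt_of_le hp₀₂ with heq | hlt
  · subst heq
    refine ⟨1, one_pos, fun u hmem hA => ⟨hmem, ?_⟩⟩
    rw [ENNReal.ofReal_one, one_mul]
    exact le_self_add
  · obtain ⟨C₀, hC₀t, hbound⟩ := NikAux6.nik_embed_meas hd p₀ p₂ hp₀ hlt s₀ hs₀ hdiff
    refine ⟨C₀.toReal + 1, by positivity, fun u hmem hA => ?_⟩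
    set v := hmem.1.mk u with hv
    have hvmeas : Measurable v := hmem.1.stronglyMeasurable_mk.measurable
    have hae : u =ᵐ[volume] v := hmem.1.ae_eq_mk
    have hNik : nikSeminorm d s₀ p₀ u = nikSeminorm d s₀ p₀ v := by
      unfold nikSeminorm
      refine iSup_congr fun k => iSup_congr fun _ => ?_
      congr 1
      refine eLpNorm_congr_ae ?_
      have h1 : (fun x => u (x + k)) =ᵐ[volume] fun x => v (x + k) :=
        (measurePreserving_add_right volume k).quasiMeasurePreserving.ae_eq_comp hae
      exact h1.sub hae
    have hNe₀ : eLpNorm u p₀ volume = eLpNorm v p₀ volume := eLpNorm_congr_ae hae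
    have hNe₂ : eLpNorm u p₂ volume = eLpNorm v p₂ volume := eLpNorm_congr_ae hae
    have hmemv : MemLp v p₀ volume := hmem.ae_eq hae
    have hAv : nikSeminorm d s₀ p₀ v ≠ ⊤ := by rw [← hNik]; exact hA
    have hb := hbound v hvmeas hmemv hAv
    have hCle : C₀ ≤ ENNReal.ofReal (C₀.toReal + 1) := by
      conv_lhs => rw [← ENNReal.ofReal_toReal hC₀t]
      exact ENNReal.ofReal_le_ofReal (by linarith)
    have hfin : eLpNorm u p₂ volume ≤
        ENNReal.ofReal (C₀.toReal + 1) * (eLpNorm u p₀ volume + nikSeminorm d s₀ p₀ u) := by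
      rw [hNe₂, hNe₀, hNik]
      exact hb.trans (mul_le_mul' hCle le_rfl)
    refine ⟨⟨hmem.1, ?_⟩, hfin⟩
    refine lt_of_le_of_lt hfin ?_
    have h2 : eLpNorm u p₀ volume + nikSeminorm d s₀ p₀ u ≠ ⊤ := by
      simp [ENNReal.add_eq_top, hmem.2.ne, hA]
    exact ENNReal.mul_lt_top ENNReal.ofReal_lt_top (lt_top_iff_ne_top.2 h2)
end
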